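/- arXiv:2205.01385 — 7 statements merged into one kernel-verified Lean document; each statement's English description precedes it below -/
import Mathlib

section
/- For any partition Γ of {1,…,p} and any z ∈ ℝ^p, the group norm ‖z‖_{1,2} := Σ_{g∈Γ} ‖z_g‖₂ satisfies ‖z‖_{1,2} = min { ½‖u‖₂² + ½‖v‖₂² : u ∈ ℝ^p, v ∈ ℝ^{|Γ|}, u⊙v = z }, where (u⊙v)_g := v_g·u_g for each group g ∈ Γ (i.e. the block u_g of u is scaled by the scalar v_g). -/
lemma fiber_sum {p d : ℕ} (g : Fin p → Fin d) (f : Fin p → ℝ) :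
    ∑ j, ∑ i, (if g i = j then f i else 0) = ∑ i, f i := by
  rw [Finset.sum_comm]
  simp

/-- Hadamard over-parameterization of the group ℓ₁-ℓ₂ norm.
The partition `Γ` of `{1,…,p}` is encoded by a surjective map `g : Fin p → Fin d`
assigning to each index its group.  For `z ∈ ℝ^p`,
`‖z‖_{1,2} = Σ_j ‖z_{g⁻¹(j)}‖₂`, and `(u ⊙ v)_i = v_{g i} * u i`. -/
theorem statement0 {p d : ℕ} (g : Fin p → Fin d) (hg : Function.Surjective g)
    (z : Fin p → ℝ) :
    IsLeast { c : ℝ | ∃ (u : Fin p → ℝ) (v : Fin d → ℝ),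
        (∀ i, v (g i) * u i = z i) ∧
        c = (1/2) * ∑ i, (u i)^2 + (1/2) * ∑ j, (v j)^2 }
      (∑ j, Real.sqrt (∑ i, if g i = j then (z i)^2 else 0)) := by
  set N : Fin d → ℝ := fun j => ∑ i, if g i = j then (z i)^2 else 0 with hN
  have hNnn : ∀ j, 0 ≤ N j := by
    intro j
    apply Finset.sum_nonneg
    intro i _
    split <;> positivity
  constructor
  · -- membership
    set v : Fin d → ℝ := fun j => Real.sqrt (Real.sqrt (N j)) with hv
    set u : Fin p → ℝ := fun i => z i / v (g i) with hu
    have hvsq : ∀ j, (v j)^2 = Real.sqrt (N j) := by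
      intro j
      simp [hv, Real.sq_sqrt (Real.sqrt_nonneg _)]
    have hvzero : ∀ i, v (g i) = 0 → z i = 0 := by
      intro i h
      have hN0 : N (g i) = 0 := by
        have := Real.sqrt_eq_zero (Real.sqrt_nonneg _) |>.mp h
        exact (Real.sqrt_eq_zero (hNnn _)).mp this
      have hle : (z i)^2 ≤ N (g i) := by
        rw [hN]
        have := Finset.single_le_sum (f := fun i' => if g i' = g i then (z i')^2 else 0)
          (fun i' _ => by split <;> positivity) (Finset.mem_univ i)
        simpa using this
      nlinarith [sq_nonneg (z i)]
    refine ⟨u, v, ?_, ?_⟩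
    · intro i
      by_cases h : v (g i) = 0
      · simp [hu, h, hvzero i h]
      · rw [hu]; field_simp [h]
    · have husum : ∑ i, (u i)^2 = ∑ j, Real.sqrt (N j) := by
        rw [← fiber_sum g (fun i => (u i)^2)]
        refine Finset.sum_congr rfl fun j _ => ?_
        have : ∑ i, (if g i = j then (u i)^2 else 0)
            = ∑ i, (if g i = j then (z i)^2 else 0) / Real.sqrt (N j) := by
          refine Finset.sum_congr rfl fun i _ => ?_
          split_ifs with h
          · rw [hu]
            dsimp only
            rw [h, div_pow, hvsq]
          · simp
        rw [this, ← Finset.sum_div]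
        show N j / Real.sqrt (N j) = Real.sqrt (N j)
        by_cases h : N j = 0
        · simp [h]
        · rw [Real.div_sqrt]
      have hvsum : ∑ j, (v j)^2 = ∑ j, Real.sqrt (N j) := by
        exact Finset.sum_congr rfl fun j _ => hvsq j
      show ∑ j, Real.sqrt (N j) = _
      rw [husum, hvsum]
      ring
  · -- lower bound
    rintro c ⟨u, v, huv, rfl⟩
    show ∑ j, Real.sqrt (N j) ≤ _
    set S : Fin d → ℝ := fun j => ∑ i, if g i = j then (u i)^2 else 0 with hS
    have hSnn : ∀ j, 0 ≤ S j := by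
      intro j; apply Finset.sum_nonneg; intro i _; split <;> positivity
    have key : ∀ j, Real.sqrt (N j) ≤ (1/2) * (v j)^2 + (1/2) * S j := by
      intro j
      have hNj : N j = (v j)^2 * S j := by
        rw [hN, hS, Finset.mul_sum]
        refine Finset.sum_congr rfl fun i _ => ?_
        split_ifs with h
        · rw [← huv i, h]; ring
        · ring
      rw [hNj, Real.sqrt_mul (sq_nonneg _), Real.sqrt_sq_eq_abs]
      have h2 : 2 * |v j| * Real.sqrt (S j) ≤ |v j|^2 + Real.sqrt (S j)^2 :=
        two_mul_le_add_sq _ _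
      rw [sq_abs, Real.sq_sqrt (hSnn j)] at h2
      nlinarith
    calc ∑ j, Real.sqrt (N j) ≤ ∑ j, ((1/2) * (v j)^2 + (1/2) * S j) :=
          Finset.sum_le_sum fun j _ => key j
      _ = (1/2) * ∑ i, (u i)^2 + (1/2) * ∑ j, (v j)^2 := by
          rw [Finset.sum_add_distrib, ← Finset.mul_sum, ← Finset.mul_sum,
            hS, fiber_sum g (fun i => (u i)^2)]
          ring
end

section
/- Strict differentiability away from zero coordinates: assume F₀ : ℝ^m → ℝ is convex with Lipschitz-continuous gradient, and define f₀(v) := sup over (ξ,α) with L^⊤α = −A^⊤ξ of φ(v,ξ,α) := −½‖v⊙α‖² − F₀*(ξ). If v ∈ ℝ^{|Γ|} satisfies v_g ≠ 0 for every group g, then f₀ is strictly differentiable at v. -/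
open Matrix

/-- The convex conjugate of `F₀`, with values in `EReal`. -/
noncomputable def Fstar {m : ℕ} (F₀ : (Fin m → ℝ) → ℝ) (ξ : Fin m → ℝ) : EReal :=
  ⨆ z : Fin m → ℝ, (((∑ i, ξ i * z i) - F₀ z : ℝ) : EReal)

/-- The dual objective `φ(v,ξ,α) = −½‖v⊙α‖² − F₀*(ξ)`. -/
noncomputable def phiDual {m p d : ℕ} (g : Fin p → Fin d) (F₀ : (Fin m → ℝ) → ℝ)
    (v : Fin d → ℝ) (α : Fin p → ℝ) (ξ : Fin m → ℝ) : EReal :=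
  (((-(1/2)) * ∑ i, (v (g i) * α i)^2 : ℝ) : EReal) - Fstar F₀ ξ

/-- The dual function `f₀(v) = sup {φ(v,ξ,α) : L^⊤α = −A^⊤ξ}`
(the supremum, taken in `EReal`, is finite under the standing hypotheses,
and we read off its real value). -/
noncomputable def fZero {n m p d : ℕ}
    (A : Matrix (Fin m) (Fin n) ℝ) (L : Matrix (Fin p) (Fin n) ℝ)
    (g : Fin p → Fin d) (F₀ : (Fin m → ℝ) → ℝ) (v : Fin d → ℝ) : ℝ :=
  (sSup { c : EReal | ∃ (ξ : Fin m → ℝ) (α : Fin p → ℝ),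
      Lᵀ.mulVec α = -(Aᵀ.mulVec ξ) ∧ c = phiDual g F₀ v α ξ }).toReal

namespace Statement5Aux

/-! ### Generic helpers -/

lemma sq_norm_le_sum {k : ℕ} (u : Fin k → ℝ) : ‖u‖^2 ≤ ∑ i, u i ^ 2 := by
  have h0 : (0:ℝ) ≤ ∑ i, u i ^ 2 := Finset.sum_nonneg fun i _ => sq_nonneg _
  have h : ‖u‖ ≤ Real.sqrt (∑ i, u i ^ 2) := by
    rw [pi_norm_le_iff_of_nonneg (Real.sqrt_nonneg _)]
    intro i
    rw [Real.norm_eq_abs, ← Real.sqrt_sq_eq_abs]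
    exact Real.sqrt_le_sqrt (Finset.single_le_sum (fun j _ => sq_nonneg (u j)) (Finset.mem_univ i))
  calc ‖u‖^2 ≤ Real.sqrt (∑ i, u i ^ 2)^2 := by nlinarith [norm_nonneg u]
    _ = ∑ i, u i ^2 := Real.sq_sqrt h0

lemma abs_le_sqrt_sum {k : ℕ} (u : Fin k → ℝ) (i : Fin k) :
    |u i| ≤ Real.sqrt (∑ j, u j ^ 2) := by
  rw [← Real.sqrt_sq_eq_abs]
  exact Real.sqrt_le_sqrt (Finset.single_le_sum (fun j _ => sq_nonneg (u j)) (Finset.mem_univ i))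

lemma clm_apply_eq_sum {k : ℕ} (T : (Fin k → ℝ) →L[ℝ] ℝ) (u : Fin k → ℝ) :
    T u = ∑ i, u i * T (Pi.single i 1) := by
  have h := LinearMap.pi_apply_eq_sum_univ (T : (Fin k → ℝ) →ₗ[ℝ] ℝ) u
  simp only [ContinuousLinearMap.coe_coe] at h
  rw [h]
  refine Finset.sum_congr rfl fun i _ => ?_
  rw [smul_eq_mul]
  congr 2
  ext j
  simp [Pi.single_apply, eq_comm]

/-! ### Basic facts about `Fstar` -/

variable {n m p d : ℕ}

lemma pairing_le_fstar (F₀ : (Fin m → ℝ) → ℝ) (ξ z : Fin m → ℝ) :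
    (((∑ i, ξ i * z i) - F₀ z : ℝ) : EReal) ≤ Fstar F₀ ξ :=
  le_iSup (fun z => (((∑ i, ξ i * z i) - F₀ z : ℝ) : EReal)) z

lemma fstar_ne_bot (F₀ : (Fin m → ℝ) → ℝ) (ξ : Fin m → ℝ) : Fstar F₀ ξ ≠ ⊥ := by
  intro h
  have := pairing_le_fstar F₀ ξ 0
  rw [h, le_bot_iff] at this
  exact (EReal.coe_ne_bot _) this

lemma fstar_le_coe_iff (F₀ : (Fin m → ℝ) → ℝ) (ξ : Fin m → ℝ) (r : ℝ) :
    Fstar F₀ ξ ≤ (r : EReal) ↔ ∀ z, (∑ i, ξ i * z i) - F₀ z ≤ r := by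
  constructor
  · intro h z
    have := (pairing_le_fstar F₀ ξ z).trans h
    exact_mod_cast this
  · intro h
    exact iSup_le fun z => EReal.coe_le_coe_iff.mpr (h z)

/-- The real value of the conjugate on its domain. -/
noncomputable def Fs (F₀ : (Fin m → ℝ) → ℝ) (ξ : Fin m → ℝ) : ℝ := (Fstar F₀ ξ).toReal

lemma coe_Fs (F₀ : (Fin m → ℝ) → ℝ) {ξ : Fin m → ℝ} (h : Fstar F₀ ξ ≠ ⊤) :
    ((Fs F₀ ξ : ℝ) : EReal) = Fstar F₀ ξ := EReal.coe_toReal h (fstar_ne_bot F₀ ξ)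

lemma pairing_le_Fs (F₀ : (Fin m → ℝ) → ℝ) {ξ : Fin m → ℝ} (h : Fstar F₀ ξ ≠ ⊤)
    (z : Fin m → ℝ) : (∑ i, ξ i * z i) - F₀ z ≤ Fs F₀ ξ := by
  have := pairing_le_fstar F₀ ξ z
  rw [← coe_Fs F₀ h] at this
  exact_mod_cast this

lemma neg_F0_le_Fs (F₀ : (Fin m → ℝ) → ℝ) {ξ : Fin m → ℝ} (h : Fstar F₀ ξ ≠ ⊤) :
    -F₀ 0 ≤ Fs F₀ ξ := by
  have := pairing_le_Fs F₀ h 0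
  simpa using this

lemma Fs_le_of_forall (F₀ : (Fin m → ℝ) → ℝ) {ξ : Fin m → ℝ} {r : ℝ}
    (h : ∀ z, (∑ i, ξ i * z i) - F₀ z ≤ r) : Fstar F₀ ξ ≠ ⊤ ∧ Fs F₀ ξ ≤ r := by
  have h1 : Fstar F₀ ξ ≤ (r : EReal) := (fstar_le_coe_iff F₀ ξ r).mpr h
  have h2 : Fstar F₀ ξ ≠ ⊤ := ne_top_of_le_ne_top (EReal.coe_ne_top r) h1
  refine ⟨h2, ?_⟩
  have := EReal.toReal_le_toReal h1 (fstar_ne_bot F₀ ξ) (EReal.coe_ne_top r)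
  simpa [Fs] using this

/-! ### Descent lemma, strong convexity, coercivity -/

section Analytic

variable (F₀ : (Fin m → ℝ) → ℝ) {C : ℝ}

/-- The descent-type property we extract from the Lipschitz gradient. -/
def Descent (F₀ : (Fin m → ℝ) → ℝ) (C : ℝ) : Prop :=
  ∀ x u : Fin m → ℝ, F₀ (x + u) ≤ F₀ x + fderiv ℝ F₀ x u + C * ∑ i, u i ^ 2

lemma descent_of_lipschitz (hdiff : Differentiable ℝ F₀)
    (M : NNReal) (hlip : LipschitzWith M (fderiv ℝ F₀)) :
    Descent F₀ ((M:ℝ) + 1) := by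
  intro x u
  set D := fderiv ℝ F₀ x with hD
  have key : ‖(F₀ (x+u) - D (x+u)) - (F₀ x - D x)‖ ≤ ((M:ℝ) * ‖u‖) * ‖(x+u) - x‖ := by
    apply (convex_closedBall x ‖u‖).norm_image_sub_le_of_norm_fderiv_le
      (f := fun z => F₀ z - D z)
      (fun z _ => (hdiff z).sub (D.differentiableAt))
      ?_ (Metric.mem_closedBall_self (norm_nonneg u))
      (by simp [Metric.mem_closedBall, dist_eq_norm])
    intro z hz
    have h1 : fderiv ℝ (fun z => F₀ z - D z) z = fderiv ℝ F₀ z - D := by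
      rw [fderiv_fun_sub (hdiff z) D.differentiableAt, D.fderiv]
    rw [h1]
    have h2 := hlip.dist_le_mul z x
    rw [dist_eq_norm, dist_eq_norm] at h2
    calc ‖fderiv ℝ F₀ z - D‖ ≤ (M:ℝ) * ‖z - x‖ := h2
      _ ≤ (M:ℝ) * ‖u‖ := by
          have : ‖z - x‖ ≤ ‖u‖ := by simpa [Metric.mem_closedBall, dist_eq_norm] using hz
          exact mul_le_mul_of_nonneg_left this M.2
  have habs : F₀ (x+u) - F₀ x - D u ≤ (M:ℝ) * ‖u‖ * ‖u‖ := by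
    have hd : D (x + u) = D x + D u := by rw [map_add]
    have h3 := (abs_le.mp (by simpa [Real.norm_eq_abs, add_sub_cancel_left] using key)).2
    nlinarith [h3]
  have hs : (0:ℝ) ≤ ∑ i, u i ^ 2 := Finset.sum_nonneg fun i _ => sq_nonneg _
  have hsq : ‖u‖ * ‖u‖ = ‖u‖^2 := (sq ‖u‖).symm
  have h4 : (M:ℝ) * ‖u‖^2 ≤ (M:ℝ) * ∑ i, u i ^ 2 :=
    mul_le_mul_of_nonneg_left (sq_norm_le_sum u) M.2
  linarith [habs, h4, hs, hsq.symm ▸ h4]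

variable {F₀}

/-- Coercivity of the conjugate. -/
lemma fs_coercive (hC : 0 < C) (hdesc : Descent F₀ C) {ξ : Fin m → ℝ}
    (hξ : Fstar F₀ ξ ≠ ⊤) :
    (∑ i, (ξ i - fderiv ℝ F₀ 0 (Pi.single i 1)) ^ 2) / (4*C) - F₀ 0 ≤ Fs F₀ ξ := by
  set g0 : Fin m → ℝ := fun i => fderiv ℝ F₀ 0 (Pi.single i 1) with hg0
  set u : Fin m → ℝ := fun i => (ξ i - g0 i) / (2*C) with hu
  have h1 := pairing_le_Fs F₀ hξ u
  have h2 : F₀ u ≤ F₀ 0 + fderiv ℝ F₀ 0 u + C * ∑ i, u i ^ 2 := by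
    have := hdesc 0 u; simpa using this
  have h3 : fderiv ℝ F₀ 0 u = ∑ i, u i * g0 i := clm_apply_eq_sum _ u
  have key : (∑ i, ξ i * u i) - (∑ i, u i * g0 i) - C * ∑ i, u i ^ 2
      = (∑ i, (ξ i - g0 i) ^ 2) / (4*C) := by
    rw [← Finset.sum_sub_distrib, Finset.mul_sum, ← Finset.sum_sub_distrib,
      eq_div_iff (by positivity : (4*C) ≠ 0), Finset.sum_mul]
    refine Finset.sum_congr rfl fun i _ => ?_
    simp only [hu]
    field_simp
    ring
  linarith [h1, h2, h3 ▸ h2]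

/-- Midpoint strong convexity of the conjugate. -/
lemma fs_strong_midpoint (hC : 0 < C) (hdesc : Descent F₀ C) {ξ₁ ξ₂ : Fin m → ℝ}
    (h₁ : Fstar F₀ ξ₁ ≠ ⊤) (h₂ : Fstar F₀ ξ₂ ≠ ⊤) :
    Fstar F₀ (fun i => (ξ₁ i + ξ₂ i)/2) ≠ ⊤ ∧
    Fs F₀ (fun i => (ξ₁ i + ξ₂ i)/2) ≤ (1/2) * Fs F₀ ξ₁ + (1/2) * Fs F₀ ξ₂
      - (∑ i, (ξ₁ i - ξ₂ i)^2) / (16*C) := by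
  set S : ℝ := ∑ i, (ξ₁ i - ξ₂ i)^2 with hS
  apply Fs_le_of_forall
  intro z
  set u : Fin m → ℝ := fun i => (ξ₁ i - ξ₂ i) / (4*C) with hu
  have ha := pairing_le_Fs F₀ h₁ (z + u)
  have hb := pairing_le_Fs F₀ h₂ (z - u)
  have hda : F₀ (z + u) ≤ F₀ z + fderiv ℝ F₀ z u + C * ∑ i, u i ^ 2 := hdesc z u
  have hdb : F₀ (z - u) ≤ F₀ z - fderiv ℝ F₀ z u + C * ∑ i, u i ^ 2 := by
    have := hdesc z (-u)
    simpa [sub_eq_add_neg, map_neg] using this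
  -- sum identities
  have e1 : ∑ i, ξ₁ i * (z + u) i = ∑ i, ξ₁ i * z i + ∑ i, ξ₁ i * u i := by
    rw [← Finset.sum_add_distrib]; exact Finset.sum_congr rfl fun i _ => by
      simp [mul_add]
  have e2 : ∑ i, ξ₂ i * (z - u) i = ∑ i, ξ₂ i * z i - ∑ i, ξ₂ i * u i := by
    rw [← Finset.sum_sub_distrib]; exact Finset.sum_congr rfl fun i _ => by
      simp [mul_sub]
  have e3 : ∑ i, ξ₁ i * u i - ∑ i, ξ₂ i * u i = S / (4*C) := by
    rw [← Finset.sum_sub_distrib, hS, eq_div_iff (by positivity : (4*C) ≠ 0),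
      Finset.sum_mul]
    refine Finset.sum_congr rfl fun i _ => ?_
    simp only [hu]; field_simp
  have e4 : C * ∑ i, u i ^ 2 = S / (16*C) := by
    rw [Finset.mul_sum, hS, eq_div_iff (by positivity : (16*C) ≠ 0),
      Finset.sum_mul]
    refine Finset.sum_congr rfl fun i _ => ?_
    simp only [hu]; field_simp; ring
  have e5 : ∑ i, ((ξ₁ i + ξ₂ i)/2) * z i
      = (1/2) * ∑ i, ξ₁ i * z i + (1/2) * ∑ i, ξ₂ i * z i := by
    rw [Finset.mul_sum, Finset.mul_sum, ← Finset.sum_add_distrib]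
    exact Finset.sum_congr rfl fun i _ => by ring
  have hScc : S / (8*C) = 2 * (S / (16*C)) := by ring
  have hSc2 : S / (4*C) = 4 * (S / (16*C)) := by ring
  linarith [ha, hb, hda, hdb]

end Analytic

/-! ### The feasible domain and objective -/

section Opt

variable (A : Matrix (Fin m) (Fin n) ℝ) (L : Matrix (Fin p) (Fin n) ℝ)
  (g : Fin p → Fin d) (F₀ : (Fin m → ℝ) → ℝ)

/-- Quadratic part of the dual objective. -/
noncomputable def qf (v : Fin d → ℝ) (α : Fin p → ℝ) : ℝ := (-(1/2)) * ∑ i, (v (g i) * α i)^2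

/-- Real-valued dual objective. -/
noncomputable def Phi (v : Fin d → ℝ) (y : (Fin m → ℝ) × (Fin p → ℝ)) : ℝ :=
  qf g v y.2 - Fs F₀ y.1

/-- Feasible points with conjugate value finite. -/
def Dom : Set ((Fin m → ℝ) × (Fin p → ℝ)) :=
  {y | Lᵀ.mulVec y.2 = -(Aᵀ.mulVec y.1) ∧ Fstar F₀ y.1 ≠ ⊤}

variable {A L g F₀}

lemma qf_nonpos (v : Fin d → ℝ) (α : Fin p → ℝ) : qf g v α ≤ 0 := by
  have : (0:ℝ) ≤ ∑ i, (v (g i) * α i)^2 := Finset.sum_nonneg fun i _ => sq_nonneg _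
  simp only [qf]; nlinarith

lemma qf_lower {v : Fin d → ℝ} {ε : ℝ} (hε : 0 ≤ ε) (hv : ∀ j, ε ≤ |v j|) (α : Fin p → ℝ) :
    qf g v α ≤ -(ε^2/2) * ∑ i, α i ^ 2 := by
  simp only [qf]
  have h : ∀ i ∈ Finset.univ, ε^2 * α i ^2 ≤ (v (g i) * α i)^2 := by
    intro i _
    have h1 := hv (g i)
    have h2 : ε^2 ≤ (v (g i))^2 := by
      nlinarith [sq_abs (v (g i)), abs_nonneg (v (g i)), mul_self_nonneg (|v (g i)| - ε)]
    nlinarith [sq_nonneg (α i)]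
  have := Finset.sum_le_sum h
  rw [← Finset.mul_sum] at this
  nlinarith

/-- The sublevel sets of the objective are closed. -/
lemma isClosed_level (v : Fin d → ℝ) (t : ℝ) :
    IsClosed {y : (Fin m → ℝ) × (Fin p → ℝ) | y ∈ Dom A L F₀ ∧ t ≤ Phi g F₀ v y} := by
  have hset : {y : (Fin m → ℝ) × (Fin p → ℝ) | y ∈ Dom A L F₀ ∧ t ≤ Phi g F₀ v y}
      = {y | Lᵀ.mulVec y.2 = -(Aᵀ.mulVec y.1)} ∩
        ⋂ z : Fin m → ℝ, {y | (∑ i, y.1 i * z i) - F₀ z ≤ qf g v y.2 - t} := by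
    ext y
    simp only [Set.mem_setOf_eq, Set.mem_inter_iff, Set.mem_iInter, Dom, Phi]
    constructor
    · rintro ⟨⟨hfeas, hfin⟩, ht⟩
      exact ⟨hfeas, fun z => le_trans (pairing_le_Fs F₀ hfin z) (by linarith)⟩
    · rintro ⟨hfeas, hz⟩
      obtain ⟨hfin, hle⟩ := Fs_le_of_forall F₀ (r := qf g v y.2 - t) hz
      exact ⟨⟨hfeas, hfin⟩, by linarith⟩
  rw [hset]
  apply IsClosed.inter
  · have hcont : Continuous fun y : (Fin m → ℝ) × (Fin p → ℝ) =>
        (Lᵀ.mulVec y.2, -(Aᵀ.mulVec y.1)) := by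
      apply Continuous.prodMk
      · exact (Matrix.mulVecLin Lᵀ).toContinuousLinearMap.continuous.comp continuous_snd
      · exact ((Matrix.mulVecLin Aᵀ).toContinuousLinearMap.continuous.comp
          continuous_fst).neg
    exact isClosed_eq (hcont.fst) (hcont.snd)
  · apply isClosed_iInter
    intro z
    apply isClosed_le
    · apply Continuous.sub ?_ continuous_const
      exact continuous_finset_sum _ fun i _ =>
        ((continuous_apply i).comp continuous_fst).mul continuous_const
    · apply Continuous.sub ?_ continuous_const
      simp only [qf]
      apply Continuous.mul continuous_const
      exact continuous_finset_sum _ fun i _ =>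
        ((continuous_const.mul ((continuous_apply i).comp continuous_snd)).pow 2)

/-- Norm bound on level sets. -/
lemma bounded_level (hC : 0 < C) (hdesc : Descent F₀ C) {v : Fin d → ℝ} {ε : ℝ}
    (hε : 0 < ε) (hv : ∀ j, ε ≤ |v j|) (t : ℝ) :
    ∃ R : ℝ, ∀ y : (Fin m → ℝ) × (Fin p → ℝ),
      y ∈ Dom A L F₀ → t ≤ Phi g F₀ v y → ‖y‖ ≤ R := by
  classical
  set g0 : Fin m → ℝ := fun i => fderiv ℝ F₀ 0 (Pi.single i 1) with hg0
  refine ⟨max (‖g0‖ + Real.sqrt (4*C*(F₀ 0 - t))) (Real.sqrt (2*(F₀ 0 - t)/ε^2)),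
    fun y hy ht => ?_⟩
  obtain ⟨hfeas, hfin⟩ := hy
  have hlow : -F₀ 0 ≤ Fs F₀ y.1 := neg_F0_le_Fs F₀ hfin
  have hcoer := fs_coercive hC hdesc hfin
  have hql := qf_lower (g := g) hε.le hv y.2
  have hq0 := qf_nonpos (g := g) v y.2
  have hPhi : t ≤ qf g v y.2 - Fs F₀ y.1 := ht
  -- ξ bound
  have hξsq : ∑ i, (y.1 i - g0 i)^2 ≤ 4*C*(F₀ 0 - t) := by
    have : (∑ i, (y.1 i - g0 i) ^ 2) / (4*C) ≤ F₀ 0 - t := by linarith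
    calc ∑ i, (y.1 i - g0 i)^2 = ((∑ i, (y.1 i - g0 i) ^ 2) / (4*C)) * (4*C) := by
          field_simp
      _ ≤ (F₀ 0 - t) * (4*C) := by
          apply mul_le_mul_of_nonneg_right this; positivity
      _ = 4*C*(F₀ 0 - t) := by ring
  have hξn : ‖y.1‖ ≤ ‖g0‖ + Real.sqrt (4*C*(F₀ 0 - t)) := by
    have h1 : ‖y.1 - g0‖ ≤ Real.sqrt (4*C*(F₀ 0 - t)) := by
      have h2 : ‖y.1 - g0‖^2 ≤ 4*C*(F₀ 0 - t) := by
        refine le_trans ?_ hξsq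
        have := sq_norm_le_sum (fun i => y.1 i - g0 i)
        exact this
      have := Real.sqrt_le_sqrt h2
      rwa [Real.sqrt_sq (norm_nonneg _)] at this
    calc ‖y.1‖ = ‖(y.1 - g0) + g0‖ := by ring_nf
      _ ≤ ‖y.1 - g0‖ + ‖g0‖ := norm_add_le _ _
      _ ≤ ‖g0‖ + Real.sqrt (4*C*(F₀ 0 - t)) := by linarith
  -- α bound
  have hαsq : ∑ i, (y.2 i)^2 ≤ 2*(F₀ 0 - t)/ε^2 := by
    have h3 : (ε^2/2) * ∑ i, (y.2 i)^2 ≤ F₀ 0 - t := by nlinarith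
    rw [← sub_nonneg]
    have : 2*(F₀ 0 - t)/ε^2 - ∑ i, (y.2 i)^2
        = (2/ε^2) * ((F₀ 0 - t) - (ε^2/2) * ∑ i, (y.2 i)^2) := by
      field_simp
    rw [this]
    apply mul_nonneg (by positivity)
    linarith
  have hαn : ‖y.2‖ ≤ Real.sqrt (2*(F₀ 0 - t)/ε^2) := by
    have h2 : ‖y.2‖^2 ≤ 2*(F₀ 0 - t)/ε^2 := le_trans (sq_norm_le_sum y.2) hαsq
    have := Real.sqrt_le_sqrt h2
    rwa [Real.sqrt_sq (norm_nonneg _)] at this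
  rw [Prod.norm_def]
  exact max_le_max hξn hαn

/-- Existence of a maximizer of the dual objective. -/
lemma exists_max (hC : 0 < C) (hdesc : Descent F₀ C) {v : Fin d → ℝ} {ε : ℝ}
    (hε : 0 < ε) (hv : ∀ j, ε ≤ |v j|) {y₀ : (Fin m → ℝ) × (Fin p → ℝ)}
    (hy₀ : y₀ ∈ Dom A L F₀) :
    ∃ ybar ∈ Dom A L F₀, ∀ y ∈ Dom A L F₀, Phi g F₀ v y ≤ Phi g F₀ v ybar := by
  classical
  set K := {y : (Fin m → ℝ) × (Fin p → ℝ) | y ∈ Dom A L F₀ ∧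
    Phi g F₀ v y₀ ≤ Phi g F₀ v y} with hK
  obtain ⟨R, hR⟩ := bounded_level (A := A) (L := L) hC hdesc hε hv (Phi g F₀ v y₀)
  have hKc : IsCompact K := by
    apply (isCompact_closedBall (0 : (Fin m → ℝ) × (Fin p → ℝ)) R).of_isClosed_subset
      (isClosed_level v (Phi g F₀ v y₀))
    intro y hy
    rw [Metric.mem_closedBall, dist_zero_right]
    exact hR y hy.1 hy.2
  have hKne : K.Nonempty := ⟨y₀, hy₀, le_refl _⟩
  haveI : Nonempty K := hKne.to_subtype
  set t : K → Set ((Fin m → ℝ) × (Fin p → ℝ)) := fun w =>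
    {y | y ∈ Dom A L F₀ ∧ Phi g F₀ v w.1 ≤ Phi g F₀ v y} with htdef
  have htsubK : ∀ w, t w ⊆ K := by
    rintro w y ⟨hy1, hy2⟩
    exact ⟨hy1, le_trans w.2.2 hy2⟩
  have htcl : ∀ w, IsClosed (t w) := fun w => isClosed_level v _
  have htne : ∀ w, (t w).Nonempty := fun w => ⟨w.1, w.2.1, le_refl _⟩
  have htc : ∀ w, IsCompact (t w) := fun w => hKc.of_isClosed_subset (htcl w) (htsubK w)
  have htd : Directed (· ⊇ ·) t := by
    intro w₁ w₂
    rcases le_total (Phi g F₀ v w₁.1) (Phi g F₀ v w₂.1) with h | h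
    · exact ⟨w₂, fun y hy => ⟨hy.1, le_trans h hy.2⟩, fun y hy => hy⟩
    · exact ⟨w₁, fun y hy => hy, fun y hy => ⟨hy.1, le_trans h hy.2⟩⟩
  obtain ⟨ybar, hybar⟩ := IsCompact.nonempty_iInter_of_directed_nonempty_isCompact_isClosed
    t htd htne htc htcl
  simp only [Set.mem_iInter] at hybar
  have hybarDom : ybar ∈ Dom A L F₀ := (hybar ⟨y₀, hy₀, le_refl _⟩).1
  refine ⟨ybar, hybarDom, fun y hy => ?_⟩
  rcases le_total (Phi g F₀ v y₀) (Phi g F₀ v y) with h | h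
  · exact (hybar ⟨y, hy, h⟩).2
  · exact le_trans h (hybar ⟨y₀, hy₀, le_refl _⟩).2

end Opt

section Value

variable {A : Matrix (Fin m) (Fin n) ℝ} {L : Matrix (Fin p) (Fin n) ℝ}
  {g : Fin p → Fin d} {F₀ : (Fin m → ℝ) → ℝ}

lemma phiDual_eq_coe {v : Fin d → ℝ} {α : Fin p → ℝ} {ξ : Fin m → ℝ}
    (hfin : Fstar F₀ ξ ≠ ⊤) :
    phiDual g F₀ v α ξ = ((Phi g F₀ v (ξ, α) : ℝ) : EReal) := by
  rw [phiDual, ← coe_Fs F₀ hfin, ← EReal.coe_sub]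
  rfl

lemma phiDual_eq_bot {v : Fin d → ℝ} {α : Fin p → ℝ} {ξ : Fin m → ℝ}
    (hfin : Fstar F₀ ξ = ⊤) :
    phiDual g F₀ v α ξ = ⊥ := by
  rw [phiDual, hfin]
  rfl

/-- If a maximizer exists, `fZero` equals the maximal value. -/
lemma fZero_eq_max {v : Fin d → ℝ} {ybar : (Fin m → ℝ) × (Fin p → ℝ)}
    (hybar : ybar ∈ Dom A L F₀)
    (hmax : ∀ y ∈ Dom A L F₀, Phi g F₀ v y ≤ Phi g F₀ v ybar) :
    fZero A L g F₀ v = Phi g F₀ v ybar := by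
  have hsup : sSup { c : EReal | ∃ (ξ : Fin m → ℝ) (α : Fin p → ℝ),
      Lᵀ.mulVec α = -(Aᵀ.mulVec ξ) ∧ c = phiDual g F₀ v α ξ }
      = ((Phi g F₀ v ybar : ℝ) : EReal) := by
    apply le_antisymm
    · apply sSup_le
      rintro c ⟨ξ, α, hfeas, rfl⟩
      by_cases hfin : Fstar F₀ ξ = ⊤
      · rw [phiDual_eq_bot hfin]; exact bot_le
      · rw [phiDual_eq_coe hfin]
        exact EReal.coe_le_coe_iff.mpr (hmax (ξ, α) ⟨hfeas, hfin⟩)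
    · apply le_sSup
      exact ⟨ybar.1, ybar.2, hybar.1, (phiDual_eq_coe hybar.2).symm⟩
  rw [fZero, hsup, EReal.toReal_coe]

/-- If no feasible point has finite conjugate value, `fZero` vanishes identically. -/
lemma fZero_eq_zero (h : ∀ ξ α, Lᵀ.mulVec α = -(Aᵀ.mulVec ξ) → Fstar F₀ (ξ : Fin m → ℝ) = ⊤)
    (v : Fin d → ℝ) : fZero A L g F₀ v = 0 := by
  have hsup : sSup { c : EReal | ∃ (ξ : Fin m → ℝ) (α : Fin p → ℝ),
      Lᵀ.mulVec α = -(Aᵀ.mulVec ξ) ∧ c = phiDual g F₀ v α ξ } = (⊥ : EReal) := by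
    apply le_antisymm
    · apply sSup_le
      rintro c ⟨ξ, α, hfeas, rfl⟩
      rw [phiDual_eq_bot (h ξ α hfeas)]
    · apply le_sSup
      refine ⟨0, 0, by simp [Matrix.mulVec_zero], ?_⟩
      rw [phiDual_eq_bot (h 0 0 (by simp [Matrix.mulVec_zero]))]
  rw [fZero, hsup]
  rfl

end Value

section Growth

variable {A : Matrix (Fin m) (Fin n) ℝ} {L : Matrix (Fin p) (Fin n) ℝ}
  {g : Fin p → Fin d} {F₀ : (Fin m → ℝ) → ℝ} {C : ℝ}

/-- Quadratic growth at the maximizer. -/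
lemma quad_growth (hC : 0 < C) (hdesc : Descent F₀ C) {v : Fin d → ℝ} {ε : ℝ}
    (hε : 0 < ε) (hv : ∀ j, ε ≤ |v j|) {ybar : (Fin m → ℝ) × (Fin p → ℝ)}
    (hybar : ybar ∈ Dom A L F₀)
    (hmax : ∀ y ∈ Dom A L F₀, Phi g F₀ v y ≤ Phi g F₀ v ybar)
    {y : (Fin m → ℝ) × (Fin p → ℝ)} (hy : y ∈ Dom A L F₀) :
    Phi g F₀ v y + (ε^2/4) * ∑ i, (y.2 i - ybar.2 i)^2
      + (∑ i, (y.1 i - ybar.1 i)^2) / (8*C) ≤ Phi g F₀ v ybar := by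
  classical
  set mξ : Fin m → ℝ := fun i => (y.1 i + ybar.1 i)/2 with hmξ
  set mα : Fin p → ℝ := fun i => (y.2 i + ybar.2 i)/2 with hmα
  -- midpoint is feasible
  have hfeas : Lᵀ.mulVec mα = -(Aᵀ.mulVec mξ) := by
    have h1 : mα = (1/2 : ℝ) • (y.2 + ybar.2) := by
      funext i; simp [hmα, Pi.smul_apply, smul_eq_mul]; ring
    have h2 : mξ = (1/2 : ℝ) • (y.1 + ybar.1) := by
      funext i; simp [hmξ, Pi.smul_apply, smul_eq_mul]; ring
    rw [h1, h2, Matrix.mulVec_smul, Matrix.mulVec_smul, Matrix.mulVec_add, Matrix.mulVec_add,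
      hy.1, hybar.1]
    funext i
    simp [Pi.smul_apply, smul_eq_mul]
    ring
  obtain ⟨hmfin, hmle⟩ := fs_strong_midpoint hC hdesc hy.2 hybar.2
  have hmDom : (mξ, mα) ∈ Dom A L F₀ := ⟨hfeas, hmfin⟩
  have hple := hmax (mξ, mα) hmDom
  -- quadratic identity
  have hqid : qf g v mα = (1/2) * qf g v y.2 + (1/2) * qf g v ybar.2
      + (1/8) * ∑ i, (v (g i) * (y.2 i - ybar.2 i))^2 := by
    simp only [qf, Finset.mul_sum]
    rw [← Finset.sum_add_distrib, ← Finset.sum_add_distrib]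
    refine Finset.sum_congr rfl fun i _ => ?_
    simp only [hmα]
    ring
  have hqbound : (1/2) * qf g v y.2 + (1/2) * qf g v ybar.2
      + (ε^2/8) * ∑ i, (y.2 i - ybar.2 i)^2 ≤ qf g v mα := by
    rw [hqid]
    have h : ∀ i ∈ Finset.univ, ε^2 * (y.2 i - ybar.2 i)^2 ≤ (v (g i) * (y.2 i - ybar.2 i))^2 := by
      intro i _
      have h2 : ε^2 ≤ (v (g i))^2 := by
        nlinarith [sq_abs (v (g i)), abs_nonneg (v (g i)), mul_self_nonneg (|v (g i)| - ε),
          hv (g i)]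
      nlinarith [sq_nonneg (y.2 i - ybar.2 i)]
    have := Finset.sum_le_sum h
    rw [← Finset.mul_sum] at this
    nlinarith
  -- conclude
  have hPhiM : Phi g F₀ v (mξ, mα) = qf g v mα - Fs F₀ mξ := rfl
  have hmid : Fs F₀ mξ ≤ (1/2) * Fs F₀ y.1 + (1/2) * Fs F₀ ybar.1
      - (∑ i, (y.1 i - ybar.1 i)^2) / (16*C) := hmle
  have hPy : Phi g F₀ v y = qf g v y.2 - Fs F₀ y.1 := rfl
  have hPb : Phi g F₀ v ybar = qf g v ybar.2 - Fs F₀ ybar.1 := rfl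
  have hsc : (∑ i, (y.1 i - ybar.1 i)^2) / (8*C)
      = 2 * ((∑ i, (y.1 i - ybar.1 i)^2) / (16*C)) := by ring
  have hsq : (ε^2/4) * ∑ i, (y.2 i - ybar.2 i)^2
      = 2 * ((ε^2/8) * ∑ i, (y.2 i - ybar.2 i)^2) := by ring
  linarith [hple, hqbound, hmid]

end Growth

section Stability

variable {A : Matrix (Fin m) (Fin n) ℝ} {L : Matrix (Fin p) (Fin n) ℝ}
  {g : Fin p → Fin d} {F₀ : (Fin m → ℝ) → ℝ} {C : ℝ}

/-- Perturbation bound for the quadratic part. -/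
lemma qf_pert {vb : Fin d → ℝ} (u : Fin d → ℝ) (α : Fin p → ℝ)
    (hu : ‖u - vb‖ ≤ 1) :
    |qf g u α - qf g vb α| ≤ ‖u - vb‖ * ((‖vb‖ + 1) * ∑ i, α i ^ 2) := by
  have hid : qf g u α - qf g vb α
      = ∑ i, (-(1/2)) * ((u (g i))^2 - (vb (g i))^2) * (α i)^2 := by
    simp only [qf, Finset.mul_sum]
    rw [← Finset.sum_sub_distrib]
    exact Finset.sum_congr rfl fun i _ => by ring
  rw [hid]
  calc |∑ i, (-(1/2)) * ((u (g i))^2 - (vb (g i))^2) * (α i)^2|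
      ≤ ∑ i, |(-(1/2)) * ((u (g i))^2 - (vb (g i))^2) * (α i)^2| :=
        Finset.abs_sum_le_sum_abs _ _
    _ ≤ ∑ i, ‖u - vb‖ * ((‖vb‖ + 1) * (α i)^2) := by
        apply Finset.sum_le_sum
        intro i _
        have h1 : |u (g i) - vb (g i)| ≤ ‖u - vb‖ := by
          have := norm_le_pi_norm (u - vb) (g i)
          simpa [Real.norm_eq_abs] using this
        have h2 : |vb (g i)| ≤ ‖vb‖ := by
          have := norm_le_pi_norm vb (g i)
          simpa [Real.norm_eq_abs] using this
        have h3 : |u (g i) + vb (g i)| ≤ 2*‖vb‖ + 1 := by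
          have : |u (g i) + vb (g i)| ≤ |u (g i) - vb (g i)| + 2 * |vb (g i)| := by
            have := abs_add_le (u (g i) - vb (g i)) (2 * vb (g i))
            have he : u (g i) - vb (g i) + 2 * vb (g i) = u (g i) + vb (g i) := by ring
            rw [he] at this
            calc |u (g i) + vb (g i)| ≤ |u (g i) - vb (g i)| + |2 * vb (g i)| := this
              _ = |u (g i) - vb (g i)| + 2 * |vb (g i)| := by
                  rw [abs_mul]; norm_num
          linarith [h1, h2, hu]
        have h4 : |(u (g i))^2 - (vb (g i))^2| ≤ ‖u - vb‖ * (2*‖vb‖+1) := by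
          have : (u (g i))^2 - (vb (g i))^2 = (u (g i) - vb (g i)) * (u (g i) + vb (g i)) := by
            ring
          rw [this, abs_mul]
          exact mul_le_mul h1 h3 (abs_nonneg _) (norm_nonneg _)
        rw [abs_mul, abs_mul]
        have h5 : |(α i)^2| = (α i)^2 := abs_of_nonneg (sq_nonneg _)
        rw [h5]
        have h6 : |(-(1/2) : ℝ)| = 1/2 := by norm_num
        rw [h6]
        have h7 : (1/2) * |(u (g i))^2 - (vb (g i))^2| ≤ ‖u - vb‖ * (‖vb‖+1) := by
          nlinarith [h4, norm_nonneg (u - vb)]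
        nlinarith [sq_nonneg (α i), h7, abs_nonneg ((u (g i))^2 - (vb (g i))^2)]
    _ = ‖u - vb‖ * ((‖vb‖ + 1) * ∑ i, α i ^ 2) := by
        rw [← Finset.mul_sum, ← Finset.mul_sum]

/-- Stability of maximizers: whenever `u` is close to `vb`, the `α`-part of any
maximizer at `u` is close to that of the maximizer at `vb`. -/
lemma stability (hC : 0 < C) (hdesc : Descent F₀ C) {vb : Fin d → ℝ} {eb : ℝ}
    (heb : 0 < eb) (hvb : ∀ j, eb ≤ |vb j|) {ybar : (Fin m → ℝ) × (Fin p → ℝ)}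
    (hybar : ybar ∈ Dom A L F₀)
    (hmax : ∀ y ∈ Dom A L F₀, Phi g F₀ vb y ≤ Phi g F₀ vb ybar)
    {u : Fin d → ℝ} (hu1 : ‖u - vb‖ ≤ 1) (hu2 : ‖u - vb‖ ≤ eb/2)
    {yu : (Fin m → ℝ) × (Fin p → ℝ)} (hyu : yu ∈ Dom A L F₀)
    (hmaxu : ∀ y ∈ Dom A L F₀, Phi g F₀ u y ≤ Phi g F₀ u yu) :
    ∑ i, (yu.2 i)^2 ≤ (8/eb^2) * (F₀ 0 - Phi g F₀ vb ybar
        + (‖vb‖+1) * ∑ i, (ybar.2 i)^2) + 1 ∧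
    ∑ i, (yu.2 i - ybar.2 i)^2 ≤ (8*(‖vb‖+1) * ((8/eb^2) * (F₀ 0 - Phi g F₀ vb ybar
        + (‖vb‖+1) * ∑ i, (ybar.2 i)^2) + 1)/eb^2) * ‖u - vb‖ := by
  obtain ⟨B, hB⟩ : ∃ B : ℝ, B = ‖vb‖ + 1 := ⟨_, rfl⟩
  obtain ⟨Rb, hRb⟩ : ∃ Rb : ℝ, Rb = ∑ i, (ybar.2 i)^2 := ⟨_, rfl⟩
  obtain ⟨P, hP⟩ : ∃ P : ℝ, P = Phi g F₀ vb ybar := ⟨_, rfl⟩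
  obtain ⟨R, hR⟩ : ∃ R : ℝ, R = (8/eb^2) * (F₀ 0 - P + B * Rb) + 1 := ⟨_, rfl⟩
  have hBpos : 0 < B := by rw [hB]; positivity
  have hRbpos : 0 ≤ Rb := by
    rw [hRb]; exact Finset.sum_nonneg fun i _ => sq_nonneg _
  -- eb/2 lower bound on |u j|
  have hue : ∀ j, eb/2 ≤ |u j| := by
    intro j
    have h1 : |u j - vb j| ≤ eb/2 := by
      have := norm_le_pi_norm (u - vb) j
      simp only [Pi.sub_apply, Real.norm_eq_abs] at this
      linarith [this, hu2]
    have h2 := hvb j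
    have := abs_sub_abs_le_abs_sub (vb j) (u j)
    rw [abs_sub_comm] at this
    linarith
  -- basic facts
  have hq1 := qf_pert (g := g) (vb := vb) u yu.2 hu1
  have hq2 := qf_pert (g := g) (vb := vb) u ybar.2 hu1
  rw [← hB] at hq1 hq2
  rw [← hRb] at hq2
  have hfs_u : -F₀ 0 ≤ Fs F₀ yu.1 := neg_F0_le_Fs F₀ hyu.2
  have hfs_b : -F₀ 0 ≤ Fs F₀ ybar.1 := neg_F0_le_Fs F₀ hybar.2
  have hql_u : qf g u yu.2 ≤ -((eb/2)^2/2) * ∑ i, (yu.2 i)^2 :=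
    qf_lower (by positivity) hue yu.2
  have hql_b : qf g vb ybar.2 ≤ -(eb^2/2) * Rb := by
    rw [hRb]; exact qf_lower heb.le hvb ybar.2
  have hsum_u : (0:ℝ) ≤ ∑ i, (yu.2 i)^2 := Finset.sum_nonneg fun i _ => sq_nonneg _
  have hnn : (0:ℝ) ≤ ‖u - vb‖ := norm_nonneg _
  -- F₀ 0 - P ≥ (eb^2/2) Rb ≥ 0
  have hF0P : (eb^2/2) * Rb ≤ F₀ 0 - P := by
    have hPd : P = qf g vb ybar.2 - Fs F₀ ybar.1 := by rw [hP]; rfl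
    linarith [hql_b, hfs_b, hPd.le, hPd.ge]
  -- chain of value comparisons
  have h1 : Phi g F₀ u ybar ≤ Phi g F₀ u yu := hmaxu ybar hybar
  have h2 : P - ‖u - vb‖ * (B * Rb) ≤ Phi g F₀ u ybar := by
    have hdiff : Phi g F₀ u ybar - P = qf g u ybar.2 - qf g vb ybar.2 := by
      rw [hP]; simp only [Phi]; ring
    have habs := (abs_le.mp hq2).1
    linarith [habs, hdiff.le, hdiff.ge]
  have h3 : Phi g F₀ u yu ≤ -((eb/2)^2/2) * ∑ i, (yu.2 i)^2 + F₀ 0 := by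
    have hPd : Phi g F₀ u yu = qf g u yu.2 - Fs F₀ yu.1 := rfl
    linarith [hql_u, hfs_u, hPd.le, hPd.ge]
  -- bound on ∑ (yu.2)^2
  have hRbound : ∑ i, (yu.2 i)^2 ≤ R := by
    have hbr : ‖u - vb‖ * (B * Rb) ≤ B * Rb := by
      calc ‖u - vb‖ * (B * Rb) ≤ 1 * (B * Rb) :=
            mul_le_mul_of_nonneg_right hu1 (mul_nonneg hBpos.le hRbpos)
        _ = B * Rb := one_mul _
    have hkey : ((eb/2)^2/2) * ∑ i, (yu.2 i)^2 ≤ F₀ 0 - P + B * Rb := by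
      nlinarith [h1, h2, h3, hbr]
    have heq : ((eb/2)^2/2) = eb^2/8 := by ring
    rw [heq] at hkey
    have : ∑ i, (yu.2 i)^2 ≤ (8/eb^2) * (F₀ 0 - P + B * Rb) := by
      have := mul_le_mul_of_nonneg_left hkey (le_of_lt (show (0:ℝ) < 8/eb^2 by positivity))
      calc ∑ i, (yu.2 i)^2 = (8/eb^2) * (eb^2/8 * ∑ i, (yu.2 i)^2) := by
            field_simp
        _ ≤ (8/eb^2) * (F₀ 0 - P + B * Rb) := this
    rw [hR]
    linarith
  -- quadratic growth at vb applied to yu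
  have h4 : Phi g F₀ u yu - ‖u - vb‖ * (B * R) ≤ Phi g F₀ vb yu := by
    have hid : Phi g F₀ vb yu - Phi g F₀ u yu = qf g vb yu.2 - qf g u yu.2 := by
      simp only [Phi]; ring
    have habs := (abs_le.mp hq1).2
    have hm : ‖u - vb‖ * (B * ∑ i, (yu.2 i)^2) ≤ ‖u - vb‖ * (B * R) := by
      apply mul_le_mul_of_nonneg_left _ hnn
      exact mul_le_mul_of_nonneg_left hRbound hBpos.le
    linarith [habs, hid.le, hid.ge, hm]
  have h5 : P - ‖u - vb‖ * (B * (R + Rb)) ≤ Phi g F₀ vb yu := by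
    have hexp : ‖u - vb‖ * (B * (R + Rb)) = ‖u - vb‖ * (B * R) + ‖u - vb‖ * (B * Rb) := by
      ring
    linarith [h1, h2, h4]
  have hqg := quad_growth hC hdesc heb hvb hybar hmax hyu
  have h6 : (eb^2/4) * ∑ i, (yu.2 i - ybar.2 i)^2 ≤ ‖u - vb‖ * (B * (R + Rb)) := by
    have hsξ : (0:ℝ) ≤ (∑ i, (yu.1 i - ybar.1 i)^2) / (8*C) := by positivity
    linarith [hqg, h5, hsξ]
  have hRbR : Rb ≤ R := by
    have h8 : Rb ≤ (2/eb^2) * (F₀ 0 - P) := by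
      have := mul_le_mul_of_nonneg_left hF0P (le_of_lt (show (0:ℝ) < 2/eb^2 by positivity))
      calc Rb = (2/eb^2) * (eb^2/2 * Rb) := by field_simp
        _ ≤ (2/eb^2) * (F₀ 0 - P) := this
    have h9 : (0:ℝ) ≤ F₀ 0 - P := by
      have := mul_nonneg (show (0:ℝ) ≤ eb^2/2 by positivity) hRbpos
      linarith
    have h10 : (2/eb^2) * (F₀ 0 - P) ≤ (8/eb^2) * (F₀ 0 - P + B * Rb) := by
      have ha : (0:ℝ) ≤ (6/eb^2) * (F₀ 0 - P) :=
        mul_nonneg (by positivity) h9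
      have hb : (0:ℝ) ≤ (8/eb^2) * (B * Rb) :=
        mul_nonneg (by positivity) (mul_nonneg hBpos.le hRbpos)
      have hexp : (8/eb^2) * (F₀ 0 - P + B * Rb)
          = (2/eb^2) * (F₀ 0 - P) + (6/eb^2) * (F₀ 0 - P) + (8/eb^2) * (B * Rb) := by
        ring
      linarith
    rw [hR]
    linarith
  -- conclude
  have h7 : (eb^2/4) * ∑ i, (yu.2 i - ybar.2 i)^2 ≤ ‖u - vb‖ * (B * (2*R)) := by
    have : ‖u - vb‖ * (B * (R + Rb)) ≤ ‖u - vb‖ * (B * (2*R)) := by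
      apply mul_le_mul_of_nonneg_left _ hnn
      apply mul_le_mul_of_nonneg_left _ hBpos.le
      linarith
    linarith [h6]
  have hfin : ∑ i, (yu.2 i - ybar.2 i)^2 ≤ (8*B*R/eb^2) * ‖u - vb‖ := by
    have h4e : (0:ℝ) < 4/eb^2 := by positivity
    have := mul_le_mul_of_nonneg_left h7 h4e.le
    calc ∑ i, (yu.2 i - ybar.2 i)^2 = (4/eb^2) * ((eb^2/4) * ∑ i, (yu.2 i - ybar.2 i)^2) := by
          field_simp
      _ ≤ (4/eb^2) * (‖u - vb‖ * (B * (2*R))) := this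
      _ = (8*B*R/eb^2) * ‖u - vb‖ := by ring
  subst hR hP hB hRb
  exact ⟨hRbound, hfin⟩

end Stability

section EBound

variable {g : Fin p → Fin d}

/-- Bound on the error term in the strict differentiability estimate. -/
lemma E_bound (u₁ u₂ vb : Fin d → ℝ) (α ab : Fin p → ℝ) {B R t δ : ℝ}
    (hB0 : 0 ≤ B) (hδ0 : 0 ≤ δ) (ht : 0 ≤ t)
    (hB : ∀ j, |vb j| ≤ B) (hR : ∑ i, (α i) ^ 2 ≤ R) (hRb : ∑ i, (ab i)^2 ≤ R)
    (hs : ∑ i, (α i - ab i)^2 ≤ t^2)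
    (hδ : ∀ j, |vb j - (u₂ j + u₁ j)/2| ≤ δ) :
    |∑ i, (u₂ (g i) - u₁ (g i)) * (vb (g i) * (ab i)^2 - ((u₂ (g i) + u₁ (g i))/2) * (α i)^2)|
      ≤ ‖u₂ - u₁‖ * ((p : ℝ) * (2*B*Real.sqrt R*t + δ*R)) := by
  have hR0 : (0:ℝ) ≤ R := le_trans (Finset.sum_nonneg fun i _ => sq_nonneg _) hR
  have hsR : (0:ℝ) ≤ Real.sqrt R := Real.sqrt_nonneg R
  calc |∑ i, (u₂ (g i) - u₁ (g i)) * (vb (g i) * (ab i)^2 - ((u₂ (g i) + u₁ (g i))/2) * (α i)^2)|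
      ≤ ∑ i, |(u₂ (g i) - u₁ (g i)) * (vb (g i) * (ab i)^2
          - ((u₂ (g i) + u₁ (g i))/2) * (α i)^2)| := Finset.abs_sum_le_sum_abs _ _
    _ ≤ ∑ _i : Fin p, ‖u₂ - u₁‖ * (2*B*Real.sqrt R*t + δ*R) := by
        apply Finset.sum_le_sum
        intro i _
        have h1 : |u₂ (g i) - u₁ (g i)| ≤ ‖u₂ - u₁‖ := by
          have := norm_le_pi_norm (u₂ - u₁) (g i)
          simpa [Real.norm_eq_abs] using this
        have hai2 : (α i)^2 ≤ R :=
          le_trans (Finset.single_le_sum (fun j _ => sq_nonneg (α j)) (Finset.mem_univ i)) hR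
        have habi2 : (ab i)^2 ≤ R :=
          le_trans (Finset.single_le_sum (fun j _ => sq_nonneg (ab j)) (Finset.mem_univ i)) hRb
        have hai : |α i| ≤ Real.sqrt R := by
          rw [← Real.sqrt_sq_eq_abs]; exact Real.sqrt_le_sqrt hai2
        have habi : |ab i| ≤ Real.sqrt R := by
          rw [← Real.sqrt_sq_eq_abs]; exact Real.sqrt_le_sqrt habi2
        have hd : |α i - ab i| ≤ t := by
          have h2 : (α i - ab i)^2 ≤ t^2 :=
            le_trans (Finset.single_le_sum (fun j _ => sq_nonneg (α j - ab j))
              (Finset.mem_univ i)) hs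
          have := Real.sqrt_le_sqrt h2
          rwa [Real.sqrt_sq_eq_abs, Real.sqrt_sq ht] at this
        have hbr : |vb (g i) * (ab i)^2 - ((u₂ (g i) + u₁ (g i))/2) * (α i)^2|
            ≤ 2*B*Real.sqrt R*t + δ*R := by
          have e : vb (g i) * (ab i)^2 - ((u₂ (g i) + u₁ (g i))/2) * (α i)^2
              = vb (g i) * ((ab i)^2 - (α i)^2)
                + (vb (g i) - (u₂ (g i) + u₁ (g i))/2) * (α i)^2 := by ring
          rw [e]
          refine le_trans (abs_add_le _ _) ?_
          have hA : |vb (g i) * ((ab i)^2 - (α i)^2)| ≤ B * (t * (2 * Real.sqrt R)) := by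
            rw [abs_mul]
            apply mul_le_mul (hB _) ?_ (abs_nonneg _) hB0
            have e2 : (ab i)^2 - (α i)^2 = (ab i - α i) * (ab i + α i) := by ring
            rw [e2, abs_mul]
            apply mul_le_mul ?_ ?_ (abs_nonneg _) ht
            · rw [abs_sub_comm]; exact hd
            · calc |ab i + α i| ≤ |ab i| + |α i| := abs_add_le _ _
                _ ≤ 2 * Real.sqrt R := by linarith
          have hB2 : |(vb (g i) - (u₂ (g i) + u₁ (g i))/2) * (α i)^2| ≤ δ * R := by
            rw [abs_mul]
            apply mul_le_mul (hδ _) ?_ (abs_nonneg _) hδ0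
            rw [abs_of_nonneg (sq_nonneg _)]; exact hai2
          have he : B * (t * (2*Real.sqrt R)) = 2*B*Real.sqrt R*t := by ring
          linarith
        rw [abs_mul]
        exact mul_le_mul h1 hbr (abs_nonneg _) (norm_nonneg _)
    _ = ‖u₂ - u₁‖ * ((p:ℝ) * (2*B*Real.sqrt R*t + δ*R)) := by
        rw [Finset.sum_const, Finset.card_univ, Fintype.card_fin, nsmul_eq_mul]
        ring

end EBound

end Statement5Aux







set_option maxHeartbeats 2000000 in
open Statement5Aux Topology in
/-- Strict differentiability away from zero coordinates.
If `F₀ : ℝ^m → ℝ` is convex with Lipschitz-continuous gradient and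
`v_g ≠ 0` for every group `g`, then `f₀` is strictly differentiable at `v`. -/
theorem statement5 {n m p d : ℕ}
    (A : Matrix (Fin m) (Fin n) ℝ) (L : Matrix (Fin p) (Fin n) ℝ)
    (g : Fin p → Fin d) (hg : Function.Surjective g)
    (F₀ : (Fin m → ℝ) → ℝ)
    (hconv : ConvexOn ℝ Set.univ F₀)
    (hdiff : Differentiable ℝ F₀)
    (M : NNReal) (hlip : LipschitzWith M (fderiv ℝ F₀))
    (v : Fin d → ℝ) (hv : ∀ j, v j ≠ 0) :
    ∃ D : (Fin d → ℝ) →L[ℝ] ℝ, HasStrictFDerivAt (fZero A L g F₀) D v := by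
  classical
  have hCpos : (0:ℝ) < (M:ℝ) + 1 := by positivity
  have hdesc : Descent F₀ ((M:ℝ) + 1) := descent_of_lipschitz F₀ hdiff M hlip
  obtain ⟨eb, heb, hvb⟩ : ∃ e : ℝ, 0 < e ∧ ∀ j, e ≤ |v j| := by
    rcases isEmpty_or_nonempty (Fin d) with h | h
    · exact ⟨1, one_pos, fun j => h.elim j⟩
    · obtain ⟨j₀, -, hj₀⟩ := Finset.exists_min_image Finset.univ (fun j => |v j|)
        ⟨Classical.arbitrary _, Finset.mem_univ _⟩
      exact ⟨|v j₀|, abs_pos.mpr (hv j₀), fun j => hj₀ j (Finset.mem_univ j)⟩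
  by_cases hDom : (Dom A L F₀).Nonempty
  swap
  · refine ⟨0, ?_⟩
    have hfz : fZero A L g F₀ = fun _ => 0 := by
      funext w
      apply fZero_eq_zero
      intro ξ α hfeas
      by_contra hne
      exact hDom ⟨(ξ, α), hfeas, hne⟩
    rw [hfz]
    exact hasStrictFDerivAt_const 0 v
  obtain ⟨y₀, hy₀⟩ := hDom
  obtain ⟨ybar, hybar, hmax⟩ := exists_max (g := g) hCpos hdesc heb hvb hy₀
  -- named constants
  obtain ⟨B, hB⟩ : ∃ B : ℝ, B = ‖v‖ + 1 := ⟨_, rfl⟩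
  obtain ⟨Rb, hRb⟩ : ∃ Rb : ℝ, Rb = ∑ i, (ybar.2 i)^2 := ⟨_, rfl⟩
  obtain ⟨P, hP⟩ : ∃ P : ℝ, P = Phi g F₀ v ybar := ⟨_, rfl⟩
  obtain ⟨R, hR⟩ : ∃ R : ℝ, R = (8/eb^2) * (F₀ 0 - P + B * Rb) + 1 := ⟨_, rfl⟩
  obtain ⟨K1, hK1⟩ : ∃ K1 : ℝ, K1 = 8*B*R/eb^2 := ⟨_, rfl⟩
  have hBpos : (0:ℝ) < B := by rw [hB]; positivity
  have hRbpos : (0:ℝ) ≤ Rb := by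
    rw [hRb]; exact Finset.sum_nonneg fun i _ => sq_nonneg _
  have hF0P : 0 ≤ F₀ 0 - P := by
    have h1 : Phi g F₀ v ybar = qf g v ybar.2 - Fs F₀ ybar.1 := rfl
    have h2 := qf_nonpos (g := g) v ybar.2
    have h3 := neg_F0_le_Fs F₀ hybar.2
    rw [hP]
    linarith
  have hRpos : (0:ℝ) < R := by
    rw [hR]
    have : (0:ℝ) ≤ (8/eb^2) * (F₀ 0 - P + B * Rb) := by
      apply mul_nonneg (by positivity)
      have := mul_nonneg hBpos.le hRbpos
      linarith
    linarith
  have hK1pos : (0:ℝ) ≤ K1 := by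
    rw [hK1]; positivity
  -- the derivative
  set D : (Fin d → ℝ) →L[ℝ] ℝ := ∑ i : Fin p, (-(v (g i)) * (ybar.2 i)^2) •
    (ContinuousLinearMap.proj (g i) : (Fin d → ℝ) →L[ℝ] ℝ) with hDdef
  have hDapp : ∀ w : Fin d → ℝ, D w = ∑ i, (-(v (g i)) * (ybar.2 i)^2) * w (g i) := by
    intro w
    rw [hDdef]
    simp [ContinuousLinearMap.sum_apply, ContinuousLinearMap.smul_apply,
      ContinuousLinearMap.proj_apply]
  refine ⟨D, .of_isLittleO ?_⟩
  rw [Asymptotics.isLittleO_iff]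
  intro c hc
  -- choice of δ
  set sR : ℝ := Real.sqrt R with hsRdef
  have hsR : (0:ℝ) ≤ sR := Real.sqrt_nonneg R
  set q : ℝ := 2*(p:ℝ)*B*sR with hq
  have hq0 : (0:ℝ) ≤ q := by rw [hq]; positivity
  set c1 : ℝ := c/(2*((p:ℝ)*R+1)) with hc1
  set c2 : ℝ := (c/(2*(q+1)))^2/(K1+1) with hc2
  have hc1pos : 0 < c1 := by rw [hc1]; positivity
  have hc2pos : 0 < c2 := by rw [hc2]; positivity
  set δ : ℝ := min (min 1 (eb/2)) (min c1 c2) with hδdef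
  have hδpos : 0 < δ := by
    rw [hδdef]
    apply lt_min (lt_min one_pos (by positivity)) (lt_min hc1pos hc2pos)
  have hδ1 : δ ≤ 1 := le_trans (min_le_left _ _) (min_le_left _ _)
  have hδeb : δ ≤ eb/2 := le_trans (min_le_left _ _) (min_le_right _ _)
  have hδc1 : δ ≤ c1 := le_trans (min_le_right _ _) (min_le_left _ _)
  have hδc2 : δ ≤ c2 := le_trans (min_le_right _ _) (min_le_right _ _)
  -- main per-point facts
  have key : ∀ u : Fin d → ℝ, ‖u - v‖ < δ →
      ∃ yu ∈ Dom A L F₀, (∀ y ∈ Dom A L F₀, Phi g F₀ u y ≤ Phi g F₀ u yu) ∧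
        fZero A L g F₀ u = Phi g F₀ u yu ∧
        ∑ i, (yu.2 i)^2 ≤ R ∧ ∑ i, (yu.2 i - ybar.2 i)^2 ≤ K1 * δ := by
    intro u hu
    have hu1 : ‖u - v‖ ≤ 1 := le_trans hu.le hδ1
    have hu2 : ‖u - v‖ ≤ eb/2 := le_trans hu.le hδeb
    have hue : ∀ j, eb/2 ≤ |u j| := by
      intro j
      have h1 : |u j - v j| ≤ eb/2 := by
        have := norm_le_pi_norm (u - v) j
        simp only [Pi.sub_apply, Real.norm_eq_abs] at this
        linarith
      have h2 := hvb j
      have h3 := abs_sub_abs_le_abs_sub (v j) (u j)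
      rw [abs_sub_comm] at h3
      linarith
    obtain ⟨yu, hyu, hmaxu⟩ := exists_max (g := g) hCpos hdesc
      (show (0:ℝ) < eb/2 by positivity) hue hy₀
    have hfz : fZero A L g F₀ u = Phi g F₀ u yu := fZero_eq_max hyu hmaxu
    have hstab := stability hCpos hdesc heb hvb hybar hmax hu1 hu2 hyu hmaxu
    rw [← hB, ← hRb, ← hP, ← hR] at hstab
    obtain ⟨hs1, hs2⟩ := hstab
    refine ⟨yu, hyu, hmaxu, hfz, hs1, ?_⟩
    have : (8*B*R/eb^2) * ‖u - v‖ ≤ K1 * δ := by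
      rw [hK1]
      apply mul_le_mul_of_nonneg_left hu.le
      rw [← hK1]; exact hK1pos
    linarith
  -- the neighborhood
  have hmem : Metric.ball v δ ×ˢ Metric.ball v δ ∈ 𝓝 ((v, v) : (Fin d → ℝ) × (Fin d → ℝ)) := by
    rw [nhds_prod_eq]
    exact Filter.prod_mem_prod (Metric.ball_mem_nhds v hδpos) (Metric.ball_mem_nhds v hδpos)
  filter_upwards [hmem] with x hx
  obtain ⟨hx1, hx2⟩ := hx
  rw [Metric.mem_ball, dist_eq_norm] at hx1 hx2
  obtain ⟨y₂, hy₂, hmax₂, hfz₂, hR₂, hS₂⟩ := key x.1 hx1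
  obtain ⟨y₁, hy₁, hmax₁, hfz₁, hR₁, hS₁⟩ := key x.2 hx2
  set u₂ : Fin d → ℝ := x.1 with hu₂
  set u₁ : Fin d → ℝ := x.2 with hu₁
  -- sandwich
  have hupper : fZero A L g F₀ u₂ - fZero A L g F₀ u₁ ≤ qf g u₂ y₂.2 - qf g u₁ y₂.2 := by
    have h1 : Phi g F₀ u₁ y₂ ≤ Phi g F₀ u₁ y₁ := hmax₁ y₂ hy₂
    have h2 : Phi g F₀ u₂ y₂ - Phi g F₀ u₁ y₂ = qf g u₂ y₂.2 - qf g u₁ y₂.2 := by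
      simp only [Phi]; ring
    rw [hfz₂, hfz₁]
    linarith
  have hlower : qf g u₂ y₁.2 - qf g u₁ y₁.2 ≤ fZero A L g F₀ u₂ - fZero A L g F₀ u₁ := by
    have h1 : Phi g F₀ u₂ y₁ ≤ Phi g F₀ u₂ y₂ := hmax₂ y₁ hy₁
    have h2 : Phi g F₀ u₂ y₁ - Phi g F₀ u₁ y₁ = qf g u₂ y₁.2 - qf g u₁ y₁.2 := by
      simp only [Phi]; ring
    rw [hfz₂, hfz₁]
    linarith
  -- error identity
  have hEid : ∀ α : Fin p → ℝ, qf g u₂ α - qf g u₁ α - D (u₂ - u₁)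
      = ∑ i, (u₂ (g i) - u₁ (g i)) *
          (v (g i) * (ybar.2 i)^2 - ((u₂ (g i) + u₁ (g i))/2) * (α i)^2) := by
    intro α
    rw [hDapp]
    simp only [qf, Finset.mul_sum]
    rw [← Finset.sum_sub_distrib, ← Finset.sum_sub_distrib]
    refine Finset.sum_congr rfl fun i _ => ?_
    simp only [Pi.sub_apply]
    ring
  -- error bound
  set t : ℝ := Real.sqrt (K1*δ) with ht
  have ht0 : 0 ≤ t := Real.sqrt_nonneg _
  have hEbnd : ∀ α : Fin p → ℝ, ∑ i, (α i)^2 ≤ R → ∑ i, (α i - ybar.2 i)^2 ≤ K1 * δ →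
      |∑ i, (u₂ (g i) - u₁ (g i)) *
          (v (g i) * (ybar.2 i)^2 - ((u₂ (g i) + u₁ (g i))/2) * (α i)^2)|
        ≤ ‖u₂ - u₁‖ * ((p:ℝ) * (2*B*sR*t + δ*R)) := by
    intro α hα hαs
    apply E_bound u₁ u₂ v α ybar.2 hBpos.le hδpos.le ht0
    · intro j
      have := norm_le_pi_norm v j
      rw [Real.norm_eq_abs] at this
      rw [hB]; linarith
    · exact hα
    · -- ∑ ybar.2 ² ≤ R : from Rb ≤ R
      have hRbR : Rb ≤ R := by
        rw [hR]
        have h1 : Rb ≤ (8/eb^2) * (F₀ 0 - P + B * Rb) := by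
          have h2 : (eb^2/2) * Rb ≤ F₀ 0 - P := by
            have hql_b := qf_lower (g := g) heb.le hvb ybar.2
            have hfs_b := neg_F0_le_Fs F₀ hybar.2
            have hPd : P = qf g v ybar.2 - Fs F₀ ybar.1 := by rw [hP]; rfl
            rw [hRb]
            nlinarith [hql_b, hfs_b]
          have h3 : Rb = (2/eb^2) * ((eb^2/2) * Rb) := by field_simp
          have h4 : (2/eb^2) * ((eb^2/2) * Rb) ≤ (2/eb^2) * (F₀ 0 - P) :=
            mul_le_mul_of_nonneg_left h2 (by positivity)
          have h5 : (2/eb^2) * (F₀ 0 - P) ≤ (8/eb^2) * (F₀ 0 - P + B * Rb) := by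
            have ha : (0:ℝ) ≤ (6/eb^2) * (F₀ 0 - P) := mul_nonneg (by positivity) hF0P
            have hb : (0:ℝ) ≤ (8/eb^2) * (B * Rb) :=
              mul_nonneg (by positivity) (mul_nonneg hBpos.le hRbpos)
            have hexp : (8/eb^2) * (F₀ 0 - P + B * Rb)
                = (2/eb^2) * (F₀ 0 - P) + (6/eb^2) * (F₀ 0 - P) + (8/eb^2) * (B * Rb) := by
              ring
            linarith
          linarith
        linarith
      rw [← hRb]; exact hRbR
    · -- closeness
      have : K1 * δ ≤ t^2 := by
        rw [ht, Real.sq_sqrt (mul_nonneg hK1pos hδpos.le)]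
      linarith
    · intro j
      have h1 : |v j - u₂ j| ≤ δ := by
        have := norm_le_pi_norm (v - u₂) j
        rw [Real.norm_eq_abs] at this
        simp only [Pi.sub_apply] at this
        have h2 : ‖v - u₂‖ = ‖u₂ - v‖ := norm_sub_rev _ _
        rw [hu₂] at *
        linarith [hx1, this, h2.le, h2.ge]
      have h2 : |v j - u₁ j| ≤ δ := by
        have := norm_le_pi_norm (v - u₁) j
        rw [Real.norm_eq_abs] at this
        simp only [Pi.sub_apply] at this
        have h3 : ‖v - u₁‖ = ‖u₁ - v‖ := norm_sub_rev _ _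
        rw [hu₁] at *
        linarith [hx2, this, h3.le, h3.ge]
      have h4 : v j - (u₂ j + u₁ j)/2 = ((v j - u₂ j) + (v j - u₁ j))/2 := by ring
      rw [h4]
      calc |((v j - u₂ j) + (v j - u₁ j))/2| = |(v j - u₂ j) + (v j - u₁ j)|/2 := by
            rw [abs_div]; norm_num
        _ ≤ (|v j - u₂ j| + |v j - u₁ j|)/2 := by
            linarith [abs_add_le (v j - u₂ j) (v j - u₁ j)]
        _ ≤ δ := by linarith
  -- final bound on the error coefficient
  have hc' : (0:ℝ) ≤ c/(2*(q+1)) := by positivity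
  have htle : t ≤ c/(2*(q+1)) := by
    have h1 : K1 * δ ≤ (c/(2*(q+1)))^2 := by
      have h2 : K1 * δ ≤ K1 * c2 := mul_le_mul_of_nonneg_left hδc2 hK1pos
      have h3 : K1 * c2 ≤ (c/(2*(q+1)))^2 := by
        rw [hc2]
        have hX : (0:ℝ) ≤ (c/(2*(q+1)))^2 := sq_nonneg _
        have he : K1 * ((c/(2*(q+1)))^2/(K1+1)) = (c/(2*(q+1)))^2 * (K1/(K1+1)) := by
          field_simp
        rw [he]
        have hfrac : K1/(K1+1) ≤ 1 := by
          rw [div_le_one (by linarith)]; linarith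
        nlinarith [hX, hfrac]
      linarith
    have h4 := Real.sqrt_le_sqrt h1
    rw [Real.sqrt_sq hc'] at h4
    rw [ht]
    exact h4
  have hq_t : q * t ≤ c/2 := by
    have h1 : q * t ≤ q * (c/(2*(q+1))) := mul_le_mul_of_nonneg_left htle hq0
    have h2 : q * (c/(2*(q+1))) ≤ (q+1) * (c/(2*(q+1))) :=
      mul_le_mul_of_nonneg_right (by linarith) hc'
    have h3 : (q+1) * (c/(2*(q+1))) = c/2 := by
      field_simp
    linarith
  have hδR : (p:ℝ)*R*δ ≤ c/2 := by
    have hpR : (0:ℝ) ≤ (p:ℝ)*R := by positivity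
    have h1 : (p:ℝ)*R*δ ≤ (p:ℝ)*R*c1 := mul_le_mul_of_nonneg_left hδc1 hpR
    have h2 : (p:ℝ)*R*c1 ≤ ((p:ℝ)*R+1)*c1 := by nlinarith [hc1pos]
    have h3 : ((p:ℝ)*R+1)*c1 = c/2 := by
      rw [hc1]
      field_simp
    linarith
  have hβ : (p:ℝ) * (2*B*sR*t + δ*R) ≤ c := by
    have he : (p:ℝ) * (2*B*sR*t + δ*R) = q*t + (p:ℝ)*R*δ := by rw [hq]; ring
    linarith
  -- conclude
  have hwn : (0:ℝ) ≤ ‖u₂ - u₁‖ := norm_nonneg _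
  have hEB2 := hEbnd y₂.2 hR₂ hS₂
  have hEB1 := hEbnd y₁.2 hR₁ hS₁
  have hbd : ‖u₂ - u₁‖ * ((p:ℝ)*(2*B*sR*t + δ*R)) ≤ c * ‖u₂ - u₁‖ := by
    calc ‖u₂ - u₁‖ * ((p:ℝ)*(2*B*sR*t + δ*R)) ≤ ‖u₂ - u₁‖ * c :=
          mul_le_mul_of_nonneg_left hβ hwn
      _ = c * ‖u₂ - u₁‖ := mul_comm _ _
  have hid2 := hEid y₂.2
  have hid1 := hEid y₁.2
  have habs2 := abs_le.mp hEB2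
  have habs1 := abs_le.mp hEB1
  rw [Real.norm_eq_abs]
  rw [abs_le]
  constructor
  · linarith [hlower, habs1.1, hid1.le, hid1.ge, hbd]
  · linarith [hupper, habs2.2, hid2.le, hid2.ge, hbd]
end

section
/- Differentiability over a compact dual set: let B > 0 and T := { (ξ,α) ∈ ℝ^m × ℝ^p : ‖α‖ ≤ B, ‖ξ‖ ≤ B, L^⊤α = −A^⊤ξ }. Assume F₀ : ℝ^m → ℝ is convex and its conjugate F₀* is continuous on the relevant domain. Then the function f₀(v) := max_{(ξ,α)∈T} φ(v,ξ,α), with φ(v,ξ,α) := −½‖v⊙α‖² − F₀*(ξ), is strictly differentiable at every v, with ∇f₀(v) = −v⊙α_v² for any maximiser (α_v, ξ_v) ∈ argmax_{(ξ,α)∈T} φ(v,ξ,α) (the value v⊙α_v² being independent of the chosen maximiser). -/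
open Matrix

/-- The continuous linear functional `w ↦ ⟨grad, w⟩` on `ℝ^d`. -/
noncomputable def vecCLM {d : ℕ} (grad : Fin d → ℝ) : (Fin d → ℝ) →L[ℝ] ℝ :=
  LinearMap.toContinuousLinearMap (∑ j, grad j • LinearMap.proj j)

lemma s6_vecCLM_apply {d : ℕ} (grad u : Fin d → ℝ) :
    vecCLM grad u = ∑ j, grad j * u j := by
  simp [vecCLM]

lemma s6_sum_sq_le {k : ℕ} {B : ℝ} (α : Fin k → ℝ)
    (h : Real.sqrt (∑ i, (α i)^2) ≤ B) : ∑ i, (α i)^2 ≤ B^2 := by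
  have h0 : (0:ℝ) ≤ ∑ i, (α i)^2 := Finset.sum_nonneg fun i _ => sq_nonneg _
  nlinarith [Real.sq_sqrt h0, Real.sqrt_nonneg (∑ i, (α i)^2)]

lemma s6_euclid_mid {k : ℕ} (a b : Fin k → ℝ) :
    Real.sqrt (∑ i, ((a i + b i)/2)^2)
      ≤ (Real.sqrt (∑ i, (a i)^2) + Real.sqrt (∑ i, (b i)^2))/2 := by
  let x : EuclideanSpace ℝ (Fin k) := WithLp.toLp 2 a
  let y : EuclideanSpace ℝ (Fin k) := WithLp.toLp 2 b
  have hx : Real.sqrt (∑ i, (a i)^2) = ‖x‖ := by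
    rw [EuclideanSpace.norm_eq]; congr 1; exact Finset.sum_congr rfl fun i _ => by
      rw [Real.norm_eq_abs, sq_abs]
  have hy : Real.sqrt (∑ i, (b i)^2) = ‖y‖ := by
    rw [EuclideanSpace.norm_eq]; congr 1; exact Finset.sum_congr rfl fun i _ => by
      rw [Real.norm_eq_abs, sq_abs]
  have hm : Real.sqrt (∑ i, ((a i + b i)/2)^2) = ‖(1/2 : ℝ) • (x + y)‖ := by
    rw [EuclideanSpace.norm_eq]; congr 1; exact Finset.sum_congr rfl fun i _ => by
      have : ((1/2 : ℝ) • (x + y)) i = (a i + b i)/2 := by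
        simp [x, y]; ring
      rw [this, Real.norm_eq_abs, sq_abs]
  rw [hx, hy, hm, norm_smul]
  have := norm_add_le x y
  rw [Real.norm_eq_abs, abs_of_nonneg (by norm_num : (0:ℝ) ≤ 1/2)]
  linarith

lemma s6_sum_fiber {p d : ℕ} (g : Fin p → Fin d) (x : Fin d → ℝ) (α : Fin p → ℝ) :
    ∑ i, (x (g i) * α i)^2 = ∑ j, (x j)^2 * (∑ i, if g i = j then (α i)^2 else 0) := by
  have h1 : ∀ j : Fin d, (x j)^2 * (∑ i, if g i = j then (α i)^2 else 0)
      = ∑ i, if g i = j then (x j)^2 * (α i)^2 else 0 := by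
    intro j; rw [Finset.mul_sum]; exact Finset.sum_congr rfl fun i _ => by
      split <;> simp
  simp_rw [h1]
  rw [Finset.sum_comm]
  refine Finset.sum_congr rfl fun i _ => ?_
  have h2 : ∀ j : Fin d, (if g i = j then (x j)^2 * (α i)^2 else 0)
      = if g i = j then (x (g i))^2 * (α i)^2 else 0 := by
    intro j
    rcases eq_or_ne (g i) j with h | h
    · subst h; rfl
    · simp [h]
  simp_rw [h2]
  rw [Finset.sum_ite_eq]
  simp [mul_pow]

noncomputable def s6_phi {m p d : ℕ} (g : Fin p → Fin d) (Fst : (Fin m → ℝ) → ℝ)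
    (x : Fin d → ℝ) (q : (Fin m → ℝ) × (Fin p → ℝ)) : ℝ :=
  -(1/2) * (∑ i, (x (g i) * q.2 i)^2) - Fst q.1

lemma s6_unique_grad {m p d : ℕ} (g : Fin p → Fin d) (Fst : (Fin m → ℝ) → ℝ)
    (K : Set ((Fin m → ℝ) × (Fin p → ℝ)))
    (hKmid : ∀ q₁ ∈ K, ∀ q₂ ∈ K, ((1/2:ℝ) • (q₁ + q₂)) ∈ K)
    (hFmid : ∀ q₁ ∈ K, ∀ q₂ ∈ K, Fst ((1/2:ℝ) • (q₁.1 + q₂.1)) ≤ (Fst q₁.1 + Fst q₂.1)/2)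
    (v : Fin d → ℝ)
    (q₁ q₂ : (Fin m → ℝ) × (Fin p → ℝ)) (hq₁ : q₁ ∈ K) (hq₂ : q₂ ∈ K)
    (h₁ : IsMaxOn (s6_phi g Fst v) K q₁) (h₂ : IsMaxOn (s6_phi g Fst v) K q₂) :
    ∀ j, v j * (∑ i, if g i = j then (q₁.2 i)^2 else 0)
        = v j * (∑ i, if g i = j then (q₂.2 i)^2 else 0) := by
  set qm := (1/2:ℝ) • (q₁ + q₂) with hqm
  have hqmK : qm ∈ K := hKmid q₁ hq₁ q₂ hq₂
  have hm2 : ∀ i, qm.2 i = (1/2) * (q₁.2 i + q₂.2 i) := by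
    intro i; simp [hqm, Prod.smul_snd]; ring
  have hm1 : qm.1 = (1/2:ℝ) • (q₁.1 + q₂.1) := by simp [hqm]
  have heq : s6_phi g Fst v q₂ = s6_phi g Fst v q₁ :=
    le_antisymm (h₁ hq₂) (h₂ hq₁)
  have hterm : ∀ i, (v (g i) * qm.2 i)^2
      = (1/2)*(v (g i) * q₁.2 i)^2 + (1/2)*(v (g i) * q₂.2 i)^2
        - ((1/2) * (v (g i) * (q₁.2 i - q₂.2 i)))^2 := by
    intro i; rw [hm2 i]; ring
  have hsum : ∑ i, (v (g i) * qm.2 i)^2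
      = (1/2) * (∑ i, (v (g i) * q₁.2 i)^2) + (1/2) * (∑ i, (v (g i) * q₂.2 i)^2)
        - ∑ i, ((1/2) * (v (g i) * (q₁.2 i - q₂.2 i)))^2 := by
    simp_rw [hterm]
    rw [Finset.sum_sub_distrib, Finset.sum_add_distrib, ← Finset.mul_sum, ← Finset.mul_sum]
  have hFm : Fst qm.1 ≤ (Fst q₁.1 + Fst q₂.1)/2 := by
    rw [hm1]; exact hFmid q₁ hq₁ q₂ hq₂
  have hle : s6_phi g Fst v qm ≤ s6_phi g Fst v q₁ := h₁ hqmK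
  have hS0 : (0:ℝ) ≤ ∑ i, ((1/2) * (v (g i) * (q₁.2 i - q₂.2 i)))^2 :=
    Finset.sum_nonneg fun i _ => sq_nonneg _
  have hSle : ∑ i, ((1/2) * (v (g i) * (q₁.2 i - q₂.2 i)))^2 ≤ 0 := by
    have e1 : s6_phi g Fst v qm = -(1/2) * (∑ i, (v (g i) * qm.2 i)^2) - Fst qm.1 := rfl
    have e2 : s6_phi g Fst v q₁ = -(1/2) * (∑ i, (v (g i) * q₁.2 i)^2) - Fst q₁.1 := rfl
    have e3 : s6_phi g Fst v q₂ = -(1/2) * (∑ i, (v (g i) * q₂.2 i)^2) - Fst q₂.1 := rfl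
    rw [e1, hsum] at hle
    rw [e3, e2] at heq
    linarith
  have hz : ∀ i, v (g i) * (q₁.2 i - q₂.2 i) = 0 := by
    intro i
    have h4 : ((1/2) * (v (g i) * (q₁.2 i - q₂.2 i)))^2 = 0 :=
      (Finset.sum_eq_zero_iff_of_nonneg (fun i _ => sq_nonneg _)).1
        (le_antisymm hSle hS0) i (Finset.mem_univ i)
    nlinarith [sq_nonneg (v (g i) * (q₁.2 i - q₂.2 i))]
  intro j
  rw [Finset.mul_sum, Finset.mul_sum]
  refine Finset.sum_congr rfl fun i _ => ?_
  rcases eq_or_ne (g i) j with h | h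
  · simp only [h, if_pos rfl]
    have h5 := hz i
    rw [h] at h5
    rcases mul_eq_zero.1 h5 with hv | hd
    · rw [hv]; ring
    · have : q₁.2 i = q₂.2 i := by linarith
      rw [this]
  · simp [h]

lemma s6_keygrad {m p d : ℕ} (g : Fin p → Fin d) (Fst : (Fin m → ℝ) → ℝ) {B : ℝ}
    (K : Set ((Fin m → ℝ) × (Fin p → ℝ)))
    (hKc : IsCompact K)
    (hKξ : ∀ q ∈ K, Real.sqrt (∑ i, (q.1 i)^2) ≤ B)
    (hKmid : ∀ q₁ ∈ K, ∀ q₂ ∈ K, ((1/2:ℝ) • (q₁ + q₂)) ∈ K)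
    (hFmid : ∀ q₁ ∈ K, ∀ q₂ ∈ K, Fst ((1/2:ℝ) • (q₁.1 + q₂.1)) ≤ (Fst q₁.1 + Fst q₂.1)/2)
    (hFcont : ContinuousOn Fst { ξ : Fin m → ℝ | Real.sqrt (∑ i, (ξ i)^2) ≤ B })
    (v : Fin d → ℝ)
    (q₀ : (Fin m → ℝ) × (Fin p → ℝ)) (hq₀ : q₀ ∈ K)
    (hmax₀ : IsMaxOn (s6_phi g Fst v) K q₀)
    {ε : ℝ} (hε : 0 < ε) :
    ∃ δ > 0, ∀ x : Fin d → ℝ, dist x v < δ → ∀ q ∈ K, IsMaxOn (s6_phi g Fst x) K q →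
      dist (fun j => x j * ∑ i, if g i = j then (q.2 i)^2 else 0)
           (fun j => v j * ∑ i, if g i = j then (q₀.2 i)^2 else 0) < ε := by
  by_contra hcon
  push_neg at hcon
  have hseq : ∀ k : ℕ, ∃ x : Fin d → ℝ, dist x v < 1/(k+1) ∧ ∃ q,
      q ∈ K ∧ IsMaxOn (s6_phi g Fst x) K q ∧
      ε ≤ dist (fun j => x j * ∑ i, if g i = j then (q.2 i)^2 else 0)
           (fun j => v j * ∑ i, if g i = j then (q₀.2 i)^2 else 0) := by
    intro k
    obtain ⟨x, hx1, q, hqK, hqmax, hge⟩ := hcon (1/(k+1)) (by positivity)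
    exact ⟨x, hx1, q, hqK, hqmax, hge⟩
  choose x hx q hqK hqmax hqfar using hseq
  have hxv : Filter.Tendsto x Filter.atTop (nhds v) := by
    rw [tendsto_iff_dist_tendsto_zero]
    exact squeeze_zero (fun k => dist_nonneg) (fun k => (hx k).le)
      tendsto_one_div_add_atTop_nhds_zero_nat
  obtain ⟨qs, hqsK, σ, hσmono, hσtend⟩ := hKc.tendsto_subseq hqK
  have hxσ : Filter.Tendsto (fun k => x (σ k)) Filter.atTop (nhds v) :=
    hxv.comp hσmono.tendsto_atTop
  have hPcont : Continuous (fun z : (Fin d → ℝ) × ((Fin m → ℝ) × (Fin p → ℝ)) =>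
      -(1/2 : ℝ) * ∑ i, (z.1 (g i) * z.2.2 i)^2) := by fun_prop
  have hpair : Filter.Tendsto (fun k => (x (σ k), q (σ k))) Filter.atTop (nhds (v, qs)) :=
    hxσ.prodMk_nhds hσtend
  have hq1tend : Filter.Tendsto (fun k => (q (σ k)).1) Filter.atTop
      (nhdsWithin qs.1 { ξ : Fin m → ℝ | Real.sqrt (∑ i, (ξ i)^2) ≤ B }) := by
    rw [tendsto_nhdsWithin_iff]
    refine ⟨(continuous_fst.tendsto qs).comp hσtend, Filter.Eventually.of_forall fun k => ?_⟩
    exact hKξ _ (hqK (σ k))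
  have hFtend : Filter.Tendsto (fun k => Fst ((q (σ k)).1)) Filter.atTop (nhds (Fst qs.1)) :=
    ((hFcont qs.1 (hKξ qs hqsK)).tendsto).comp hq1tend
  have hRHS : Filter.Tendsto (fun k => s6_phi g Fst (x (σ k)) (q (σ k)))
      Filter.atTop (nhds (s6_phi g Fst v qs)) := by
    have := ((hPcont.tendsto (v, qs)).comp hpair).sub hFtend
    exact this
  have hqsmax : IsMaxOn (s6_phi g Fst v) K qs := by
    rw [isMaxOn_iff]
    intro q' hq'
    have hLHS : Filter.Tendsto (fun k => s6_phi g Fst (x (σ k)) q')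
        Filter.atTop (nhds (s6_phi g Fst v q')) := by
      have hc : Continuous (fun y : Fin d → ℝ => s6_phi g Fst y q') := by
        unfold s6_phi; fun_prop
      exact (hc.tendsto v).comp hxσ
    exact le_of_tendsto_of_tendsto' hLHS hRHS fun k => (hqmax (σ k)) hq'
  have hGcont : Continuous (fun z : (Fin d → ℝ) × ((Fin m → ℝ) × (Fin p → ℝ)) =>
      (fun j => z.1 j * ∑ i, if g i = j then (z.2.2 i)^2 else 0 : Fin d → ℝ)) := by
    refine continuous_pi fun j => Continuous.mul (by fun_prop) ?_
    refine continuous_finset_sum _ fun i _ => ?_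
    by_cases h : g i = j
    · simp only [if_pos h]; fun_prop
    · simp only [if_neg h]; exact continuous_const
  have huniq : (fun j => v j * ∑ i, if g i = j then (qs.2 i)^2 else 0)
      = (fun j => v j * ∑ i, if g i = j then (q₀.2 i)^2 else 0) :=
    funext (s6_unique_grad g Fst K hKmid hFmid v qs q₀ hqsK hq₀ hqsmax hmax₀)
  have hdist : Filter.Tendsto
      (fun k => dist (fun j => x (σ k) j * ∑ i, if g i = j then ((q (σ k)).2 i)^2 else 0)
           (fun j => v j * ∑ i, if g i = j then (q₀.2 i)^2 else 0))
      Filter.atTop (nhds 0) := by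
    have h1 : Filter.Tendsto
        (fun k => (fun j => x (σ k) j * ∑ i, if g i = j then ((q (σ k)).2 i)^2 else 0 : Fin d → ℝ))
        Filter.atTop (nhds (fun j => v j * ∑ i, if g i = j then (qs.2 i)^2 else 0)) :=
      (hGcont.tendsto (v, qs)).comp hpair
    have := h1.dist (tendsto_const_nhds
      (x := (fun j => v j * ∑ i, if g i = j then (q₀.2 i)^2 else 0 : Fin d → ℝ)))
    rw [huniq] at this
    simpa using this
  have : ε ≤ 0 := ge_of_tendsto' hdist fun k => hqfar (σ k)
  linarith

lemma s6_Fst_mid {m : ℕ} (B : ℝ) (F₀ Fst : (Fin m → ℝ) → ℝ)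
    (hconj : ∀ ξ : Fin m → ℝ, Real.sqrt (∑ i, (ξ i)^2) ≤ B →
      ((Fst ξ : ℝ) : EReal) = ⨆ z : Fin m → ℝ, (((∑ i, ξ i * z i) - F₀ z : ℝ) : EReal))
    (ξ₁ ξ₂ : Fin m → ℝ) (h1 : Real.sqrt (∑ i, (ξ₁ i)^2) ≤ B)
    (h2 : Real.sqrt (∑ i, (ξ₂ i)^2) ≤ B) :
    Fst ((1/2:ℝ) • (ξ₁ + ξ₂)) ≤ (Fst ξ₁ + Fst ξ₂)/2 := by
  set ξm := (1/2:ℝ) • (ξ₁ + ξ₂) with hξm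
  have hmcoord : ∀ i, ξm i = (ξ₁ i + ξ₂ i)/2 := fun i => by simp [hξm]; ring
  have hmD : Real.sqrt (∑ i, (ξm i)^2) ≤ B := by
    simp_rw [hmcoord]
    have := s6_euclid_mid ξ₁ ξ₂
    linarith
  have hle : ∀ (ξ' : Fin m → ℝ), Real.sqrt (∑ i, (ξ' i)^2) ≤ B →
      ∀ z : Fin m → ℝ, (∑ i, ξ' i * z i) - F₀ z ≤ Fst ξ' := by
    intro ξ' hξ' z
    have h := hconj ξ' hξ'
    have h3 : (((∑ i, ξ' i * z i) - F₀ z : ℝ) : EReal) ≤ ((Fst ξ' : ℝ) : EReal) := by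
      rw [h]; exact le_iSup (fun z => (((∑ i, ξ' i * z i) - F₀ z : ℝ) : EReal)) z
    exact_mod_cast h3
  have hmain : ((Fst ξm : ℝ) : EReal) ≤ (((Fst ξ₁ + Fst ξ₂)/2 : ℝ) : EReal) := by
    rw [hconj ξm hmD]
    refine iSup_le fun z => ?_
    rw [EReal.coe_le_coe_iff]
    have e : (∑ i, ξm i * z i) = (1/2)*(∑ i, ξ₁ i * z i) + (1/2)*(∑ i, ξ₂ i * z i) := by
      rw [Finset.mul_sum, Finset.mul_sum, ← Finset.sum_add_distrib]
      exact Finset.sum_congr rfl fun i _ => by rw [hmcoord i]; ring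
    have hz1 := hle ξ₁ h1 z
    have hz2 := hle ξ₂ h2 z
    rw [e]
    linarith
  exact_mod_cast hmain
set_option maxHeartbeats 1600000 in
/-- Differentiability over a compact dual set.  Let `B > 0` and
`T = {(ξ,α) : ‖α‖ ≤ B, ‖ξ‖ ≤ B, L^⊤α = −A^⊤ξ}` (Euclidean norms).  Assume `F₀`
is convex and that the real-valued function `Fst` agrees with the convex
conjugate `F₀*` on the relevant domain `{‖ξ‖ ≤ B}` and is continuous there.
Then `f₀(v) = max_{(ξ,α)∈T} φ(v,ξ,α)`, with `φ(v,ξ,α) = −½‖v⊙α‖² − F₀*(ξ)`,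
is strictly differentiable at every `v`, with `∇f₀(v) = −v⊙α_v²` for any
maximiser `(ξ_v,α_v)` (coordinates `−v_j·Σ_{i : g i = j} α_i²`). -/
theorem statement6 {n m p d : ℕ}
    (A : Matrix (Fin m) (Fin n) ℝ) (L : Matrix (Fin p) (Fin n) ℝ)
    (g : Fin p → Fin d) (hg : Function.Surjective g)
    (B : ℝ) (hB : 0 < B)
    (F₀ : (Fin m → ℝ) → ℝ) (hconv : ConvexOn ℝ Set.univ F₀)
    (Fst : (Fin m → ℝ) → ℝ)
    (hconj : ∀ ξ : Fin m → ℝ, Real.sqrt (∑ i, (ξ i)^2) ≤ B →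
      ((Fst ξ : ℝ) : EReal)
        = ⨆ z : Fin m → ℝ, (((∑ i, ξ i * z i) - F₀ z : ℝ) : EReal))
    (hcont : ContinuousOn Fst { ξ : Fin m → ℝ | Real.sqrt (∑ i, (ξ i)^2) ≤ B })
    (v : Fin d → ℝ) :
    ∀ (ξ : Fin m → ℝ) (α : Fin p → ℝ),
      Real.sqrt (∑ i, (α i)^2) ≤ B → Real.sqrt (∑ i, (ξ i)^2) ≤ B →
      Lᵀ.mulVec α = -(Aᵀ.mulVec ξ) →
      (∀ (ξ' : Fin m → ℝ) (α' : Fin p → ℝ),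
        Real.sqrt (∑ i, (α' i)^2) ≤ B → Real.sqrt (∑ i, (ξ' i)^2) ≤ B →
        Lᵀ.mulVec α' = -(Aᵀ.mulVec ξ') →
        (-(1/2)) * (∑ i, (v (g i) * α' i)^2) - Fst ξ'
          ≤ (-(1/2)) * (∑ i, (v (g i) * α i)^2) - Fst ξ) →
      HasStrictFDerivAt
        (fun v' : Fin d → ℝ => sSup { c : ℝ |
          ∃ (ξ' : Fin m → ℝ) (α' : Fin p → ℝ),
            Real.sqrt (∑ i, (α' i)^2) ≤ B ∧ Real.sqrt (∑ i, (ξ' i)^2) ≤ B ∧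
            Lᵀ.mulVec α' = -(Aᵀ.mulVec ξ') ∧
            c = (-(1/2)) * (∑ i, (v' (g i) * α' i)^2) - Fst ξ' })
        (vecCLM (fun j => -(v j * ∑ i, if g i = j then (α i)^2 else 0))) v := by
  intro ξ α hα hξ hLc hmax
  set K : Set ((Fin m → ℝ) × (Fin p → ℝ)) := {q : (Fin m → ℝ) × (Fin p → ℝ) |
      Real.sqrt (∑ i, (q.2 i)^2) ≤ B ∧ Real.sqrt (∑ i, (q.1 i)^2) ≤ B ∧
      Lᵀ.mulVec q.2 = -(Aᵀ.mulVec q.1)} with hKdef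
  -- rewrite the function as  sSup of the image of K
  have hgoal : (fun v' : Fin d → ℝ => sSup { c : ℝ |
          ∃ (ξ' : Fin m → ℝ) (α' : Fin p → ℝ),
            Real.sqrt (∑ i, (α' i)^2) ≤ B ∧ Real.sqrt (∑ i, (ξ' i)^2) ≤ B ∧
            Lᵀ.mulVec α' = -(Aᵀ.mulVec ξ') ∧
            c = (-(1/2)) * (∑ i, (v' (g i) * α' i)^2) - Fst ξ' })
      = fun x : Fin d → ℝ => sSup (s6_phi g Fst x '' K) := by
    funext x
    congr 1
    ext c
    constructor
    · rintro ⟨ξ', α', h1, h2, h3, rfl⟩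
      exact ⟨(ξ', α'), ⟨h1, h2, h3⟩, rfl⟩
    · rintro ⟨q, hq, rfl⟩
      exact ⟨q.1, q.2, hq.1, hq.2.1, hq.2.2, rfl⟩
  rw [hgoal]
  -- compactness of K
  have hclosed : IsClosed K := by
    have h1 : IsClosed {q : (Fin m → ℝ) × (Fin p → ℝ) | Real.sqrt (∑ i, (q.2 i)^2) ≤ B} :=
      isClosed_le (by fun_prop) continuous_const
    have h2 : IsClosed {q : (Fin m → ℝ) × (Fin p → ℝ) | Real.sqrt (∑ i, (q.1 i)^2) ≤ B} :=
      isClosed_le (by fun_prop) continuous_const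
    have h3 : IsClosed {q : (Fin m → ℝ) × (Fin p → ℝ) | Lᵀ.mulVec q.2 = -(Aᵀ.mulVec q.1)} :=
      isClosed_eq (Continuous.matrix_mulVec continuous_const continuous_snd)
        (Continuous.neg (Continuous.matrix_mulVec continuous_const continuous_fst))
    exact h1.inter (h2.inter h3)
  have hKc : IsCompact K := by
    refine IsCompact.of_isClosed_subset
      ((isCompact_closedBall (0 : Fin m → ℝ) B).prod (isCompact_closedBall (0 : Fin p → ℝ) B))
      hclosed ?_
    rintro ⟨ξ', α'⟩ ⟨h1, h2, _⟩
    have key : ∀ {k : ℕ} (y : Fin k → ℝ), Real.sqrt (∑ i, (y i)^2) ≤ B →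
        y ∈ Metric.closedBall (0 : Fin k → ℝ) B := by
      intro k y hy
      have hsum := s6_sum_sq_le y hy
      rw [Metric.mem_closedBall, dist_zero_right, pi_norm_le_iff_of_nonneg hB.le]
      intro i
      have h1i : (y i)^2 ≤ ∑ i, (y i)^2 :=
        Finset.single_le_sum (fun i _ => sq_nonneg (y i)) (Finset.mem_univ i)
      rw [Real.norm_eq_abs]
      nlinarith [sq_abs (y i), abs_nonneg (y i)]
    exact ⟨key ξ' h2, key α' h1⟩
  have hKne : K.Nonempty := by
    refine ⟨(0, 0), ?_, ?_, ?_⟩ <;> simp [hB.le]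
  -- midpoints stay in K
  have hKmid : ∀ q₁ ∈ K, ∀ q₂ ∈ K, ((1/2:ℝ) • (q₁ + q₂)) ∈ K := by
    rintro ⟨ξ₁, α₁⟩ ⟨ha1, hx1, hc1⟩ ⟨ξ₂, α₂⟩ ⟨ha2, hx2, hc2⟩
    have sqle : ∀ {k : ℕ} (a b : Fin k → ℝ), Real.sqrt (∑ i, (a i)^2) ≤ B →
        Real.sqrt (∑ i, (b i)^2) ≤ B →
        Real.sqrt (∑ i, (((1/2:ℝ) • (a + b)) i)^2) ≤ B := by
      intro k a b haB hbB
      have hco : ∀ i, ((1/2:ℝ) • (a + b)) i = (a i + b i)/2 := by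
        intro i; simp; ring
      simp_rw [hco]
      have := s6_euclid_mid a b
      linarith
    refine ⟨?_, ?_, ?_⟩
    · exact sqle α₁ α₂ ha1 ha2
    · exact sqle ξ₁ ξ₂ hx1 hx2
    · show Lᵀ.mulVec ((1/2:ℝ) • (α₁ + α₂)) = -(Aᵀ.mulVec ((1/2:ℝ) • (ξ₁ + ξ₂)))
      rw [Matrix.mulVec_smul, Matrix.mulVec_add, hc1, hc2,
        Matrix.mulVec_smul, Matrix.mulVec_add]
      module
  have hFmidK : ∀ q₁ ∈ K, ∀ q₂ ∈ K,
      Fst ((1/2:ℝ) • (q₁.1 + q₂.1)) ≤ (Fst q₁.1 + Fst q₂.1)/2 :=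
    fun q₁ h₁ q₂ h₂ => s6_Fst_mid B F₀ Fst hconj q₁.1 q₂.1 h₁.2.1 h₂.2.1
  -- the objective is continuous on K for each x
  have hphiKcont : ∀ x : Fin d → ℝ, ContinuousOn (s6_phi g Fst x) K := by
    intro x
    have hp : Continuous (fun q : (Fin m → ℝ) × (Fin p → ℝ) =>
        -(1/2:ℝ) * ∑ i, (x (g i) * q.2 i)^2) := by fun_prop
    exact hp.continuousOn.sub (hcont.comp continuous_fst.continuousOn fun q hq => hq.2.1)
  have hmaxex : ∀ x : Fin d → ℝ, ∃ q ∈ K, IsMaxOn (s6_phi g Fst x) K q :=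
    fun x => hKc.exists_isMaxOn hKne (hphiKcont x)
  have hf0 : ∀ (x : Fin d → ℝ) (q : (Fin m → ℝ) × (Fin p → ℝ)), q ∈ K →
      IsMaxOn (s6_phi g Fst x) K q → sSup (s6_phi g Fst x '' K) = s6_phi g Fst x q := by
    intro x q hq hqmax
    refine IsGreatest.csSup_eq ⟨Set.mem_image_of_mem _ hq, ?_⟩
    rintro c' ⟨q', hq', rfl⟩
    exact hqmax hq'
  -- the given pair is a maximizer at v
  have hq₀K : ((ξ, α) : (Fin m → ℝ) × (Fin p → ℝ)) ∈ K := ⟨hα, hξ, hLc⟩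
  have hq₀max : IsMaxOn (s6_phi g Fst v) K (ξ, α) := by
    rw [isMaxOn_iff]
    intro q hq
    exact hmax q.1 q.2 hq.1 hq.2.1 hq.2.2
  refine HasStrictFDerivAt.of_isLittleO ?_
  rw [Asymptotics.isLittleO_iff]
  intro c hc
  have hε₀ : (0:ℝ) < c / (2*((d:ℝ)+1)) := by positivity
  obtain ⟨δ₁, hδ₁pos, hδ₁⟩ := s6_keygrad g Fst K hKc (fun q hq => hq.2.1) hKmid hFmidK hcont v
    (ξ, α) hq₀K hq₀max hε₀
  have hδ₂pos : (0:ℝ) < c / (2*((d:ℝ)*B^2+1)) := by positivity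
  set δ₂ := c / (2*((d:ℝ)*B^2+1)) with hδ₂def
  set δ := min δ₁ δ₂ with hδdef
  have hδpos : 0 < δ := lt_min hδ₁pos hδ₂pos
  have key1 : (d:ℝ) * (c / (2*((d:ℝ)+1))) ≤ c / 2 := by
    rw [mul_div_assoc', div_le_div_iff₀ (by positivity) two_pos]
    nlinarith [hc.le, Nat.cast_nonneg (α := ℝ) d]
  have key2 : (d:ℝ) * B^2 * δ₂ ≤ c / 2 := by
    rw [hδ₂def, mul_div_assoc', div_le_div_iff₀ (by positivity) two_pos]
    nlinarith [hc.le, Nat.cast_nonneg (α := ℝ) d, sq_nonneg B]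
  -- main estimate
  have hEst : ∀ x x' : Fin d → ℝ, dist x v < δ → dist x' v < δ →
      ∀ q ∈ K, IsMaxOn (s6_phi g Fst x) K q →
      |(s6_phi g Fst x' q - s6_phi g Fst x q)
        - ∑ j, (-(v j * ∑ i, if g i = j then (α i)^2 else 0)) * (x' j - x j)|
        ≤ c * ‖x' - x‖ := by
    intro x x' hx hx' q hqK hqmax
    have hgr := hδ₁ x (lt_of_lt_of_le hx (min_le_left _ _)) q hqK hqmax
    have hs0 : ∀ j, (0:ℝ) ≤ (∑ i, if g i = j then (q.2 i)^2 else 0) := by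
      intro j
      exact Finset.sum_nonneg fun i _ => by
        by_cases h : g i = j
        · simp [h, sq_nonneg]
        · simp [h]
    have hsB : ∀ j, (∑ i, if g i = j then (q.2 i)^2 else 0) ≤ B^2 := by
      intro j
      have h1 : (∑ i, if g i = j then (q.2 i)^2 else 0) ≤ ∑ i, (q.2 i)^2 :=
        Finset.sum_le_sum fun i _ => by
          by_cases h : g i = j
          · simp [h]
          · simp [h, sq_nonneg]
      have h2 := s6_sum_sq_le q.2 hqK.1
      linarith
    have hexp : s6_phi g Fst x' q - s6_phi g Fst x q
        - ∑ j, (-(v j * ∑ i, if g i = j then (α i)^2 else 0)) * (x' j - x j)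
        = ∑ j, ((v j * (∑ i, if g i = j then (α i)^2 else 0)
              - x j * (∑ i, if g i = j then (q.2 i)^2 else 0)) * (x' j - x j)
            - (1/2) * (∑ i, if g i = j then (q.2 i)^2 else 0) * (x' j - x j)^2) := by
      have e1 : s6_phi g Fst x' q - s6_phi g Fst x q
          = (-(1/2)) * (∑ j, (x' j)^2 * (∑ i, if g i = j then (q.2 i)^2 else 0))
            - (-(1/2)) * (∑ j, (x j)^2 * (∑ i, if g i = j then (q.2 i)^2 else 0)) := by
        unfold s6_phi
        rw [s6_sum_fiber g x' q.2, s6_sum_fiber g x q.2]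
        ring
      rw [e1, Finset.mul_sum, Finset.mul_sum, ← Finset.sum_sub_distrib,
        ← Finset.sum_sub_distrib]
      exact Finset.sum_congr rfl fun j _ => by ring
    rw [hexp]
    have hub : ‖x' - x‖ ≤ 2 * δ₂ := by
      have e2 : ‖x' - x‖ = dist x' x := (dist_eq_norm _ _).symm
      have h3 := dist_triangle x' v x
      have h4 : dist v x = dist x v := dist_comm v x
      have h5 : δ ≤ δ₂ := min_le_right _ _
      rw [e2]
      linarith
    have hu0 : (0:ℝ) ≤ ‖x' - x‖ := norm_nonneg _
    have hper : ∀ j, |(v j * (∑ i, if g i = j then (α i)^2 else 0)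
              - x j * (∑ i, if g i = j then (q.2 i)^2 else 0)) * (x' j - x j)
            - (1/2) * (∑ i, if g i = j then (q.2 i)^2 else 0) * (x' j - x j)^2|
        ≤ (c / (2*((d:ℝ)+1))) * ‖x' - x‖ + (1/2) * B^2 * ‖x' - x‖^2 := by
      intro j
      have hcoord : |v j * (∑ i, if g i = j then (α i)^2 else 0)
          - x j * (∑ i, if g i = j then (q.2 i)^2 else 0)| ≤ c / (2*((d:ℝ)+1)) := by
        have h6 := dist_le_pi_dist
          (fun j => x j * ∑ i, if g i = j then (q.2 i)^2 else 0)
          (fun j => v j * ∑ i, if g i = j then ((ξ, α).2 i)^2 else 0) j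
        have h7 := lt_of_le_of_lt h6 hgr
        rw [Real.dist_eq] at h7
        rw [abs_sub_comm] at h7
        exact h7.le
      have huj : |x' j - x j| ≤ ‖x' - x‖ := by
        have := norm_le_pi_norm (x' - x) j
        simpa [Real.norm_eq_abs] using this
      have huj2 : (x' j - x j)^2 ≤ ‖x' - x‖^2 := by
        nlinarith [abs_nonneg (x' j - x j), sq_abs (x' j - x j)]
      calc |(v j * (∑ i, if g i = j then (α i)^2 else 0)
              - x j * (∑ i, if g i = j then (q.2 i)^2 else 0)) * (x' j - x j)
            - (1/2) * (∑ i, if g i = j then (q.2 i)^2 else 0) * (x' j - x j)^2|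
          ≤ |(v j * (∑ i, if g i = j then (α i)^2 else 0)
              - x j * (∑ i, if g i = j then (q.2 i)^2 else 0)) * (x' j - x j)|
            + |(1/2) * (∑ i, if g i = j then (q.2 i)^2 else 0) * (x' j - x j)^2| :=
          abs_sub _ _
        _ ≤ (c / (2*((d:ℝ)+1))) * ‖x' - x‖ + (1/2) * B^2 * ‖x' - x‖^2 := by
            rw [abs_mul]
            refine add_le_add (mul_le_mul hcoord huj (abs_nonneg _) hε₀.le) ?_
            rw [abs_of_nonneg (by positivity : (0:ℝ) ≤ (1/2)
              * (∑ i, if g i = j then (q.2 i)^2 else 0) * (x' j - x j)^2)]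
            nlinarith [hs0 j, hsB j, huj2, sq_nonneg (x' j - x j), sq_nonneg ‖x' - x‖]
    calc |∑ j, ((v j * (∑ i, if g i = j then (α i)^2 else 0)
              - x j * (∑ i, if g i = j then (q.2 i)^2 else 0)) * (x' j - x j)
            - (1/2) * (∑ i, if g i = j then (q.2 i)^2 else 0) * (x' j - x j)^2)|
        ≤ ∑ j, |(v j * (∑ i, if g i = j then (α i)^2 else 0)
              - x j * (∑ i, if g i = j then (q.2 i)^2 else 0)) * (x' j - x j)
            - (1/2) * (∑ i, if g i = j then (q.2 i)^2 else 0) * (x' j - x j)^2| :=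
          Finset.abs_sum_le_sum_abs _ _
      _ ≤ ∑ _j : Fin d, ((c / (2*((d:ℝ)+1))) * ‖x' - x‖ + (1/2) * B^2 * ‖x' - x‖^2) :=
          Finset.sum_le_sum fun j _ => hper j
      _ = (d:ℝ) * ((c / (2*((d:ℝ)+1))) * ‖x' - x‖ + (1/2) * B^2 * ‖x' - x‖^2) := by
          rw [Finset.sum_const, Finset.card_univ, Fintype.card_fin, nsmul_eq_mul]
      _ ≤ c * ‖x' - x‖ := by
          nlinarith [mul_le_mul_of_nonneg_right key1 hu0,
            mul_le_mul_of_nonneg_right key2 hu0,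
            mul_le_mul_of_nonneg_right
              (mul_le_mul_of_nonneg_left hub
                (mul_nonneg (Nat.cast_nonneg (α := ℝ) d) (sq_nonneg B))) hu0,
            hu0, sq_nonneg B, Nat.cast_nonneg (α := ℝ) d]
  -- conclude
  rw [Metric.eventually_nhds_iff]
  refine ⟨δ, hδpos, ?_⟩
  rintro ⟨x', x⟩ hdist
  rw [Prod.dist_eq] at hdist
  have hx' : dist x' v < δ := lt_of_le_of_lt (le_max_left _ _) hdist
  have hx : dist x v < δ := lt_of_le_of_lt (le_max_right _ _) hdist
  obtain ⟨q₁, hq₁K, hq₁max⟩ := hmaxex x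
  obtain ⟨q₂, hq₂K, hq₂max⟩ := hmaxex x'
  show ‖sSup (s6_phi g Fst x' '' K) - sSup (s6_phi g Fst x '' K)
      - vecCLM (fun j => -(v j * ∑ i, if g i = j then (α i)^2 else 0)) (x' - x)‖
    ≤ c * ‖x' - x‖
  rw [hf0 x q₁ hq₁K hq₁max, hf0 x' q₂ hq₂K hq₂max, s6_vecCLM_apply, Real.norm_eq_abs]
  simp only [Pi.sub_apply]
  have hA1 := hEst x x' hx hx' q₁ hq₁K hq₁max
  have hB2 := hEst x' x hx' hx q₂ hq₂K hq₂max
  have hTneg : ∑ j, (-(v j * ∑ i, if g i = j then (α i)^2 else 0)) * (x j - x' j)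
      = -∑ j, (-(v j * ∑ i, if g i = j then (α i)^2 else 0)) * (x' j - x j) := by
    rw [← Finset.sum_neg_distrib]
    exact Finset.sum_congr rfl fun j _ => by ring
  have hnorm : ‖x - x'‖ = ‖x' - x‖ := norm_sub_rev _ _
  rw [hTneg, hnorm] at hB2
  have h12 : s6_phi g Fst x' q₁ ≤ s6_phi g Fst x' q₂ := hq₂max hq₁K
  have h21 : s6_phi g Fst x q₂ ≤ s6_phi g Fst x q₁ := hq₁max hq₂K
  rw [abs_le] at hA1 hB2 ⊢
  constructor
  · linarith [hA1.1]
  · linarith [hB2.1]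
end

section
/- Differentiability for basis pursuit: let F₀ = ι_{{y}} be the indicator of the single point y ∈ ℝ^m, and suppose y = Ax for some x ∈ ℝ^n. If v ∈ ℝ^{|Γ|} is such that the group support of v contains the group support of Ax (interpreted through the constraint Lx), then: v lies in the domain of f, a maximiser of sup_{α,ξ} φ(v,α,ξ) exists, where φ(v,ξ,α) = −½‖v⊙α‖² − ⟨ξ,y⟩ over the constraint L^⊤α = −A^⊤ξ, and f is differentiable at v. -/
open Matrix RealInnerProductSpace

set_option maxHeartbeats 1000000

private lemma s8aux0 (w' a h N : ℝ) (hN : |w'| ≤ N) :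
    ((0:ℝ)^2 - w'^2)*a*h - (1/2)*(w'*h)^2 ≤ a^2/2 * N^2 := by
  have h1 : w'^2 ≤ N^2 := by nlinarith [abs_nonneg w', sq_abs w']
  have h2 : (-(w'^2))*a*h - (1/2)*(w'*h)^2 ≤ w'^2 * (a^2/2) := by
    nlinarith [sq_nonneg (w' * (h + a)), sq_nonneg w']
  nlinarith [sq_nonneg a]

private lemma s8aux1 (w w' a h N ε : ℝ) (hε0 : 0 < ε) (hε1 : ε ≤ 1) (hεw : ε ≤ |w|)
    (hN : |w' - w| ≤ N) (hNε : N ≤ ε/2) :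
    (w^2 - w'^2)*a*h - (1/2)*(w'*h)^2 ≤ 2*(2*|w|+1)^2*a^2/ε^2 * N^2 := by
  have hN0 : 0 ≤ N := le_trans (abs_nonneg _) hN
  have habs : ε/2 ≤ |w'| := by
    have h1 : |w| - |w - w'| ≤ |w'| := by
      have := abs_sub_abs_le_abs_sub w w'
      linarith
    have h2 : |w - w'| = |w' - w| := abs_sub_comm _ _
    linarith
  have hw'2 : ε^2/4 ≤ w'^2 := by nlinarith [sq_abs w', abs_nonneg w']
  set x : ℝ := (w^2 - w'^2) * a with hx
  have hx2 : x^2 ≤ (2*|w|+1)^2 * N^2 * a^2 := by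
    have hsum : (w + w')^2 ≤ (2*|w|+1)^2 := by
      have h2 : |w'| ≤ |w| + N := by
        have := abs_add_le w (w' - w)
        simp only [add_sub_cancel] at this
        linarith
      have h1 : |w + w'| ≤ 2*|w| + 1 := by
        have := abs_add_le w w'
        linarith
      nlinarith [abs_nonneg (w + w'), sq_abs (w + w')]
    have hdiff : (w - w')^2 ≤ N^2 := by
      have h2 : |w - w'| = |w' - w| := abs_sub_comm _ _
      nlinarith [abs_nonneg (w - w'), sq_abs (w - w')]
    have hxe : x^2 = (w + w')^2 * (w - w')^2 * a^2 := by rw [hx]; ring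
    rw [hxe]
    nlinarith [sq_nonneg (w + w'), sq_nonneg (w - w'), sq_nonneg a, sq_nonneg N,
      mul_le_mul_of_nonneg_right hsum (sq_nonneg (w - w')),
      mul_le_mul_of_nonneg_left hdiff (by positivity : (0:ℝ) ≤ (2*|w|+1)^2)]
  have hw'pos : (0:ℝ) < 2 * w'^2 := by nlinarith
  have step1 : x * h - (1/2)*(w'*h)^2 ≤ x^2 / (2 * w'^2) := by
    rw [le_div_iff₀ hw'pos]
    nlinarith [sq_nonneg (w'^2 * h - x)]
  have step2 : x^2 / (2 * w'^2) ≤ x^2 * (2/ε^2) := by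
    rw [div_le_iff₀ hw'pos]
    have hd : (0:ℝ) < ε^2 := by positivity
    have : x^2 * (2/ε^2) * (2*w'^2) = x^2 * (4*w'^2) / ε^2 := by ring
    rw [this, le_div_iff₀ hd]
    nlinarith [sq_nonneg x]
  have step3 : x^2 * (2/ε^2) ≤ ((2*|w|+1)^2 * N^2 * a^2) * (2/ε^2) :=
    mul_le_mul_of_nonneg_right hx2 (by positivity)
  have hfin : ((2*|w|+1)^2 * N^2 * a^2) * (2/ε^2) = 2*(2*|w|+1)^2*a^2/ε^2 * N^2 := by ring
  linarith [step1, step2, step3]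

/-- Differentiability for basis pursuit.  Here `F₀ = ι_{{y}}` with
`y = Ax₀`, and by duality `f(v) = ½‖v‖² + sup {φ(v,ξ,α) : L^⊤α = −A^⊤ξ}` with
`φ(v,ξ,α) = −½‖v⊙α‖² − ⟨ξ,y⟩`.  If the group support of `v` contains the group
support of the constraint vector `Lx₀` (i.e. `v_j ≠ 0` whenever some index `i`
of group `j` has `(Lx₀)_i ≠ 0`), then the dual value set is nonempty and bounded
above (so `v ∈ dom f`), a maximiser exists, and `f` is differentiable at `v`. -/
theorem statement8 {n m p d : ℕ}
    (A : Matrix (Fin m) (Fin n) ℝ) (L : Matrix (Fin p) (Fin n) ℝ)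
    (g : Fin p → Fin d) (hg : Function.Surjective g)
    (y : Fin m → ℝ) (x₀ : Fin n → ℝ) (hy : y = A.mulVec x₀)
    (v : Fin d → ℝ)
    (hsupp : ∀ j : Fin d, (∃ i : Fin p, g i = j ∧ L.mulVec x₀ i ≠ 0) → v j ≠ 0) :
    (Set.Nonempty { c : ℝ | ∃ (ξ : Fin m → ℝ) (α : Fin p → ℝ),
        Lᵀ.mulVec α = -(Aᵀ.mulVec ξ) ∧
        c = (-(1/2)) * (∑ i, (v (g i) * α i)^2) - ∑ i, ξ i * y i } ∧
     BddAbove { c : ℝ | ∃ (ξ : Fin m → ℝ) (α : Fin p → ℝ),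
        Lᵀ.mulVec α = -(Aᵀ.mulVec ξ) ∧
        c = (-(1/2)) * (∑ i, (v (g i) * α i)^2) - ∑ i, ξ i * y i })
    ∧
    (∃ c : ℝ, IsGreatest { c' : ℝ | ∃ (ξ : Fin m → ℝ) (α : Fin p → ℝ),
        Lᵀ.mulVec α = -(Aᵀ.mulVec ξ) ∧
        c' = (-(1/2)) * (∑ i, (v (g i) * α i)^2) - ∑ i, ξ i * y i } c)
    ∧
    (∃ D : (Fin d → ℝ) →L[ℝ] ℝ,
      HasFDerivAt (fun v' : Fin d → ℝ =>
        (1/2) * (∑ j, (v' j)^2) +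
        sSup { c : ℝ | ∃ (ξ : Fin m → ℝ) (α : Fin p → ℝ),
          Lᵀ.mulVec α = -(Aᵀ.mulVec ξ) ∧
          c = (-(1/2)) * (∑ i, (v' (g i) * α i)^2) - ∑ i, ξ i * y i }) D v) := by
  classical
  set b : Fin p → ℝ := L.mulVec x₀ with hb
  set S : (Fin d → ℝ) → Set ℝ := fun v' => { c : ℝ | ∃ (ξ : Fin m → ℝ) (α : Fin p → ℝ),
      Lᵀ.mulVec α = -(Aᵀ.mulVec ξ) ∧
      c = (-(1/2)) * (∑ i, (v' (g i) * α i)^2) - ∑ i, ξ i * y i } with hS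
  set Q : (Fin d → ℝ) → (Fin p → ℝ) → ℝ :=
    fun v' α => ∑ i, (α i * b i - (1/2) * (v' (g i) * α i)^2) with hQdef
  have hbz : ∀ i, v (g i) = 0 → b i = 0 := by
    intro i hv
    by_contra hbi
    exact hsupp (g i) ⟨i, rfl, hbi⟩ hv
  -- ξ-identity
  have hξid : ∀ (ξ : Fin m → ℝ) (α : Fin p → ℝ), Lᵀ.mulVec α = -(Aᵀ.mulVec ξ) →
      ∑ i, ξ i * y i = -∑ i, α i * b i := by
    intro ξ α h
    have h1 : Aᵀ.mulVec ξ = -(Lᵀ.mulVec α) := by rw [h, neg_neg]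
    have h2 : (∑ i, ξ i * y i) = ξ ⬝ᵥ A.mulVec x₀ := by rw [hy]; rfl
    have h3 : ξ ⬝ᵥ A.mulVec x₀ = Aᵀ.mulVec ξ ⬝ᵥ x₀ := by
      rw [Matrix.dotProduct_mulVec, Matrix.mulVec_transpose]
    have h4 : Aᵀ.mulVec ξ ⬝ᵥ x₀ = -(Lᵀ.mulVec α ⬝ᵥ x₀) := by rw [h1, neg_dotProduct]
    have h5 : Lᵀ.mulVec α ⬝ᵥ x₀ = α ⬝ᵥ L.mulVec x₀ := by
      rw [Matrix.dotProduct_mulVec, Matrix.mulVec_transpose]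
    rw [h2, h3, h4, h5]; rfl
  have hQsum : ∀ (v' : Fin d → ℝ) (α : Fin p → ℝ),
      Q v' α = (∑ i, α i * b i) - (1/2) * ∑ i, (v' (g i) * α i)^2 := by
    intro v' α
    rw [hQdef]
    exact (Finset.sum_sub_distrib _ _).trans (by rw [Finset.mul_sum])
  -- membership characterization
  have hmem : ∀ (v' : Fin d → ℝ) (c : ℝ), c ∈ S v' ↔
      ∃ α : Fin p → ℝ, (∃ ξ, Lᵀ.mulVec α = -(Aᵀ.mulVec ξ)) ∧ c = Q v' α := by
    intro v' c
    constructor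
    · rintro ⟨ξ, α, hfe, rfl⟩
      refine ⟨α, ⟨ξ, hfe⟩, ?_⟩
      rw [hξid ξ α hfe, hQsum]; ring
    · rintro ⟨α, ⟨ξ, hfe⟩, rfl⟩
      refine ⟨ξ, α, hfe, ?_⟩
      rw [hξid ξ α hfe, hQsum]; ring
  -- the feasible subspace
  set Kmod : Submodule ℝ (Fin p → ℝ) :=
    Submodule.comap (Matrix.mulVecLin Lᵀ) (LinearMap.range (Matrix.mulVecLin (-Aᵀ))) with hK
  have hKmem : ∀ α : Fin p → ℝ, α ∈ Kmod ↔ ∃ ξ, Lᵀ.mulVec α = -(Aᵀ.mulVec ξ) := by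
    intro α
    simp only [hK, Submodule.mem_comap, LinearMap.mem_range, Matrix.mulVecLin_apply,
      Matrix.neg_mulVec]
    constructor
    · rintro ⟨ξ, hξ⟩; exact ⟨ξ, hξ.symm⟩
    · rintro ⟨ξ, hξ⟩; exact ⟨ξ, hξ.symm⟩
  -- existence of the maximiser via orthogonal projection
  obtain ⟨αs, hαsK, horth, hmax⟩ : ∃ αs, αs ∈ Kmod ∧
      (∀ h ∈ Kmod, ∑ i, h i * (b i - (v (g i))^2 * αs i) = 0) ∧
      (∀ α ∈ Kmod, Q v α ≤ Q v αs) := by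
    set T : (Fin p → ℝ) →ₗ[ℝ] EuclideanSpace ℝ (Fin p) :=
      { toFun := fun α => WithLp.toLp 2 (fun i => v (g i) * α i)
        map_add' := by intro a c; ext i; simp [mul_add]
        map_smul' := by intro r a; ext i; simp [smul_eq_mul]; ring } with hT
    set W : Submodule ℝ (EuclideanSpace ℝ (Fin p)) := Kmod.map T with hW
    set u : EuclideanSpace ℝ (Fin p) := WithLp.toLp 2 (fun i => if v (g i) = 0 then 0 else b i / v (g i)) with hu
    have hub : ∀ i, v (g i) * u i = b i := by
      intro i
      by_cases h : v (g i) = 0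
      · simp [hu, h, hbz i h]
      · simp [hu, h]; field_simp
    set ws : EuclideanSpace ℝ (Fin p) := W.starProjection u with hws
    have hwsW : ws ∈ W := W.starProjection_apply_mem u
    obtain ⟨αs, hαsK, hαsT⟩ := hwsW
    have hwsi : ∀ i, ws i = v (g i) * αs i := by intro i; rw [← hαsT]; rfl
    refine ⟨αs, hαsK, ?_, ?_⟩
    · intro h hh
      have hperp := Submodule.sub_starProjection_mem_orthogonal (K := W) u
      have h0 : ⟪T h, u - ws⟫ = 0 := hperp (T h) ⟨h, hh, rfl⟩
      rw [PiLp.inner_apply] at h0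
      rw [← h0]
      apply Finset.sum_congr rfl
      intro i _
      have h1 : (T h) i = v (g i) * h i := rfl
      simp only [h1, RCLike.inner_apply, conj_trivial, PiLp.sub_apply, hwsi i]
      linear_combination (-(h i)) * hub i
    · have hQn : ∀ α : Fin p → ℝ, Q v α = (1/2) * ‖u‖^2 - (1/2) * ‖T α - u‖^2 := by
        intro α
        have hn1 : ‖u‖^2 = ∑ i, (u i)^2 := by
          rw [← real_inner_self_eq_norm_sq, PiLp.inner_apply]
          simp [pow_two]
        have hn2 : ‖T α - u‖^2 = ∑ i, (v (g i) * α i - u i)^2 := by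
          rw [← real_inner_self_eq_norm_sq, PiLp.inner_apply]
          simp [pow_two]
          rfl
        rw [hQdef, hn1, hn2, Finset.mul_sum, Finset.mul_sum, ← Finset.sum_sub_distrib]
        apply Finset.sum_congr rfl
        intro i _
        linear_combination (-(α i)) * hub i
      intro α hα
      rw [hQn, hQn, hαsT]
      have hmin : ‖u - ws‖ ≤ ‖u - T α‖ := by
        rw [hws, Submodule.starProjection_minimal]
        exact ciInf_le ⟨0, by rintro x ⟨w, rfl⟩; positivity⟩ (⟨T α, ⟨α, hα, rfl⟩⟩ : W)
      have h1 : ‖T α - u‖ = ‖u - T α‖ := norm_sub_rev _ _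
      have h2 : ‖ws - u‖ = ‖u - ws‖ := norm_sub_rev _ _
      nlinarith [norm_nonneg (u - ws), norm_nonneg (u - T α)]
  have hαsfe : ∃ ξ, Lᵀ.mulVec αs = -(Aᵀ.mulVec ξ) := (hKmem αs).1 hαsK
  clear_value Q b
  clear hb hy hsupp
  -- ε
  obtain ⟨ε, hε0, hε1, hεv⟩ : ∃ ε : ℝ, 0 < ε ∧ ε ≤ 1 ∧ ∀ j, v j ≠ 0 → ε ≤ |v j| := by
    cases isEmpty_or_nonempty (Fin d) with
    | inl h => exact ⟨1, one_pos, le_refl 1, fun j => (h.false j).elim⟩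
    | inr h =>
      set f : Fin d → ℝ := fun j => if v j = 0 then 1 else |v j| with hf
      have hne : (Finset.univ : Finset (Fin d)).Nonempty := Finset.univ_nonempty
      refine ⟨min (Finset.univ.inf' hne f) 1, ?_, min_le_right _ _, ?_⟩
      · apply lt_min _ one_pos
        obtain ⟨j, _, hj⟩ := Finset.exists_mem_eq_inf' hne f
        rw [hj, hf]
        by_cases hvj : v j = 0 <;> simp [hvj]
      · intro j hj
        refine le_trans (min_le_left _ _) ?_
        have := Finset.inf'_le f (Finset.mem_univ j)
        exact this.trans (by simp [hf, hj])
  -- constants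
  set cc : Fin p → ℝ := fun i => if v (g i) = 0 then (αs i)^2/2
      else 2*(2*|v (g i)|+1)^2*(αs i)^2/ε^2 with hcc
  have hccnn : ∀ i, 0 ≤ cc i := by
    intro i
    rw [hcc]
    by_cases h : v (g i) = 0 <;> simp [h] <;> positivity
  set C : ℝ := ∑ i, cc i with hC
  have hCnn : 0 ≤ C := Finset.sum_nonneg fun i _ => hccnn i
  -- upper bound for Q near v
  have hupper : ∀ (v' : Fin d → ℝ) (N : ℝ), (∀ j, |v' j - v j| ≤ N) → N ≤ ε/2 →
      ∀ α ∈ Kmod, Q v' α ≤ Q v' αs + C * N^2 := by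
    intro v' N hN hNε α hα
    set h : Fin p → ℝ := fun i => α i - αs i with hh
    have hhK : h ∈ Kmod := Kmod.sub_mem hα hαsK
    have he := horth h hhK
    have hdecomp : Q v' α = Q v' αs + (∑ i, h i * (b i - (v (g i))^2 * αs i))
        + ∑ i, (((v (g i))^2 - (v' (g i))^2) * αs i * h i - (1/2) * (v' (g i) * h i)^2) := by
      rw [hQdef]
      simp only []
      rw [← Finset.sum_add_distrib, ← Finset.sum_add_distrib]
      apply Finset.sum_congr rfl
      intro i _
      have hhi : h i = α i - αs i := rfl
      rw [hhi]; ring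
    rw [hdecomp, he, add_zero]
    have hterm : ∀ i, ((v (g i))^2 - (v' (g i))^2) * αs i * h i - (1/2) * (v' (g i) * h i)^2
        ≤ cc i * N^2 := by
      intro i
      have hNi : |v' (g i) - v (g i)| ≤ N := hN (g i)
      by_cases hvz : v (g i) = 0
      · have hNi' : |v' (g i)| ≤ N := by rw [hvz, sub_zero] at hNi; exact hNi
        have hcci : cc i = (αs i)^2/2 := by rw [hcc]; simp [hvz]
        rw [hcci, hvz]
        exact s8aux0 _ _ _ _ hNi'
      · have hcci : cc i = 2*(2*|v (g i)|+1)^2*(αs i)^2/ε^2 := by rw [hcc]; simp [hvz]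
        rw [hcci]
        exact s8aux1 _ _ _ _ _ _ hε0 hε1 (hεv _ hvz) hNi hNε
    calc Q v' αs + ∑ i, (((v (g i))^2 - (v' (g i))^2) * αs i * h i - (1/2) * (v' (g i) * h i)^2)
        ≤ Q v' αs + ∑ i, cc i * N^2 := by
          apply add_le_add_right
          exact Finset.sum_le_sum fun i _ => hterm i
      _ = Q v' αs + C * N^2 := by rw [hC, Finset.sum_mul]
  clear_value cc C
  clear hcc hC hccnn
  -- sSup bounds near v
  have hQmem : ∀ v' : Fin d → ℝ, Q v' αs ∈ S v' := fun v' => (hmem v' _).2 ⟨αs, hαsfe, rfl⟩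
  have hBdd : ∀ (v' : Fin d → ℝ) (N : ℝ), (∀ j, |v' j - v j| ≤ N) → N ≤ ε/2 →
      ∀ c ∈ S v', c ≤ Q v' αs + C * N^2 := by
    intro v' N hN hNε c hc
    obtain ⟨α, hfe, rfl⟩ := (hmem v' c).1 hc
    exact hupper v' N hN hNε α ((hKmem α).2 hfe)
  have hsSup : ∀ (v' : Fin d → ℝ) (N : ℝ), (∀ j, |v' j - v j| ≤ N) → N ≤ ε/2 →
      Q v' αs ≤ sSup (S v') ∧ sSup (S v') ≤ Q v' αs + C * N^2 := by
    intro v' N hN hNε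
    have hbdd : BddAbove (S v') := ⟨Q v' αs + C * N^2, fun c hc => hBdd v' N hN hNε c hc⟩
    exact ⟨le_csSup hbdd (hQmem v'), csSup_le ⟨_, hQmem v'⟩ (hBdd v' N hN hNε)⟩
  have hsSupv : sSup (S v) = Q v αs := by
    have h0 : ∀ j, |v j - v j| ≤ 0 := by intro j; simp
    have h2 := hsSup v 0 h0 (by positivity)
    have h1 : C * 0^2 = 0 := by ring
    rw [h1] at h2
    linarith [h2.1, h2.2]
  -- Part 2: IsGreatest
  have hGreatest : IsGreatest (S v) (Q v αs) := by
    constructor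
    · exact hQmem v
    · intro c hc
      obtain ⟨α, hfe, rfl⟩ := (hmem v c).1 hc
      exact hmax α ((hKmem α).2 hfe)
  refine ⟨⟨⟨Q v αs, hQmem v⟩, hGreatest.bddAbove⟩, ⟨Q v αs, hGreatest⟩, ?_⟩
  -- Part 3: differentiability
  set D : (Fin d → ℝ) →L[ℝ] ℝ :=
    (∑ j, (v j) • (ContinuousLinearMap.proj (R := ℝ) (φ := fun _ : Fin d => ℝ) j))
      - (∑ i, (v (g i) * (αs i)^2) • (ContinuousLinearMap.proj (R := ℝ) (φ := fun _ : Fin d => ℝ) (g i))) with hD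
  have hDa : ∀ w : Fin d → ℝ, D w = (∑ j, v j * w j) - ∑ i, v (g i) * (αs i)^2 * w (g i) := by
    intro w
    rw [hD]
    simp [ContinuousLinearMap.sum_apply, smul_eq_mul, mul_assoc]
  clear_value D
  clear hD
  refine ⟨D, ?_⟩
  rw [hasFDerivAt_iff_isLittleO_nhds_zero]
  set C' : ℝ := (1/2) * d + (1/2) * ∑ i, (αs i)^2 with hC'
  have hsq : (0:ℝ) ≤ ∑ i, (αs i)^2 := Finset.sum_nonneg fun i _ => sq_nonneg _
  have hC'nn : 0 ≤ C' := by rw [hC']; positivity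
  -- polynomial identity
  have hP : ∀ v' : Fin d → ℝ,
      ((1/2) * (∑ j, (v' j)^2) + Q v' αs) - ((1/2) * (∑ j, (v j)^2) + Q v αs) - D (v' - v)
        = (1/2) * ∑ j, (v' j - v j)^2 - (1/2) * ∑ i, ((v' (g i) - v (g i)) * αs i)^2 := by
    intro v'
    rw [hDa]
    simp only [Pi.sub_apply]
    rw [hQsum v' αs, hQsum v αs]
    have hj : ∑ j, ((1/2)*(v' j)^2 - (1/2)*(v j)^2 - v j * (v' j - v j) - (1/2)*(v' j - v j)^2) = 0 := by
      apply Finset.sum_eq_zero; intro j _; ring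
    have hi : ∑ i, ((1/2)*(v (g i) * αs i)^2 - (1/2)*(v' (g i) * αs i)^2
        + v (g i) * (αs i)^2 * (v' (g i) - v (g i)) + (1/2)*((v' (g i) - v (g i)) * αs i)^2) = 0 := by
      apply Finset.sum_eq_zero; intro i _; ring
    simp only [Finset.sum_sub_distrib, Finset.sum_add_distrib] at hj hi
    simp only [← Finset.mul_sum] at hj hi ⊢
    linarith
  -- E bound
  have hE : ∀ (v' : Fin d → ℝ) (N : ℝ), (∀ j, |v' j - v j| ≤ N) → 0 ≤ N →
      |(1/2) * ∑ j, (v' j - v j)^2 - (1/2) * ∑ i, ((v' (g i) - v (g i)) * αs i)^2| ≤ C' * N^2 := by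
    intro v' N hN hN0
    have h1 : ∑ j, (v' j - v j)^2 ≤ d * N^2 := by
      calc ∑ j, (v' j - v j)^2 ≤ ∑ _j : Fin d, N^2 := by
            apply Finset.sum_le_sum
            intro j _
            nlinarith [hN j, abs_nonneg (v' j - v j), sq_abs (v' j - v j)]
        _ = d * N^2 := by simp [Finset.sum_const, Finset.card_univ]
    have h2 : (0:ℝ) ≤ ∑ j, (v' j - v j)^2 := Finset.sum_nonneg fun j _ => sq_nonneg _
    have h3 : ∑ i, ((v' (g i) - v (g i)) * αs i)^2 ≤ (∑ i, (αs i)^2) * N^2 := by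
      calc ∑ i, ((v' (g i) - v (g i)) * αs i)^2 ≤ ∑ i, N^2 * (αs i)^2 := by
            apply Finset.sum_le_sum
            intro i _
            have hNi := hN (g i)
            have h5 : (v' (g i) - v (g i))^2 ≤ N^2 := by
              nlinarith [abs_nonneg (v' (g i) - v (g i)), sq_abs (v' (g i) - v (g i))]
            nlinarith [mul_le_mul_of_nonneg_right h5 (sq_nonneg (αs i))]
        _ = (∑ i, (αs i)^2) * N^2 := by
            rw [Finset.sum_mul]
            apply Finset.sum_congr rfl
            intro i _
            ring
    have h4 : (0:ℝ) ≤ ∑ i, ((v' (g i) - v (g i)) * αs i)^2 := Finset.sum_nonneg fun i _ => sq_nonneg _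
    rw [abs_le, hC']
    constructor <;> nlinarith [h1, h2, h3, h4]
  clear_value C'
  clear hC'
  -- the little-o estimate
  rw [Asymptotics.isLittleO_iff]
  intro ce hce
  have hδ0 : 0 < min (ε/2) (ce/(C + C' + 1)) := by
    apply lt_min (by positivity)
    positivity
  filter_upwards [Metric.ball_mem_nhds (0 : Fin d → ℝ) hδ0] with hh hv'
  set v' : Fin d → ℝ := v + hh with hv'def
  have hsub : v' - v = hh := by rw [hv'def]; abel
  obtain ⟨N, hNdef⟩ : ∃ N : ℝ, N = ‖hh‖ := ⟨_, rfl⟩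
  have hN0 : 0 ≤ N := hNdef ▸ norm_nonneg _
  have hNlt : N < min (ε/2) (ce/(C + C' + 1)) := by
    rw [hNdef, ← dist_zero_right]
    exact Metric.mem_ball.1 hv'
  have hNε : N ≤ ε/2 := le_of_lt (lt_of_lt_of_le hNlt (min_le_left _ _))
  have hNce : N ≤ ce/(C + C' + 1) := le_of_lt (lt_of_lt_of_le hNlt (min_le_right _ _))
  have hNj : ∀ j, |v' j - v j| ≤ N := by
    intro j
    have h1 := norm_le_pi_norm hh j
    have h2 : v' j - v j = hh j := by rw [hv'def]; simp
    rw [h2, hNdef]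
    simpa [Real.norm_eq_abs] using h1
  obtain ⟨hlow, hhigh⟩ := hsSup v' N hNj hNε
  have hEb := hE v' N hNj hN0
  have hPe := hP v'
  have hceN : (C + C') * N^2 ≤ ce * N := by
    have h1 : (C + C') * N ≤ ce := by
      have h2 : (C + C') * N ≤ (C + C' + 1) * N := by nlinarith
      have h3 : (C + C' + 1) * N ≤ (C + C' + 1) * (ce/(C + C' + 1)) :=
        mul_le_mul_of_nonneg_left hNce (by linarith)
      have h4 : (C + C' + 1) * (ce/(C + C' + 1)) = ce := by field_simp
      linarith
    nlinarith [mul_le_mul_of_nonneg_right h1 hN0]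
  rw [abs_le] at hEb
  rw [hsub] at hPe
  show ‖((1/2) * (∑ j, (v' j)^2) + sSup (S v')) - ((1/2) * (∑ j, (v j)^2) + sSup (S v))
      - D hh‖ ≤ ce * ‖hh‖
  rw [hsSupv, Real.norm_eq_abs, ← hNdef, abs_le]
  constructor
  · linarith [hlow, hPe, hEb.1, hceN, mul_nonneg hCnn (sq_nonneg N)]
  · linarith [hhigh, hPe, hEb.2, hceN]
end

section
/- Quadratic variational form for group ℓ_q quasi-norms: let β > 0 and q = 2β/(1+β). Then for every x ∈ ℝ^p, (1/q)·Σ_{g∈Γ}‖x_g‖^q = min over η ∈ (0,∞)^{|Γ|} of [ ½ Σ_{g∈Γ} ‖x_g‖²/η_g + (1/(2β)) Σ_{g∈Γ} η_g^β ], and this also equals the minimum over all u ∈ ℝ^p, v ∈ ℝ^{|Γ|} with x = u⊙v of [ ½‖u‖² + (1/(2β)) Σ_{g∈Γ} |v_g|^{2β} ]. -/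
open Real Finset


lemma st15_bernoulli {β r : ℝ} (hβ : 0 < β) (hr : 0 < r) :
    (1+β) * r ≤ r ^ (1+β) + β := by
  have h := one_add_mul_self_le_rpow_one_add (s := r - 1) (by linarith) (p := 1+β) (by linarith)
  have : 1 + (r - 1) = r := by ring
  rw [this] at h
  nlinarith [h]

lemma st15_key {β : ℝ} (hβ : 0 < β) {a η : ℝ} (ha : 0 ≤ a) (hη : 0 < η) :
    ((1+β)/(2*β)) * a ^ (β/(1+β)) ≤ a/(2*η) + η^β/(2*β) := by
  have hβ1 : (0:ℝ) < 1 + β := by linarith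
  rcases ha.eq_or_lt with h0 | hapos
  · rw [← h0, Real.zero_rpow (by positivity), mul_zero]
    rw [← h0] at *
    positivity
  · set m : ℝ := a ^ (1/(1+β)) with hm
    have hmpos : 0 < m := Real.rpow_pos_of_pos hapos _
    have hma : m ^ ((1:ℝ)+β) = a := by
      rw [hm, ← Real.rpow_mul hapos.le, one_div, inv_mul_cancel₀ hβ1.ne', Real.rpow_one]
    have hmb : m ^ β = a ^ (β/(1+β)) := by
      rw [hm, ← Real.rpow_mul hapos.le, one_div, inv_mul_eq_div]
    have hb := st15_bernoulli hβ (div_pos hη hmpos)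
    have hdiv : (η/m) ^ ((1:ℝ)+β) = η ^ ((1:ℝ)+β) / a := by
      rw [Real.div_rpow hη.le hmpos.le, hma]
    rw [hdiv] at hb
    have key : (1+β) * a ^ (β/(1+β)) * η ≤ β * a + η ^ ((1:ℝ)+β) := by
      have h2 := mul_le_mul_of_nonneg_right hb hapos.le
      have hd : η ^ ((1:ℝ)+β) / a * a = η ^ ((1:ℝ)+β) := div_mul_cancel₀ _ hapos.ne'
      have ham : η / m * a = η * a ^ (β/(1+β)) := by
        rw [← hmb, ← hma, Real.rpow_one_add' hmpos.le hβ1.ne']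
        field_simp
      nlinarith [ham, h2, hd]
    have hηβ1 : η ^ ((1:ℝ)+β) = η * η ^ β := Real.rpow_one_add' hη.le hβ1.ne'
    rw [hηβ1] at key
    rw [div_add_div _ _ (by positivity : (2*η) ≠ 0) (by positivity : (2*β) ≠ 0),
      le_div_iff₀ (by positivity)]
    have hsimp : (1+β)/(2*β)*a^(β/(1+β))*(2*η*(2*β)) = 2*((1+β)*a^(β/(1+β))*η) := by
      field_simp
    rw [hsimp]
    linarith [key]

lemma st15_subadd {a b t : ℝ} (ha : 0 ≤ a) (hb : 0 ≤ b) (ht : 0 ≤ t) (ht1 : t ≤ 1) :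
    (a+b)^t ≤ a^t + b^t := by
  have h := NNReal.rpow_add_le_add_rpow a.toNNReal b.toNNReal ht ht1
  have := NNReal.coe_le_coe.mpr h
  push_cast at this
  rwa [Real.coe_toNNReal a ha, Real.coe_toNNReal b hb] at this

lemma st15_fib {p d : ℕ} (g : Fin p → Fin d) (f : Fin p → ℝ) :
    ∑ i, f i = ∑ j, ∑ i, if g i = j then f i else 0 := by
  rw [Finset.sum_comm]
  exact Finset.sum_congr rfl fun i _ => by simp

lemma st15_part1 {d : ℕ} {β : ℝ} (hβ : 0 < β) (n : Fin d → ℝ) (hn0 : ∀ j, 0 ≤ n j) :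
    ∑ j, ((1+β)/(2*β)) * (n j) ^ (β/(1+β))
      = sInf { c : ℝ | ∃ η : Fin d → ℝ, (∀ j, 0 < η j) ∧
          c = (1/2) * (∑ j, n j / η j) + (1/(2*β)) * ∑ j, (η j) ^ β } := by
  have hβ1 : (0:ℝ) < 1+β := by linarith
  set t : ℝ := β/(1+β) with ht
  have htpos : 0 < t := by positivity
  have ht1 : t ≤ 1 := by rw [ht, div_le_one hβ1]; linarith
  have hval : ∀ η : Fin d → ℝ,
      (1/2) * (∑ j, n j / η j) + (1/(2*β)) * ∑ j, (η j)^β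
        = ∑ j, (n j/(2 * η j) + (η j)^β/(2*β)) := by
    intro η
    rw [Finset.mul_sum, Finset.mul_sum, ← Finset.sum_add_distrib]
    exact Finset.sum_congr rfl fun j _ => by ring
  have hlb : ∀ c ∈ { c : ℝ | ∃ η : Fin d → ℝ, (∀ j, 0 < η j) ∧
          c = (1/2) * (∑ j, n j / η j) + (1/(2*β)) * ∑ j, (η j) ^ β },
      ∑ j, ((1+β)/(2*β)) * (n j)^t ≤ c := by
    rintro c ⟨η, hη, rfl⟩
    rw [hval η]
    exact Finset.sum_le_sum fun j _ => st15_key hβ (hn0 j) (hη j)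
  apply le_antisymm
  · exact le_csInf ⟨_, ⟨fun _ => 1, fun _ => one_pos, rfl⟩⟩ hlb
  · apply le_of_forall_pos_le_add
    intro ε hε
    have hc : (0:ℝ) < (1+β)/(2*β) := by positivity
    have hd1 : (0:ℝ) < (d:ℝ) + 1 := by positivity
    set δ : ℝ := (ε/(((d:ℝ)+1) * ((1+β)/(2*β)))) ^ (1/t) with hδ
    have hδpos : 0 < δ := Real.rpow_pos_of_pos (by positivity) _
    have hδt : δ ^ t = ε/(((d:ℝ)+1) * ((1+β)/(2*β))) := by
      rw [hδ, ← Real.rpow_mul (by positivity), one_div, inv_mul_cancel₀ htpos.ne',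
        Real.rpow_one]
    have hδε : ((1+β)/(2*β)) * ((d:ℝ) * δ ^ t) ≤ ε := by
      rw [hδt]
      calc ((1+β)/(2*β)) * ((d:ℝ) * (ε / (((d:ℝ)+1) * ((1+β)/(2*β)))))
          = ε * ((d:ℝ)/((d:ℝ)+1)) := by field_simp
        _ ≤ ε * 1 := by
            apply mul_le_mul_of_nonneg_left _ hε.le
            rw [div_le_one hd1]; linarith
        _ = ε := mul_one ε
    set η : Fin d → ℝ := fun j => (n j + δ) ^ (1/(1+β)) with hη
    have hηpos : ∀ j, 0 < η j := fun j =>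
      Real.rpow_pos_of_pos (add_pos_of_nonneg_of_pos (hn0 j) hδpos) _
    have hbdd : BddBelow { c : ℝ | ∃ η : Fin d → ℝ, (∀ j, 0 < η j) ∧
          c = (1/2) * (∑ j, n j / η j) + (1/(2*β)) * ∑ j, (η j) ^ β } := ⟨_, hlb⟩
    refine le_trans (csInf_le hbdd ⟨η, hηpos, rfl⟩) ?_
    rw [hval η]
    have hterm : ∀ j, n j/(2*η j) + (η j)^β/(2*β) ≤ ((1+β)/(2*β)) * (n j + δ)^t := by
      intro j
      have hnd : 0 < n j + δ := add_pos_of_nonneg_of_pos (hn0 j) hδpos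
      have e1 : (η j)^β = (n j + δ)^t := by
        rw [hη, ← Real.rpow_mul hnd.le]
        congr 1
        rw [ht]; field_simp
      have e3 : (n j + δ)/η j = (n j + δ)^t := by
        rw [hη]
        nth_rewrite 1 [← Real.rpow_one (n j + δ)]
        rw [← Real.rpow_sub hnd]
        congr 1
        rw [ht]; field_simp; ring
      have e2 : n j / (2*η j) ≤ (n j + δ)^t / 2 := by
        calc n j/(2*η j) = (n j/η j)/2 := by ring
          _ ≤ ((n j + δ)/η j)/2 := by gcongr; linarith
          _ = (n j + δ)^t/2 := by rw [e3]
      have : (n j + δ)^t/2 + (n j + δ)^t/(2*β) = ((1+β)/(2*β)) * (n j + δ)^t := by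
        field_simp; ring
      rw [e1, ← this]
      linarith [e2]
    calc ∑ j, (n j/(2*η j) + (η j)^β/(2*β))
        ≤ ∑ j, ((1+β)/(2*β)) * (n j + δ)^t := Finset.sum_le_sum fun j _ => hterm j
      _ ≤ ∑ j, ((1+β)/(2*β)) * ((n j)^t + δ^t) := by
          apply Finset.sum_le_sum
          intro j _
          exact mul_le_mul_of_nonneg_left (st15_subadd (hn0 j) hδpos.le htpos.le ht1) hc.le
      _ = (∑ j, ((1+β)/(2*β)) * (n j)^t) + (d:ℝ) * (((1+β)/(2*β)) * δ^t) := by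
          have hexp : ∀ j : Fin d, ((1+β)/(2*β)) * ((n j)^t + δ^t)
              = ((1+β)/(2*β)) * (n j)^t + ((1+β)/(2*β)) * δ^t := fun j => by ring
          rw [Finset.sum_congr rfl fun j _ => hexp j, Finset.sum_add_distrib,
            Finset.sum_const, Finset.card_univ, Fintype.card_fin, nsmul_eq_mul]
      _ ≤ (∑ j, ((1+β)/(2*β)) * (n j)^t) + ε := by
          have : (d:ℝ) * (((1+β)/(2*β)) * δ^t) = ((1+β)/(2*β)) * ((d:ℝ) * δ^t) := by ring
          rw [this]
          linarith [hδε]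

lemma st15_part2 {p d : ℕ} (g : Fin p → Fin d) {β : ℝ} (hβ : 0 < β) (x : Fin p → ℝ) :
    IsLeast { c : ℝ | ∃ (u : Fin p → ℝ) (v : Fin d → ℝ),
        (∀ i, v (g i) * u i = x i) ∧
        c = (1/2) * (∑ i, (u i)^2) + (1/(2*β)) * ∑ j, |v j| ^ (2*β) }
      (∑ j, ((1+β)/(2*β)) * (∑ i, if g i = j then (x i)^2 else 0) ^ (β/(1+β))) := by
  have hβ1 : (0:ℝ) < 1+β := by linarith
  set t : ℝ := β/(1+β) with ht
  have htpos : 0 < t := by positivity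
  set n : Fin d → ℝ := fun j => ∑ i, if g i = j then (x i)^2 else 0 with hn
  have hnsum : ∀ j, (∑ i, if g i = j then (x i)^2 else 0) = n j := fun j => rfl
  have hn0 : ∀ j, 0 ≤ n j := fun j => Finset.sum_nonneg fun i _ => by positivity
  constructor
  · -- membership
    set v : Fin d → ℝ := fun j => (n j) ^ (1/(2*(1+β))) with hv
    set u : Fin p → ℝ := fun i => if n (g i) = 0 then 0 else x i / v (g i) with hu
    have hx0 : ∀ i, n (g i) = 0 → x i = 0 := by
      intro i h
      have hle : (x i)^2 ≤ n (g i) := by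
        have := Finset.single_le_sum
          (f := fun i' => if g i' = g i then (x i')^2 else 0)
          (fun i' _ => by positivity) (Finset.mem_univ i)
        simpa using this
      have h2 : (x i)^2 = 0 := le_antisymm (h ▸ hle) (sq_nonneg _)
      exact pow_eq_zero_iff two_ne_zero |>.mp h2
    have hcons : ∀ i, v (g i) * u i = x i := by
      intro i
      by_cases h : n (g i) = 0
      · simp [hu, h, hx0 i h]
      · have hnpos : 0 < n (g i) := (hn0 _).lt_of_ne (Ne.symm h)
        have hvne : v (g i) ≠ 0 := (Real.rpow_pos_of_pos hnpos _).ne'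
        simp only [hu, if_neg h]
        field_simp
    have hv2 : ∀ j, 0 < n j → (v j)^2 = (n j) ^ ((1:ℝ)/(1+β)) := by
      intro j hj
      rw [hv, ← Real.rpow_natCast ((n j) ^ ((1:ℝ)/(2*(1+β)))) 2, ← Real.rpow_mul (hn0 j)]
      congr 1
      push_cast
      field_simp
    have hvb : ∀ j, |v j| ^ (2*β) = (n j) ^ t := by
      intro j
      rw [hv, abs_of_nonneg (Real.rpow_nonneg (hn0 j) _), ← Real.rpow_mul (hn0 j)]
      congr 1
      rw [ht]; field_simp
    have husum : ∑ i, (u i)^2 = ∑ j, (n j)^t := by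
      rw [st15_fib g (fun i => (u i)^2)]
      refine Finset.sum_congr rfl fun j _ => ?_
      by_cases h : n j = 0
      · have hz : ∀ i, (if g i = j then (u i)^2 else 0) = 0 := by
          intro i
          by_cases hij : g i = j
          · rw [if_pos hij, hu]
            simp only [hij, h, if_pos rfl]
            norm_num
          · rw [if_neg hij]
        rw [Finset.sum_congr rfl fun i _ => hz i, Finset.sum_const, smul_zero, h,
          Real.zero_rpow htpos.ne']
      · have hnj : 0 < n j := (hn0 j).lt_of_ne (Ne.symm h)
        have hvj : 0 < v j := Real.rpow_pos_of_pos hnj _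
        have hterm : ∀ i, (if g i = j then (u i)^2 else 0)
            = (if g i = j then (x i)^2 else 0)/(v j)^2 := by
          intro i
          by_cases hij : g i = j
          · rw [if_pos hij, if_pos hij, hu]
            simp only [hij, if_neg h]
            rw [div_pow]
          · rw [if_neg hij, if_neg hij, zero_div]
        rw [Finset.sum_congr rfl fun i _ => hterm i, ← Finset.sum_div, hnsum j, hv2 j hnj]
        nth_rewrite 1 [← Real.rpow_one (n j)]
        rw [← Real.rpow_sub hnj]
        congr 1
        rw [ht]; field_simp; ring
    refine ⟨u, v, hcons, ?_⟩
    rw [husum]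
    rw [Finset.mul_sum, Finset.mul_sum, ← Finset.sum_add_distrib]
    refine Finset.sum_congr rfl fun j _ => ?_
    rw [hnsum j, hvb j]
    field_simp
    ring
  · -- lower bound
    rintro c ⟨u, v, hcx, rfl⟩
    rw [st15_fib g (fun i => (u i)^2), Finset.mul_sum, Finset.mul_sum,
      ← Finset.sum_add_distrib]
    apply Finset.sum_le_sum
    intro j _
    rw [hnsum j]
    have hs0 : 0 ≤ ∑ i, (if g i = j then (u i)^2 else 0) :=
      Finset.sum_nonneg fun i _ => by positivity
    have hnv : n j = (v j)^2 * ∑ i, (if g i = j then (u i)^2 else 0) := by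
      rw [hn, Finset.mul_sum]
      refine Finset.sum_congr rfl fun i _ => ?_
      by_cases hij : g i = j
      · rw [if_pos hij, if_pos hij, ← hcx i, hij]; ring
      · rw [if_neg hij, if_neg hij, mul_zero]
    by_cases hvj : v j = 0
    · have hnj : n j = 0 := by rw [hnv, hvj]; ring
      rw [hnj, Real.zero_rpow htpos.ne', mul_zero]
      have h1 : 0 ≤ |v j| ^ (2*β) := Real.rpow_nonneg (abs_nonneg _) _
      have h2 : (0:ℝ) ≤ 1/2 := by norm_num
      have h3 : (0:ℝ) ≤ 1/(2*β) := by positivity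
      positivity
    · have hv2 : 0 < (v j)^2 := by positivity
      have h := st15_key hβ (hn0 j) hv2
      have e1 : n j/(2*(v j)^2) = (∑ i, (if g i = j then (u i)^2 else 0))/2 := by
        rw [hnv]
        field_simp
      have e2 : ((v j)^2)^β = |v j|^(2*β) := by
        rw [← sq_abs, ← Real.rpow_natCast |v j| 2, ← Real.rpow_mul (abs_nonneg _)]
        norm_num
      rw [e1, e2] at h
      calc ((1+β)/(2*β)) * (n j)^t ≤ (∑ i, (if g i = j then (u i)^2 else 0))/2
            + |v j|^(2*β)/(2*β) := h
        _ = 1/2 * (∑ i, (if g i = j then (u i)^2 else 0)) + 1/(2*β) * |v j|^(2*β) := by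
            ring


/-- Quadratic variational form for group ℓ_q quasi-norms.
`β > 0`, `q = 2β/(1+β)`; the partition `Γ` is encoded by the surjective map
`g : Fin p → Fin d`, and `‖x_g‖ = √(Σ_{i : g i = j} x_i²)`.  Then
`(1/q)Σ_g ‖x_g‖^q` equals the infimum over `η ∈ (0,∞)^d` of
`½Σ_g ‖x_g‖²/η_g + (1/2β)Σ_g η_g^β`, and is also the attained minimum over
factorizations `x = u⊙v` of `½‖u‖² + (1/2β)Σ_g |v_g|^{2β}`. -/
theorem statement15 {p d : ℕ} (g : Fin p → Fin d) (hg : Function.Surjective g)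
    (β q : ℝ) (hβ : 0 < β) (hq : q = 2*β/(1+β)) (x : Fin p → ℝ) :
    ((1/q) * ∑ j, (Real.sqrt (∑ i, if g i = j then (x i)^2 else 0)) ^ q
      = sInf { c : ℝ | ∃ η : Fin d → ℝ, (∀ j, 0 < η j) ∧
          c = (1/2) * (∑ j, (∑ i, if g i = j then (x i)^2 else 0) / η j)
              + (1/(2*β)) * ∑ j, (η j) ^ β })
    ∧
    IsLeast { c : ℝ | ∃ (u : Fin p → ℝ) (v : Fin d → ℝ),
        (∀ i, v (g i) * u i = x i) ∧
        c = (1/2) * (∑ i, (u i)^2) + (1/(2*β)) * ∑ j, |v j| ^ (2*β) }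
      ((1/q) * ∑ j, (Real.sqrt (∑ i, if g i = j then (x i)^2 else 0)) ^ q) := by
  have hβ1 : (0:ℝ) < 1+β := by linarith
  have hn0 : ∀ j, (0:ℝ) ≤ ∑ i, if g i = j then (x i)^2 else 0 :=
    fun j => Finset.sum_nonneg fun i _ => by positivity
  have h1q : 1/q = (1+β)/(2*β) := by rw [hq, one_div_div]
  have hrw : (1/q) * ∑ j, (Real.sqrt (∑ i, if g i = j then (x i)^2 else 0)) ^ q
      = ∑ j, ((1+β)/(2*β)) * (∑ i, if g i = j then (x i)^2 else 0) ^ (β/(1+β)) := by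
    rw [h1q, Finset.mul_sum]
    refine Finset.sum_congr rfl fun j _ => ?_
    congr 1
    rw [Real.sqrt_eq_rpow, ← Real.rpow_mul (hn0 j)]
    congr 1
    rw [hq]; ring
  rw [hrw]
  exact ⟨st15_part1 hβ _ hn0, st15_part2 g hβ x⟩
end

section
/- Three-factor Hadamard parameterization of group ℓ_q: let q ∈ (0,1) and β > 0 satisfy β = q/(2 − 2q) (equivalently q = 2β/(1+2β)). Then for every x ∈ ℝ^p, (1/q)·Σ_{g∈Γ} ‖x_g‖^q = min over u ∈ ℝ^p and v, w ∈ ℝ^{|Γ|} with x = u⊙(v·w) of [ ½‖u‖₂² + ½‖v‖₂² + (1/(2β)) Σ_{g∈Γ} |w_g|^{2β} ], where v·w is the coordinatewise product in ℝ^{|Γ|}. -/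
/-- Three-factor Hadamard parameterization of group ℓ_q.
`q ∈ (0,1)`, `β = q/(2−2q)`; the partition is encoded by the surjective map
`g : Fin p → Fin d`.  Then `(1/q)Σ_g ‖x_g‖^q` is the attained minimum of
`½‖u‖² + ½‖v‖² + (1/2β)Σ_g |w_g|^{2β}` over factorizations `x = u⊙(v·w)`,
i.e. `x_i = v_{g i}·w_{g i}·u_i`. -/
theorem statement18 {p d : ℕ} (g : Fin p → Fin d) (hg : Function.Surjective g)
    (q β : ℝ) (hq0 : 0 < q) (hq1 : q < 1) (hβ : β = q / (2 - 2*q))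
    (x : Fin p → ℝ) :
    IsLeast { c : ℝ | ∃ (u : Fin p → ℝ) (v w : Fin d → ℝ),
        (∀ i, v (g i) * w (g i) * u i = x i) ∧
        c = (1/2) * (∑ i, (u i)^2) + (1/2) * (∑ j, (v j)^2)
            + (1/(2*β)) * ∑ j, |w j| ^ (2*β) }
      ((1/q) * ∑ j, (Real.sqrt (∑ i, if g i = j then (x i)^2 else 0)) ^ q) := by
  have h1q : (0:ℝ) < 1 - q := by linarith
  have hβpos : 0 < β := by
    rw [hβ]; apply div_pos hq0; linarith
  have ha2 : (2:ℝ) - 2*q ≠ 0 := by linarith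
  have hb2 : (1:ℝ) - q ≠ 0 := ne_of_gt h1q
  have h2β : 2*β = q/(1-q) := by
    rw [hβ]; field_simp
  have hexp : (1-q)*(2*β) = q := by
    rw [h2β]; field_simp
  set n : Fin d → ℝ := fun j => Real.sqrt (∑ i, if g i = j then (x i)^2 else 0) with hn
  have hn0 : ∀ j, 0 ≤ n j := fun j => Real.sqrt_nonneg _
  have hSnn : ∀ j, 0 ≤ ∑ i, if g i = j then (x i)^2 else 0 := by
    intro j
    apply Finset.sum_nonneg; intro i _; positivity
  have hnsq : ∀ j, (n j)^2 = ∑ i, if g i = j then (x i)^2 else 0 := by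
    intro j; exact Real.sq_sqrt (hSnn j)
  -- fiberwise sum
  have hfib : ∀ (f : Fin p → ℝ), ∑ i, f i = ∑ j, ∑ i, if g i = j then f i else 0 := by
    intro f
    rw [Finset.sum_comm]
    apply Finset.sum_congr rfl; intro i _
    simp
  constructor
  · -- membership: exhibit minimizer
    refine ⟨fun i => x i / (n (g i)) ^ ((1:ℝ) - q/2),
      fun j => (n j) ^ (q/2 : ℝ), fun j => (n j) ^ ((1:ℝ) - q), ?_, ?_⟩
    · intro i
      rcases eq_or_lt_of_le (hn0 (g i)) with h0 | hpos
      · have hx0 : x i = 0 := by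
          have hs : (∑ i', if g i' = g i then (x i')^2 else 0) = 0 := by
            have := hnsq (g i); rw [← h0] at this; simpa using this.symm
          have := (Finset.sum_eq_zero_iff_of_nonneg (by intro i' _; positivity)).1 hs i
            (Finset.mem_univ i)
          simpa using this
        simp only [hx0, zero_div, mul_zero]
      · have hvw : (n (g i)) ^ (q/2 : ℝ) * (n (g i)) ^ ((1:ℝ) - q)
            = (n (g i)) ^ ((1:ℝ) - q/2) := by
          rw [← Real.rpow_add hpos]; ring_nf
        rw [hvw, mul_div_cancel₀]
        exact ne_of_gt (Real.rpow_pos_of_pos hpos _)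
    · -- value equality
      have hv : ∀ j, ((n j) ^ (q/2 : ℝ))^2 = (n j) ^ q := by
        intro j
        rw [← Real.rpow_natCast ((n j) ^ (q/2 : ℝ)) 2, ← Real.rpow_mul (hn0 j)]
        norm_num
      have hw : ∀ j, |(n j) ^ ((1:ℝ) - q)| ^ (2*β) = (n j) ^ q := by
        intro j
        rw [abs_of_nonneg (Real.rpow_nonneg (hn0 j) _), ← Real.rpow_mul (hn0 j), hexp]
      have hu : ∀ j, (∑ i, if g i = j then (x i / (n (g i)) ^ ((1:ℝ) - q/2))^2 else 0)
          = (n j) ^ q := by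
        intro j
        rcases eq_or_lt_of_le (hn0 j) with h0 | hpos
        · have hs : (∑ i, if g i = j then (x i)^2 else 0) = 0 := by
            have := hnsq j; rw [← h0] at this; simpa using this.symm
          have hx0 : ∀ i, g i = j → x i = 0 := by
            intro i hi
            have := (Finset.sum_eq_zero_iff_of_nonneg (by intro i' _; positivity)).1 hs i
              (Finset.mem_univ i)
            rw [if_pos hi] at this
            simpa using this
          have : (∑ i, if g i = j then (x i / (n (g i)) ^ ((1:ℝ) - q/2))^2 else 0) = 0 := by
            apply Finset.sum_eq_zero; intro i _
            split
            · rename_i hi; rw [hx0 i hi]; simp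
            · rfl
          rw [this, ← h0, Real.zero_rpow (ne_of_gt hq0)]
        · have hstep : (∑ i, if g i = j then (x i / (n (g i)) ^ ((1:ℝ) - q/2))^2 else 0)
              = (∑ i, if g i = j then (x i)^2 else 0) * (n j) ^ (q - 2 : ℝ) := by
            rw [Finset.sum_mul]
            apply Finset.sum_congr rfl; intro i _
            split
            · rename_i hi
              rw [hi, div_pow, ← Real.rpow_natCast ((n j) ^ ((1:ℝ) - q/2)) 2,
                ← Real.rpow_mul (hn0 j), div_eq_mul_inv, ← Real.rpow_neg (hn0 j)]
              norm_num
              left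
              congr 1
              ring
            · simp
          rw [hstep, ← hnsq j, ← Real.rpow_natCast (n j) 2, ← Real.rpow_add hpos]
          norm_num
      have hsum_u : (∑ i, (x i / (n (g i)) ^ ((1:ℝ) - q/2))^2) = ∑ j, (n j)^q := by
        rw [hfib]; exact Finset.sum_congr rfl fun j _ => hu j
      have hsum_v : (∑ j, ((n j) ^ (q/2 : ℝ))^2) = ∑ j, (n j)^q :=
        Finset.sum_congr rfl fun j _ => hv j
      have hsum_w : (∑ j, |(n j) ^ ((1:ℝ) - q)| ^ (2*β)) = ∑ j, (n j)^q :=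
        Finset.sum_congr rfl fun j _ => hw j
      rw [hsum_u, hsum_v, hsum_w]
      have hcoef : 1/q = 1/2 + 1/2 + 1/(2*β) := by
        rw [h2β]
        field_simp
        ring
      rw [hcoef]; ring
  · -- lower bound
    rintro c ⟨u, v, w, hfac, rfl⟩
    rw [hfib (fun i => (u i)^2)]
    rw [Finset.mul_sum, Finset.mul_sum, Finset.mul_sum, Finset.mul_sum,
      ← Finset.sum_add_distrib, ← Finset.sum_add_distrib]
    apply Finset.sum_le_sum
    intro j _
    set S : ℝ := ∑ i, if g i = j then (u i)^2 else 0 with hS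
    have hSnn' : 0 ≤ S := Finset.sum_nonneg fun i _ => by positivity
    have hxS : (∑ i, if g i = j then (x i)^2 else 0) = (v j * w j)^2 * S := by
      rw [Finset.mul_sum]
      apply Finset.sum_congr rfl; intro i _
      split
      · rename_i hi
        rw [← hfac i, hi]; ring
      · simp
    have hnj : n j = |v j| * |w j| * Real.sqrt S := by
      rw [hn]
      simp only
      rw [hxS, Real.sqrt_mul (sq_nonneg _), Real.sqrt_sq_eq_abs, abs_mul]
    have amgm := Real.geom_mean_le_arith_mean3_weighted
      (by positivity : (0:ℝ) ≤ q/2) (by positivity : (0:ℝ) ≤ q/2)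
      (by positivity : (0:ℝ) ≤ q/(2*β)) hSnn' (sq_nonneg (v j))
      (Real.rpow_nonneg (abs_nonneg (w j)) (2*β))
      (by rw [h2β]; field_simp; ring)
    have hprod : S ^ (q/2 : ℝ) * ((v j)^2) ^ (q/2 : ℝ) * (|w j| ^ (2*β)) ^ (q/(2*β) : ℝ)
        = (n j) ^ q := by
      rw [hnj]
      have h1 : S ^ (q/2 : ℝ) = (Real.sqrt S) ^ q := by
        rw [Real.sqrt_eq_rpow, ← Real.rpow_mul hSnn']
        congr 1
        ring
      have h2 : ((v j)^2) ^ (q/2 : ℝ) = |v j| ^ q := by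
        rw [← sq_abs, ← Real.rpow_natCast |v j| 2, ← Real.rpow_mul (abs_nonneg _)]
        congr 1
        push_cast
        ring
      have h3 : (|w j| ^ (2*β)) ^ (q/(2*β) : ℝ) = |w j| ^ q := by
        rw [← Real.rpow_mul (abs_nonneg _)]
        congr 1
        field_simp
      rw [h1, h2, h3, ← Real.mul_rpow (by positivity) (abs_nonneg _),
        ← Real.mul_rpow (by positivity) (abs_nonneg _)]
      ring_nf
    rw [hprod] at amgm
    have := mul_le_mul_of_nonneg_left amgm (by positivity : (0:ℝ) ≤ 1/q)
    calc (1/q) * (n j)^q ≤ (1/q) * (q/2 * S + q/2 * (v j)^2 + q/(2*β) * |w j|^(2*β)) := this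
      _ = 1/2 * S + 1/2 * (v j)^2 + 1/(2*β) * |w j|^(2*β) := by
          field_simp
end

section
/- Quadratic variational form of the nuclear norm: for every matrix X ∈ ℝ^{n₁×n₂}, the nuclear norm (sum of singular values) satisfies ‖X‖_* = min over U ∈ ℝ^{n₁×n₁}, V ∈ ℝ^{n₁×n₂} with X = UV of [ ½‖U‖_F² + ½‖V‖_F² ], and also ‖X‖_* = min over symmetric positive semidefinite Σ ∈ ℝ^{n₁×n₁} of [ ½⟨ΣX, X⟩_F + ½ tr(Σ⁻¹) ] (interpreted as the infimum over positive definite Σ, with ⟨·,·⟩_F the Frobenius inner product). -/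
open Matrix

/-- The nuclear norm of a real matrix: the sum of its singular values, i.e. of
the square roots of the eigenvalues of `Xᴴ X`. -/
noncomputable def nuclearNorm {n₁ n₂ : ℕ} (X : Matrix (Fin n₁) (Fin n₂) ℝ) : ℝ :=
  ∑ i, Real.sqrt ((isHermitian_conjTranspose_mul_self X).eigenvalues i)



section Helpers
variable {m n p : Type*} [Fintype m] [Fintype n] [Fintype p]

lemma traceCTmul (A B : Matrix m n ℝ) :
    trace (Aᴴ * B) = ∑ i, ∑ j, A i j * B i j := by
  simp [trace, mul_apply, diag, Finset.sum_comm (γ := n)]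

lemma sq_sum_eq (A : Matrix m n ℝ) :
    ∑ i, ∑ j, (A i j)^2 = trace (Aᴴ * A) := by
  rw [traceCTmul]; simp [sq]

lemma sq_sum_eq2 (A : Matrix m n ℝ) :
    ∑ i, ∑ j, (A i j)^2 = trace (A * Aᴴ) := by
  rw [trace_mul_comm, ← sq_sum_eq]

lemma sq_sum_mul_unitary [DecidableEq n] (A : Matrix m n ℝ) (B : Matrix n n ℝ) (hB : B * Bᴴ = 1) :
    ∑ i, ∑ j, ((A * B) i j)^2 = ∑ i, ∑ j, (A i j)^2 := by
  rw [sq_sum_eq2, sq_sum_eq2, conjTranspose_mul, Matrix.mul_assoc A B, ← Matrix.mul_assoc B, hB, Matrix.one_mul]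

lemma sum_single_support {ι : Type*} [Fintype ι] [DecidableEq m]
    (φ : ι → m) (hφ : Function.Injective φ) (f g : ι → ℝ) :
    ∑ b, (∑ j, if b = φ j then f j else 0) * (∑ k, if b = φ k then g k else 0)
      = ∑ j, f j * g j := by
  classical
  simp_rw [Finset.sum_mul_sum, ite_mul, zero_mul, mul_ite, mul_zero]
  rw [Finset.sum_comm]
  refine Finset.sum_congr rfl fun j _ => ?_
  rw [Finset.sum_comm]
  have h1 : ∀ k : ι, (∑ b, if b = φ j then if b = φ k then f j * g k else 0 else 0)
      = if j = k then f j * g k else 0 := by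
    intro k
    rw [Finset.sum_ite_eq' Finset.univ (φ j)
      (fun b => if b = φ k then f j * g k else 0)]
    simp [hφ.eq_iff]
  simp_rw [h1]
  simp
end Helpers


section Setup
variable {n₁ n₂ : ℕ} (X : Matrix (Fin n₁) (Fin n₂) ℝ)

-- abbreviations
noncomputable def muu : Fin n₂ → ℝ := (isHermitian_conjTranspose_mul_self X).eigenvalues
noncomputable def sigg (i : Fin n₂) : ℝ := Real.sqrt (muu X i)
noncomputable def BB : Matrix (Fin n₂) (Fin n₂) ℝ :=
  ((isHermitian_conjTranspose_mul_self X).eigenvectorUnitary : Matrix (Fin n₂) (Fin n₂) ℝ)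
noncomputable def YY : Matrix (Fin n₁) (Fin n₂) ℝ := X * BB X

lemma muu_nonneg (i : Fin n₂) : 0 ≤ muu X i :=
  (posSemidef_conjTranspose_mul_self X).eigenvalues_nonneg i

lemma BB_unitary1 : star (BB X) * BB X = 1 :=
  (Unitary.mem_iff.mp ((isHermitian_conjTranspose_mul_self X).eigenvectorUnitary).2).1

lemma BB_unitary2 : BB X * star (BB X) = 1 :=
  (Unitary.mem_iff.mp ((isHermitian_conjTranspose_mul_self X).eigenvectorUnitary).2).2

lemma X_eq_YY : X = YY X * (BB X)ᴴ := by
  rw [YY, Matrix.mul_assoc]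
  have := BB_unitary2 X
  rw [star_eq_conjTranspose] at this
  rw [this, Matrix.mul_one]

lemma YY_inner : (YY X)ᴴ * YY X = diagonal (muu X) := by
  have hspec := (isHermitian_conjTranspose_mul_self X).spectral_theorem
  rw [YY, conjTranspose_mul, Matrix.mul_assoc, ← Matrix.mul_assoc ((X)ᴴ)]
  have h1 : (BB X)ᴴ * (Xᴴ * X * BB X) = diagonal (muu X) := by
    rw [hspec]
    have hb1 := BB_unitary1 X
    rw [star_eq_conjTranspose] at hb1
    calc (BB X)ᴴ * (BB X * diagonal (RCLike.ofReal ∘ (isHermitian_conjTranspose_mul_self X).eigenvalues) * star (BB X) * BB X)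
        = ((BB X)ᴴ * BB X) * diagonal (RCLike.ofReal ∘ (isHermitian_conjTranspose_mul_self X).eigenvalues) * (star (BB X) * BB X) := by
          rw [star_eq_conjTranspose]; noncomm_ring
      _ = diagonal (muu X) := by
          rw [hb1, star_eq_conjTranspose, hb1, Matrix.one_mul, Matrix.mul_one]
          rfl
  rw [← h1, Matrix.mul_assoc]

lemma YY_col_inner (i j : Fin n₂) :
    ∑ a, YY X a i * YY X a j = if i = j then muu X i else 0 := by
  have := congrFun (congrFun (YY_inner X) i) j
  simpa [mul_apply, conjTranspose_apply, diagonal] using this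

end Setup

section Setup2
variable {n₁ n₂ : ℕ} (X : Matrix (Fin n₁) (Fin n₂) ℝ)

lemma YY_col_sq (i : Fin n₂) : ∑ a, (YY X a i)^2 = muu X i := by
  simpa [sq] using YY_col_inner X i i

lemma YY_zero {j : Fin n₂} (hj : muu X j = 0) (a : Fin n₁) : YY X a j = 0 := by
  have h := YY_col_sq X j
  rw [hj] at h
  have := (Finset.sum_eq_zero_iff_of_nonneg (fun a _ => sq_nonneg (YY X a j))).mp h a
    (Finset.mem_univ a)
  exact pow_eq_zero_iff (two_ne_zero) |>.mp this

lemma sig_sq {i : Fin n₂} : sigg X i ^ 2 = muu X i := Real.sq_sqrt (muu_nonneg X i)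

lemma sig_pos {i : Fin n₂} (hi : muu X i ≠ 0) : 0 < sigg X i :=
  Real.sqrt_pos.mpr (lt_of_le_of_ne (muu_nonneg X i) (Ne.symm hi))

/-- normalized nonzero columns of `YY` as vectors of Euclidean space -/
noncomputable def vv (j : {j : Fin n₂ // muu X j ≠ 0}) : EuclideanSpace ℝ (Fin n₁) :=
  WithLp.toLp 2 (fun a => YY X a j / sigg X j)

lemma vv_orthonormal : Orthonormal ℝ (vv X) := by
  rw [orthonormal_iff_ite]
  intro i j
  have hinner : (inner ℝ (vv X i) (vv X j) : ℝ) = ∑ a, vv X i a * vv X j a := by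
    simp [PiLp.inner_apply, RCLike.inner_apply, vv, mul_comm]
  rw [hinner]
  simp only [vv, PiLp.toLp_apply, div_mul_div_comm]
  rw [← Finset.sum_div]
  rw [YY_col_inner X i j]
  by_cases h : (i : Fin n₂) = j
  · have hij : i = j := Subtype.ext h
    simp [hij, ← sq, sig_sq, muu_nonneg, hij ▸ i.2]
  · have : i ≠ j := fun hc => h (congrArg Subtype.val hc)
    simp [h, this]

lemma card_le : Fintype.card {j : Fin n₂ // muu X j ≠ 0} ≤ n₁ := by
  have h := (vv_orthonormal X).linearIndependent
  have := h.fintype_card_le_finrank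
  simpa [finrank_euclideanSpace_fin] using this

end Setup2

section LowerBound
variable {n₁ n₂ : ℕ} (X : Matrix (Fin n₁) (Fin n₂) ℝ)

lemma sum_sig_subtype :
    ∑ j : {j : Fin n₂ // muu X j ≠ 0}, sigg X (j : Fin n₂) = ∑ i, sigg X i := by
  classical
  rw [← Finset.sum_subtype (Finset.univ.filter (fun j => muu X j ≠ 0))
    (fun j => by simp) (fun i => sigg X i)]
  apply Finset.sum_filter_of_ne
  intro i _ h hmu
  exact h (by rw [sigg, hmu, Real.sqrt_zero])

lemma bessel (x : EuclideanSpace ℝ (Fin n₁)) :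
    ∑ j : {j : Fin n₂ // muu X j ≠ 0}, (∑ a, vv X j a * x a)^2 ≤ ∑ a, (x a)^2 := by
  have h := (vv_orthonormal X).sum_inner_products_le (s := Finset.univ) x
  have hx : ‖x‖ ^ 2 = ∑ a, (x a)^2 := by
    rw [EuclideanSpace.norm_eq, Real.sq_sqrt (Finset.sum_nonneg fun a _ => sq_nonneg _)]
    simp [sq_abs]
  rw [hx] at h
  refine le_trans (le_of_eq ?_) h
  refine (Finset.sum_congr rfl fun j _ => ?_).symm
  have hinner : (inner ℝ (vv X j) x : ℝ) = ∑ a, vv X j a * x a := by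
    simp [PiLp.inner_apply, RCLike.inner_apply, mul_comm]
  rw [hinner, Real.norm_eq_abs, sq_abs]

lemma nuclear_le (U : Matrix (Fin n₁) (Fin n₁) ℝ) (V : Matrix (Fin n₁) (Fin n₂) ℝ)
    (hXUV : X = U * V) :
    nuclearNorm X ≤ (1/2) * (∑ i, ∑ j, (U i j)^2) + (1/2) * ∑ i, ∑ j, (V i j)^2 := by
  classical
  set W : Matrix (Fin n₁) (Fin n₂) ℝ := V * BB X with hW
  have hYUW : YY X = U * W := by
    show X * BB X = _
    rw [hW, ← Matrix.mul_assoc, ← hXUV]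
  have hWV : ∑ i, ∑ j, (W i j)^2 = ∑ i, ∑ j, (V i j)^2 := by
    apply sq_sum_mul_unitary
    have := BB_unitary2 X
    rwa [star_eq_conjTranspose] at this
  have key : ∀ j : {j : Fin n₂ // muu X j ≠ 0},
      sigg X (j : Fin n₂) ≤ (1/2) * ∑ b, (∑ a, vv X j a * U a b)^2
        + (1/2) * ∑ b, (W b (j : Fin n₂))^2 := by
    intro j
    have hs0 : sigg X (j : Fin n₂) ≠ 0 := ne_of_gt (sig_pos X j.2)
    have hsig : sigg X (j : Fin n₂)
        = ∑ b, (∑ a, vv X j a * U a b) * W b (j : Fin n₂) := by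
      have hmu : muu X (j : Fin n₂) = ∑ a, YY X a j * YY X a j := by
        rw [← YY_col_sq X (j : Fin n₂)]
        exact Finset.sum_congr rfl fun a _ => sq (YY X a j)
      have hY : ∀ a, YY X a j = sigg X (j : Fin n₂) * vv X j a := by
        intro a
        rw [vv, PiLp.toLp_apply]
        field_simp
      have h2 : muu X (j : Fin n₂)
          = sigg X (j : Fin n₂) * ∑ b, (∑ a, vv X j a * U a b) * W b (j : Fin n₂) := by
        calc muu X (j : Fin n₂) = ∑ a, YY X a j * YY X a j := hmu
          _ = ∑ a, (sigg X (j : Fin n₂) * vv X j a) * ((U * W) a j) := by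
              refine Finset.sum_congr rfl fun a _ => ?_
              rw [← hY a, ← hYUW]
          _ = sigg X (j : Fin n₂) * ∑ a, vv X j a * ∑ b, U a b * W b (j : Fin n₂) := by
              rw [Finset.mul_sum]
              refine Finset.sum_congr rfl fun a _ => ?_
              rw [mul_apply]; ring
          _ = sigg X (j : Fin n₂) * ∑ b, (∑ a, vv X j a * U a b) * W b (j : Fin n₂) := by
              congr 1
              simp_rw [Finset.mul_sum]
              rw [Finset.sum_comm]
              refine Finset.sum_congr rfl fun b _ => ?_
              rw [Finset.sum_mul]
              refine Finset.sum_congr rfl fun a _ => ?_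
              ring
      have : sigg X (j : Fin n₂) * sigg X (j : Fin n₂)
          = sigg X (j : Fin n₂) * ∑ b, (∑ a, vv X j a * U a b) * W b (j : Fin n₂) := by
        rw [← h2, ← sq, sig_sq]
      exact mul_left_cancel₀ hs0 this
    rw [hsig, Finset.mul_sum, Finset.mul_sum, ← Finset.sum_add_distrib]
    refine Finset.sum_le_sum fun b _ => ?_
    nlinarith [sq_nonneg ((∑ a, vv X j a * U a b) - W b (j : Fin n₂))]
  have h1 : ∑ j : {j : Fin n₂ // muu X j ≠ 0}, sigg X (j : Fin n₂)
      ≤ (1/2) * (∑ j : {j : Fin n₂ // muu X j ≠ 0}, ∑ b, (∑ a, vv X j a * U a b)^2)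
        + (1/2) * (∑ j : {j : Fin n₂ // muu X j ≠ 0}, ∑ b, (W b (j : Fin n₂))^2) := by
    rw [Finset.mul_sum, Finset.mul_sum, ← Finset.sum_add_distrib]
    exact Finset.sum_le_sum fun j _ => key j
  have h2 : ∑ j : {j : Fin n₂ // muu X j ≠ 0}, ∑ b, (∑ a, vv X j a * U a b)^2
      ≤ ∑ a, ∑ b, (U a b)^2 := by
    calc ∑ j : {j : Fin n₂ // muu X j ≠ 0}, ∑ b, (∑ a, vv X j a * U a b)^2
        = ∑ b, ∑ j : {j : Fin n₂ // muu X j ≠ 0}, (∑ a, vv X j a * U a b)^2 :=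
          Finset.sum_comm
      _ ≤ ∑ b, ∑ a, (U a b)^2 :=
          Finset.sum_le_sum fun b _ => bessel X (WithLp.toLp 2 (fun a => U a b))
      _ = ∑ a, ∑ b, (U a b)^2 := Finset.sum_comm
  have h3 : ∑ j : {j : Fin n₂ // muu X j ≠ 0}, ∑ b, (W b (j : Fin n₂))^2
      ≤ ∑ i, ∑ j, (V i j)^2 := by
    calc ∑ j : {j : Fin n₂ // muu X j ≠ 0}, ∑ b, (W b (j : Fin n₂))^2
        = ∑ j ∈ Finset.univ.filter (fun j => muu X j ≠ 0), ∑ b, (W b j)^2 :=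
          (Finset.sum_subtype (Finset.univ.filter (fun j => muu X j ≠ 0))
            (fun j => by simp) (fun j => ∑ b, (W b j)^2)).symm
      _ ≤ ∑ j : Fin n₂, ∑ b, (W b j)^2 :=
          Finset.sum_le_sum_of_subset_of_nonneg (Finset.filter_subset _ _)
            (fun j _ _ => Finset.sum_nonneg fun b _ => sq_nonneg _)
      _ = ∑ b, ∑ j, (W b j)^2 := Finset.sum_comm
      _ = ∑ i, ∑ j, (V i j)^2 := hWV
  have hnn : nuclearNorm X = ∑ j : {j : Fin n₂ // muu X j ≠ 0}, sigg X (j : Fin n₂) :=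
    (sum_sig_subtype X).symm
  rw [hnn]
  calc ∑ j : {j : Fin n₂ // muu X j ≠ 0}, sigg X (j : Fin n₂)
      ≤ _ := h1
    _ ≤ (1/2) * (∑ i, ∑ j, (U i j)^2) + (1/2) * ∑ i, ∑ j, (V i j)^2 := by linarith

end LowerBound

section Attain
variable {n₁ n₂ : ℕ} (X : Matrix (Fin n₁) (Fin n₂) ℝ)

lemma vv_norm_sq (j : {j : Fin n₂ // muu X j ≠ 0}) : ∑ a, (vv X j a)^2 = 1 := by
  have h : ∑ a, (vv X j a)^2 = (∑ a, (YY X a j)^2) / (sigg X (j : Fin n₂))^2 := by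
    rw [Finset.sum_div]
    exact Finset.sum_congr rfl fun a _ => by rw [vv, PiLp.toLp_apply, div_pow]
  rw [h, YY_col_sq, sig_sq, div_self j.2]

lemma sig_nonneg (i : Fin n₂) : 0 ≤ sigg X i := Real.sqrt_nonneg _

lemma nuclear_attained : ∃ (U : Matrix (Fin n₁) (Fin n₁) ℝ)
    (V : Matrix (Fin n₁) (Fin n₂) ℝ),
    X = U * V ∧ (∑ i, ∑ j, (U i j)^2) = nuclearNorm X
      ∧ (∑ i, ∑ j, (V i j)^2) = nuclearNorm X := by
  classical
  obtain ⟨φ⟩ : Nonempty ({j : Fin n₂ // muu X j ≠ 0} ↪ Fin n₁) :=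
    Function.Embedding.nonempty_of_card_le (by simpa [Fintype.card_fin] using card_le X)
  set τ : {j : Fin n₂ // muu X j ≠ 0} → ℝ := fun j => Real.sqrt (sigg X (j : Fin n₂)) with hτ
  have hτsq : ∀ j, τ j * τ j = sigg X (j : Fin n₂) := fun j =>
    Real.mul_self_sqrt (sig_nonneg X _)
  set U : Matrix (Fin n₁) (Fin n₁) ℝ :=
    fun a b => ∑ j : {j : Fin n₂ // muu X j ≠ 0}, if b = φ j then τ j * vv X j a else 0
    with hU
  set C : Matrix (Fin n₁) (Fin n₂) ℝ :=
    fun b i => ∑ j : {j : Fin n₂ // muu X j ≠ 0},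
      if b = φ j then (if i = (j : Fin n₂) then τ j else 0) else 0 with hC
  have hUC : U * C = YY X := by
    ext a i
    rw [mul_apply]
    have h1 : ∑ b, U a b * C b i
        = ∑ j : {j : Fin n₂ // muu X j ≠ 0},
            (τ j * vv X j a) * (if i = (j : Fin n₂) then τ j else 0) :=
      sum_single_support φ φ.injective _ _
    rw [h1]
    by_cases h : muu X i = 0
    · rw [YY_zero X h a]
      refine Finset.sum_eq_zero fun j _ => ?_
      have : i ≠ (j : Fin n₂) := fun hc => j.2 (hc ▸ h)
      simp [this]
    · rw [Finset.sum_eq_single ⟨i, h⟩]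
      · rw [if_pos rfl]
        have hs0 : sigg X i ≠ 0 := ne_of_gt (sig_pos X h)
        have h2 : τ ⟨i,h⟩ * vv X ⟨i,h⟩ a * τ ⟨i,h⟩
            = sigg X i * vv X ⟨i,h⟩ a := by
          calc τ ⟨i,h⟩ * vv X ⟨i,h⟩ a * τ ⟨i,h⟩
              = (τ ⟨i,h⟩ * τ ⟨i,h⟩) * vv X ⟨i,h⟩ a := by ring
            _ = sigg X i * vv X ⟨i,h⟩ a := by rw [hτsq ⟨i,h⟩]
        rw [h2, vv, PiLp.toLp_apply]
        field_simp
      · intro j _ hj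
        have : i ≠ (j : Fin n₂) := by
          intro hc
          exact hj (Subtype.ext hc.symm)
        simp [this]
      · intro hmem
        exact absurd (Finset.mem_univ _) hmem
  refine ⟨U, C * (BB X)ᴴ, ?_, ?_, ?_⟩
  · rw [← Matrix.mul_assoc, hUC, ← X_eq_YY]
  · -- ∑∑ U² = nuclearNorm
    have h1 : ∀ a, ∑ b, (U a b)^2
        = ∑ j : {j : Fin n₂ // muu X j ≠ 0}, (τ j * vv X j a) * (τ j * vv X j a) := by
      intro a
      have := sum_single_support φ φ.injective
        (fun j => τ j * vv X j a) (fun j => τ j * vv X j a)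
      rw [← this]
      exact Finset.sum_congr rfl fun b _ => sq (U a b)
    calc ∑ a, ∑ b, (U a b)^2
        = ∑ a, ∑ j : {j : Fin n₂ // muu X j ≠ 0}, (τ j * vv X j a) * (τ j * vv X j a) :=
          Finset.sum_congr rfl fun a _ => h1 a
      _ = ∑ j : {j : Fin n₂ // muu X j ≠ 0}, sigg X (j : Fin n₂) := by
          rw [Finset.sum_comm]
          refine Finset.sum_congr rfl fun j _ => ?_
          have : ∀ a, (τ j * vv X j a) * (τ j * vv X j a)
              = sigg X (j : Fin n₂) * (vv X j a)^2 := by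
            intro a
            rw [← hτsq j]; ring
          rw [Finset.sum_congr rfl fun a _ => this a, ← Finset.mul_sum, vv_norm_sq, mul_one]
      _ = nuclearNorm X := sum_sig_subtype X
  · -- ∑∑ V² = nuclearNorm
    have hunit : (BB X)ᴴ * ((BB X)ᴴ)ᴴ = 1 := by
      rw [conjTranspose_conjTranspose]
      have := BB_unitary1 X
      rwa [star_eq_conjTranspose] at this
    rw [sq_sum_mul_unitary C ((BB X)ᴴ) hunit]
    have h1 : ∀ i, ∑ b, (C b i)^2
        = ∑ j : {j : Fin n₂ // muu X j ≠ 0},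
            (if i = (j : Fin n₂) then τ j else 0) * (if i = (j : Fin n₂) then τ j else 0) := by
      intro i
      have := sum_single_support φ φ.injective
        (fun j => if i = (j : Fin n₂) then τ j else 0)
        (fun j => if i = (j : Fin n₂) then τ j else 0)
      rw [← this]
      exact Finset.sum_congr rfl fun b _ => sq (C b i)
    calc ∑ b, ∑ i, (C b i)^2
        = ∑ i, ∑ b, (C b i)^2 := Finset.sum_comm
      _ = ∑ i, ∑ j : {j : Fin n₂ // muu X j ≠ 0},
            (if i = (j : Fin n₂) then τ j else 0) * (if i = (j : Fin n₂) then τ j else 0) :=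
          Finset.sum_congr rfl fun i _ => h1 i
      _ = ∑ j : {j : Fin n₂ // muu X j ≠ 0}, sigg X (j : Fin n₂) := by
          rw [Finset.sum_comm]
          refine Finset.sum_congr rfl fun j _ => ?_
          rw [Finset.sum_eq_single (j : Fin n₂)]
          · simp [hτsq j]
          · intro i _ hij
            simp [hij]
          · intro hmem
            exact absurd (Finset.mem_univ _) hmem
      _ = nuclearNorm X := sum_sig_subtype X

end Attain

section Part2
variable {n₁ n₂ : ℕ} (X : Matrix (Fin n₁) (Fin n₂) ℝ)

lemma trace_nonneg_of_psd {m : Type*} [Fintype m] {A : Matrix m m ℝ} (hA : A.PosSemidef) :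
    0 ≤ trace A := by
  classical
  refine Finset.sum_nonneg fun i _ => ?_
  exact hA.diag_nonneg

lemma psd_smul {N : Matrix (Fin n₁) (Fin n₁) ℝ} (hN : N.PosSemidef) {δ : ℝ} (hδ : 0 ≤ δ) :
    (δ • N).PosSemidef := by
  refine ⟨?_, fun x => ?_⟩
  · have := hN.1
    rw [IsHermitian, conjTranspose_smul]
    rw [this]
    simp
  · have h := hN.2 x
    exact (hN.smul hδ).2 x

lemma posdef_smul_one {δ : ℝ} (hδ : 0 < δ) : ((δ : ℝ) • (1 : Matrix (Fin n₁) (Fin n₁) ℝ)).PosDef := by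
  rw [smul_one_eq_diagonal]
  exact posDef_diagonal_iff.mpr fun i => hδ

open scoped MatrixOrder in
lemma set2_lb {S : Matrix (Fin n₁) (Fin n₁) ℝ} (hS : S.PosDef) :
    nuclearNorm X ≤ (1/2) * (∑ i, ∑ j, (S * X) i j * X i j) + (1/2) * (S⁻¹).trace := by
  classical
  set R := CFC.sqrt S with hRdef
  have hRR : R * R = S := CFC.sqrt_mul_sqrt_self S hS.posSemidef.nonneg
  have hRH : Rᴴ = R := (CFC.sqrt_nonneg S).posSemidef.1
  have hdet : IsUnit R.det := by
    have hs : 0 < S.det := hS.det_pos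
    rw [← hRR, det_mul] at hs
    have : R.det ≠ 0 := fun h => by rw [h, mul_zero] at hs; exact lt_irrefl 0 hs
    exact isUnit_iff_ne_zero.mpr this
  have hfact : X = R⁻¹ * (R * X) := by
    rw [← Matrix.mul_assoc, Matrix.nonsing_inv_mul R hdet, Matrix.one_mul]
  have hmain := nuclear_le X R⁻¹ (R * X) hfact
  have e1 : ∑ i, ∑ j, (R⁻¹ i j)^2 = (S⁻¹).trace := by
    rw [sq_sum_eq, Matrix.conjTranspose_nonsing_inv, hRH, ← Matrix.mul_inv_rev, hRR]
  have e2 : ∑ i, ∑ j, ((R * X) i j)^2 = ∑ i, ∑ j, (S * X) i j * X i j := by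
    rw [sq_sum_eq, conjTranspose_mul]
    have h3 : (∑ i, ∑ j, (S * X) i j * X i j) = trace ((S * X)ᴴ * X) :=
      (traceCTmul _ _).symm
    rw [h3, conjTranspose_mul, hS.1]
    rw [hRH, ← Matrix.mul_assoc, Matrix.mul_assoc (Xᴴ) R R, hRR]
  rw [e1, e2] at hmain
  linarith

lemma set2_ub {δ : ℝ} (hδ : 0 < δ) :
    ∃ S : Matrix (Fin n₁) (Fin n₁) ℝ, S.PosDef ∧
      (1/2) * (∑ i, ∑ j, (S * X) i j * X i j) + (1/2) * (S⁻¹).trace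
        ≤ nuclearNorm X + (n₁ * δ) / 2 := by
  classical
  obtain ⟨U, V, hXUV, hUsum, hVsum⟩ := nuclear_attained X
  set A : Matrix (Fin n₁) (Fin n₁) ℝ := U * Uᴴ + δ • 1 with hAdef
  have hA : A.PosDef :=
    Matrix.PosDef.posSemidef_add (posSemidef_self_mul_conjTranspose U) (posdef_smul_one hδ)
  have hdA : IsUnit A.det := isUnit_iff_ne_zero.mpr (ne_of_gt hA.det_pos)
  set A' : Matrix (Fin n₁) (Fin n₁) ℝ := Uᴴ * U + δ • 1 with hA'def
  have hA' : A'.PosDef :=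
    Matrix.PosDef.posSemidef_add (posSemidef_conjTranspose_mul_self U) (posdef_smul_one hδ)
  have hdA' : IsUnit A'.det := isUnit_iff_ne_zero.mpr (ne_of_gt hA'.det_pos)
  refine ⟨A⁻¹, hA.inv, ?_⟩
  have hSinv : (A⁻¹)⁻¹ = A := Matrix.nonsing_inv_nonsing_inv A hdA
  -- trace term
  have htr : (A⁻¹)⁻¹.trace = nuclearNorm X + n₁ * δ := by
    rw [hSinv, hAdef, trace_add, trace_smul, trace_one]
    have : (U * Uᴴ).trace = nuclearNorm X := by
      rw [← sq_sum_eq2, hUsum]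
    rw [this]
    simp [Fintype.card_fin, mul_comm]
  -- quadratic term
  have hswap : Uᴴ * A⁻¹ = A'⁻¹ * Uᴴ := by
    have hcomm : A' * Uᴴ = Uᴴ * A := by
      rw [hAdef, hA'def]
      rw [Matrix.add_mul, Matrix.mul_add]
      rw [Matrix.mul_assoc, Matrix.smul_mul, Matrix.one_mul, Matrix.mul_smul, Matrix.mul_one]
    calc Uᴴ * A⁻¹ = (A'⁻¹ * A') * (Uᴴ * A⁻¹) := by
          rw [Matrix.nonsing_inv_mul A' hdA', Matrix.one_mul]
      _ = A'⁻¹ * ((A' * Uᴴ) * A⁻¹) := by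
          rw [Matrix.mul_assoc, Matrix.mul_assoc]
      _ = A'⁻¹ * (Uᴴ * (A * A⁻¹)) := by rw [hcomm, Matrix.mul_assoc]
      _ = A'⁻¹ * Uᴴ := by rw [Matrix.mul_nonsing_inv A hdA, Matrix.mul_one]
  have hM : (1 - A'⁻¹ * (Uᴴ * U) : Matrix (Fin n₁) (Fin n₁) ℝ) = δ • A'⁻¹ := by
    have h1 : (δ • 1 : Matrix (Fin n₁) (Fin n₁) ℝ) = A' - Uᴴ * U := by
      rw [hA'def]; abel
    calc (1 - A'⁻¹ * (Uᴴ * U) : Matrix (Fin n₁) (Fin n₁) ℝ)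
        = A'⁻¹ * A' - A'⁻¹ * (Uᴴ * U) := by rw [Matrix.nonsing_inv_mul A' hdA']
      _ = A'⁻¹ * (A' - Uᴴ * U) := by rw [Matrix.mul_sub]
      _ = A'⁻¹ * (δ • 1) := by rw [← h1]
      _ = δ • A'⁻¹ := by rw [Matrix.mul_smul, Matrix.mul_one]
  have hMpsd : (1 - A'⁻¹ * (Uᴴ * U) : Matrix (Fin n₁) (Fin n₁) ℝ).PosSemidef := by
    rw [hM]
    exact psd_smul hA'.inv.posSemidef (le_of_lt hδ)
  have hquad : ∑ i, ∑ j, (A⁻¹ * X) i j * X i j ≤ nuclearNorm X := by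
    have h1 : ∑ i, ∑ j, (A⁻¹ * X) i j * X i j = trace ((A⁻¹ * X)ᴴ * X) :=
      (traceCTmul _ _).symm
    have hAinvH : (A⁻¹)ᴴ = A⁻¹ := hA.inv.1
    have h2 : (A⁻¹ * X)ᴴ * X = Vᴴ * ((Uᴴ * (A⁻¹ * U)) * V) := by
      rw [conjTranspose_mul, hAinvH, hXUV, conjTranspose_mul]
      rw [Matrix.mul_assoc, Matrix.mul_assoc, Matrix.mul_assoc, Matrix.mul_assoc]
    have h3 : Uᴴ * (A⁻¹ * U) = 1 - (1 - A'⁻¹ * (Uᴴ * U)) := by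
      rw [sub_sub_cancel, ← Matrix.mul_assoc, hswap, Matrix.mul_assoc]
    have h4 : trace ((A⁻¹ * X)ᴴ * X)
        = trace (Vᴴ * V) - trace (Vᴴ * ((1 - A'⁻¹ * (Uᴴ * U)) * V)) := by
      rw [h2, h3]
      rw [Matrix.sub_mul, Matrix.mul_sub, trace_sub, Matrix.one_mul]
    have h5 : 0 ≤ trace (Vᴴ * ((1 - A'⁻¹ * (Uᴴ * U)) * V)) := by
      have := hMpsd.conjTranspose_mul_mul_same V
      have h6 := trace_nonneg_of_psd this
      rwa [Matrix.mul_assoc] at h6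
    have h7 : trace (Vᴴ * V) = nuclearNorm X := by rw [← sq_sum_eq, hVsum]
    rw [h1, h4, h7]
    linarith
  rw [htr]
  have hn : (0:ℝ) ≤ n₁ * δ := by positivity
  linarith

end Part2

/-- Quadratic variational form of the nuclear norm.  For every
`X ∈ ℝ^{n₁×n₂}`: `‖X‖_*` is the attained minimum of `½‖U‖_F² + ½‖V‖_F²`
over factorizations `X = UV` with `U ∈ ℝ^{n₁×n₁}`, `V ∈ ℝ^{n₁×n₂}`; and
`‖X‖_*` equals the infimum over positive definite symmetric `Σ ∈ ℝ^{n₁×n₁}`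
of `½⟨ΣX, X⟩_F + ½ tr(Σ⁻¹)`. -/
theorem statement19 {n₁ n₂ : ℕ} (X : Matrix (Fin n₁) (Fin n₂) ℝ) :
    IsLeast { c : ℝ | ∃ (U : Matrix (Fin n₁) (Fin n₁) ℝ) (V : Matrix (Fin n₁) (Fin n₂) ℝ),
        X = U * V ∧
        c = (1/2) * (∑ i, ∑ j, (U i j)^2) + (1/2) * ∑ i, ∑ j, (V i j)^2 }
      (nuclearNorm X)
    ∧
    nuclearNorm X = sInf { c : ℝ | ∃ S : Matrix (Fin n₁) (Fin n₁) ℝ,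
        S.PosDef ∧
        c = (1/2) * (∑ i, ∑ j, (S * X) i j * X i j) + (1/2) * (S⁻¹).trace } := by
  constructor
  · constructor
    · obtain ⟨U, V, h1, h2, h3⟩ := nuclear_attained X
      refine ⟨U, V, h1, ?_⟩
      rw [h2, h3]; ring
    · rintro c ⟨U, V, hUV, rfl⟩
      exact nuclear_le X U V hUV
  · have hlb : ∀ c ∈ { c : ℝ | ∃ S : Matrix (Fin n₁) (Fin n₁) ℝ, S.PosDef ∧
        c = (1/2) * (∑ i, ∑ j, (S * X) i j * X i j) + (1/2) * (S⁻¹).trace },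
        nuclearNorm X ≤ c := by
      rintro c ⟨S, hS, rfl⟩
      exact set2_lb X hS
    have hne : { c : ℝ | ∃ S : Matrix (Fin n₁) (Fin n₁) ℝ, S.PosDef ∧
        c = (1/2) * (∑ i, ∑ j, (S * X) i j * X i j) + (1/2) * (S⁻¹).trace }.Nonempty := by
      refine ⟨_, 1, Matrix.PosDef.one, rfl⟩
    have hbdd : BddBelow { c : ℝ | ∃ S : Matrix (Fin n₁) (Fin n₁) ℝ, S.PosDef ∧
        c = (1/2) * (∑ i, ∑ j, (S * X) i j * X i j) + (1/2) * (S⁻¹).trace } :=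
      ⟨nuclearNorm X, hlb⟩
    apply le_antisymm
    · exact le_csInf hne hlb
    · apply le_of_forall_pos_le_add
      intro ε hε
      have hδ : (0:ℝ) < ε / (n₁ + 1) := by positivity
      obtain ⟨S, hS, hle⟩ := set2_ub X hδ
      have hmem : (1/2) * (∑ i, ∑ j, (S * X) i j * X i j) + (1/2) * (S⁻¹).trace
          ∈ { c : ℝ | ∃ S : Matrix (Fin n₁) (Fin n₁) ℝ, S.PosDef ∧
            c = (1/2) * (∑ i, ∑ j, (S * X) i j * X i j) + (1/2) * (S⁻¹).trace } :=
        ⟨S, hS, rfl⟩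
      have h1 := csInf_le hbdd hmem
      have h2 : (n₁ : ℝ) * (ε / (n₁ + 1)) / 2 ≤ ε := by
        have hn1 : (0:ℝ) < (n₁ : ℝ) + 1 := by positivity
        rw [div_le_iff₀ (by norm_num : (0:ℝ) < 2), div_eq_mul_inv]
        have hfrac : (n₁ : ℝ) * ((n₁ : ℝ) + 1)⁻¹ ≤ 1 := by
          rw [← div_eq_mul_inv, div_le_one hn1]
          linarith
        have hinv : (0:ℝ) ≤ ((n₁ : ℝ) + 1)⁻¹ := by positivity
        nlinarith
      linarith
end
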